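/- arXiv:2003.12038 — 5 statements merged into one kernel-verified Lean document; each statement's English description precedes it below -/
import Mathlib

section
/- Let Λ > 0, λ_n = −Λ/n², and let (c_n)_{n≥1} be nonnegative reals with Σ_{n≥1} c_n = 1. Set μ = Σ_{n≥1} c_n δ_{λ_n}. Then for every q ∈ (0,1), D⁺_μ(q) ≤ 1/3. -/
open MeasureTheory Filter Set Topology ENNReal

noncomputable section

/-- `I_μ(q, ε) = ∫ μ(B(x,ε))^{q-1} dμ(x)`, integrated over `{x : μ(B(x,ε)) > 0}`. -/
def fracIntegral (μ : Measure ℝ) (q ε : ℝ) : ℝ≥0∞ :=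
  ∫⁻ x in {x : ℝ | 0 < μ (Ioo (x - ε) (x + ε))}, μ (Ioo (x - ε) (x + ε)) ^ (q - 1) ∂μ

/-- lower q-generalized fractal dimension. -/
def Dlower (μ : Measure ℝ) (q : ℝ) : ℝ :=
  liminf (fun ε : ℝ => Real.log (fracIntegral μ q ε).toReal / ((q - 1) * Real.log ε)) (𝓝[>] 0)

/-- upper q-generalized fractal dimension. -/
def Dupper (μ : Measure ℝ) (q : ℝ) : ℝ :=
  limsup (fun ε : ℝ => Real.log (fracIntegral μ q ε).toReal / ((q - 1) * Real.log ε)) (𝓝[>] 0)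

/-- index set of the hydrogen orbitals. -/
structure HIndex where
  n : ℕ
  l : ℕ
  m : ℤ
  hn : 1 ≤ n
  hl : l < n
  hm : -(l : ℤ) ≤ m ∧ m ≤ (l : ℤ)

instance : Fact ((1 : ℝ≥0∞) ≤ 2) := ⟨one_le_two⟩

/-- the bound-state space -/
abbrev Hspace := lp (fun _ : HIndex => ℂ) 2

/-- eigenvalues of the hydrogen Hamiltonian -/
def lam (Λ : ℝ) (n : ℕ) : ℝ := -Λ / (n : ℝ) ^ 2

/-- spectral measure of a bound state -/
def specMeasure (Λ : ℝ) (ψ : Hspace) : Measure ℝ :=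
  Measure.sum fun i : HIndex =>
    ENNReal.ofReal (‖ψ i‖ ^ 2) • Measure.dirac (lam Λ i.n)

lemma aux_rpow_antitone {q : ℝ} (hq : q < 1) {x y : ℝ≥0∞} (hxy : x ≤ y) :
    y ^ (q - 1) ≤ x ^ (q - 1) := by
  have h : q - 1 = -(1 - q) := by ring
  rw [h, ENNReal.rpow_neg, ENNReal.rpow_neg]
  exact ENNReal.inv_le_inv' (ENNReal.rpow_le_rpow hxy (by linarith))

lemma aux_rpow_mul_self {q : ℝ} (hq0 : 0 < q) {x : ℝ≥0∞} (hx : x ≠ ∞) :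
    x ^ (q - 1) * x = x ^ q := by
  rcases eq_or_ne x 0 with rfl | h0
  · rw [mul_zero, ENNReal.zero_rpow_of_pos hq0]
  · conv_rhs => rw [show q = (q - 1) + 1 by ring, ENNReal.rpow_add _ _ h0 hx, ENNReal.rpow_one]

lemma aux_rpow_tangent {q : ℝ} (hq0 : 0 < q) (hq1 : q < 1) {s a : ℝ≥0∞} (ha : a ≠ ∞) :
    a ^ q ≤ s ^ q + s ^ (q - 1) * a := by
  rcases le_total a s with h | h
  · exact le_add_right (ENNReal.rpow_le_rpow h hq0.le)
  · calc a ^ q = a ^ (q - 1) * a := (aux_rpow_mul_self hq0 ha).symm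
      _ ≤ s ^ (q - 1) * a := mul_le_mul_left (aux_rpow_antitone hq1 h) a
      _ ≤ s ^ q + s ^ (q - 1) * a := le_add_self

lemma aux_tsum_regroup (w : ℕ → ℝ≥0∞) (k : ℕ → ℤ) (φ : ℤ → ℝ≥0∞) :
    ∑' n, w n * φ (k n) = ∑' j, φ j * ∑' n, if k n = j then w n else 0 := by
  have h1 : ∀ n, w n * φ (k n) = ∑' j, if k n = j then w n * φ j else 0 := by
    intro n
    rw [tsum_eq_single (k n) (fun j hj => if_neg fun h => hj h.symm), if_pos rfl]
  calc ∑' n, w n * φ (k n) = ∑' n, ∑' j, if k n = j then w n * φ j else 0 := tsum_congr h1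
    _ = ∑' j, ∑' n, if k n = j then w n * φ j else 0 := ENNReal.tsum_comm
    _ = ∑' j, φ j * ∑' n, if k n = j then w n else 0 := by
        refine tsum_congr fun j => ?_
        rw [← ENNReal.tsum_mul_left]
        refine tsum_congr fun n => ?_
        split_ifs <;> simp [mul_comm]

set_option maxHeartbeats 1000000 in
theorem hydrogen_pp_upper_dimension_le_third (Λ : ℝ) (hΛ : 0 < Λ)
    (c : ℕ → ℝ) (hc : ∀ n, 0 ≤ c n) (hsum : ∑' n : ℕ, c (n + 1) = 1)
    (μ : Measure ℝ)
    (hμ : μ = Measure.sum fun n : ℕ =>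
      ENNReal.ofReal (c (n + 1)) • Measure.dirac (lam Λ (n + 1))) :
    ∀ q ∈ Ioo (0 : ℝ) 1, Dupper μ q ≤ 1 / 3 := by
  intro q hq
  obtain ⟨hq0, hq1⟩ := hq
  set pt : ℕ → ℝ := fun n => lam Λ (n + 1) with hpt
  set w : ℕ → ℝ≥0∞ := fun n => ENNReal.ofReal (c (n + 1)) with hwdef
  have hptlt : ∀ n : ℕ, pt n < 0 := by
    intro n
    have h2 : (0:ℝ) < ((n:ℝ)+1)^2 := by positivity
    simp only [hpt, lam]
    push_cast
    exact div_neg_of_neg_of_pos (neg_lt_zero.mpr hΛ) h2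
  have hptmono : ∀ m n : ℕ, m ≤ n → pt m ≤ pt n := by
    intro m n hmn
    simp only [hpt, lam]
    push_cast
    rw [div_le_div_iff₀ (by positivity) (by positivity)]
    have hcast : ((m:ℝ)) ≤ (n:ℝ) := by exact_mod_cast hmn
    have h2 : ((m:ℝ)+1)^2 ≤ ((n:ℝ)+1)^2 := by nlinarith
    nlinarith [mul_le_mul_of_nonneg_left h2 hΛ.le]
  have hsummable : Summable fun n => c (n + 1) := by
    by_contra h
    rw [tsum_eq_zero_of_not_summable h] at hsum
    norm_num at hsum
  have hw1 : ∑' n, w n = 1 := by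
    rw [hwdef, ← ENNReal.ofReal_tsum_of_nonneg (fun n => hc _) hsummable, hsum,
      ENNReal.ofReal_one]
  have hμuniv : μ univ = 1 := by
    rw [hμ, Measure.sum_apply _ MeasurableSet.univ]
    simpa using hw1
  have hμIoo_le_one : ∀ x ε : ℝ, μ (Ioo (x - ε) (x + ε)) ≤ 1 :=
    fun x ε => le_trans (measure_mono (subset_univ _)) hμuniv.le
  obtain ⟨n₀, hn₀⟩ : ∃ n, 0 < c (n + 1) := by
    by_contra h
    push_neg at h
    have hz : ∀ n, c (n + 1) = 0 := fun n => le_antisymm (h n) (hc _)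
    rw [tsum_congr hz, tsum_zero] at hsum
    norm_num at hsum
  -- lower bound on the integral
  have hlow : ∀ ε : ℝ, 0 < ε → ENNReal.ofReal (c (n₀ + 1)) ≤ fracIntegral μ q ε := by
    intro ε hε
    set S := {x : ℝ | 0 < μ (Ioo (x - ε) (x + ε))} with hS
    have hle : (w n₀ • Measure.dirac (pt n₀)) ≤ μ := by
      rw [hμ]; exact Measure.le_sum _ n₀
    have hf1 : ∀ x : ℝ, 1 ≤ μ (Ioo (x - ε) (x + ε)) ^ (q - 1) := by
      intro x
      calc (1:ℝ≥0∞) = (1:ℝ≥0∞) ^ (q - 1) := (ENNReal.one_rpow _).symm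
        _ ≤ _ := aux_rpow_antitone hq1 (hμIoo_le_one x ε)
    have hmem : pt n₀ ∈ S := by
      have h1 : 0 < (w n₀ • Measure.dirac (pt n₀)) (Ioo (pt n₀ - ε) (pt n₀ + ε)) := by
        rw [Measure.smul_apply, smul_eq_mul,
          Measure.dirac_apply_of_mem (show pt n₀ ∈ Ioo (pt n₀ - ε) (pt n₀ + ε) from
            ⟨by linarith, by linarith⟩), mul_one]
        simpa [hwdef] using ENNReal.ofReal_pos.mpr hn₀
      exact h1.trans_le (Measure.le_iff'.mp hle _)
    calc ENNReal.ofReal (c (n₀ + 1)) = (w n₀ • Measure.dirac (pt n₀)) S := by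
          rw [Measure.smul_apply, smul_eq_mul, Measure.dirac_apply_of_mem hmem, mul_one]
      _ = ∫⁻ _ in S, 1 ∂(w n₀ • Measure.dirac (pt n₀)) := (setLIntegral_one _).symm
      _ ≤ ∫⁻ x in S, μ (Ioo (x - ε) (x + ε)) ^ (q - 1) ∂μ :=
          lintegral_mono' (Measure.restrict_mono (subset_refl S) hle) (fun x => hf1 x)
      _ = fracIntegral μ q ε := rfl
  -- upper bound on the integral
  have hkey : ∀ ε : ℝ, ε ∈ Ioo (0:ℝ) 1 →
      fracIntegral μ q ε ≤ ENNReal.ofReal ((Λ + 4) * ε ^ ((q - 1) / 3)) := by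
    rintro ε ⟨hε, hε1⟩
    have hεpow_pos : ∀ r : ℝ, 0 < ε ^ r := fun r => Real.rpow_pos_of_pos hε r
    set k : ℕ → ℤ := fun m => ⌊pt m / ε⌋ with hk
    set T : ℤ → ℝ≥0∞ := fun j => ∑' m, if k m = j then w m else 0 with hT
    set N : ℕ := ⌈ε ^ (-(1:ℝ) / 3)⌉₊ with hN
    set F : Finset ℤ := ((Finset.range N).image k) ∪ Finset.Icc (k N) (-1) with hF
    set s : ℝ≥0∞ := ENNReal.ofReal (ε ^ ((1:ℝ) / 3)) with hs
    have hTle : ∀ j, T j ≤ 1 := by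
      intro j
      rw [← hw1, hT]
      exact Summable.tsum_le_tsum (fun m => by split_ifs <;> simp) ENNReal.summable ENNReal.summable
    have hTtop : ∀ j, T j ≠ ∞ := fun j => ((hTle j).trans_lt ENNReal.one_lt_top).ne
    have hTsum : ∑' j, T j = 1 := by
      rw [hT]
      calc ∑' j, ∑' m, (if k m = j then w m else 0)
          = ∑' m, ∑' j, (if k m = j then w m else 0) := ENNReal.tsum_comm
        _ = ∑' m, w m := tsum_congr fun m => by
            rw [tsum_eq_single (k m) (fun j hj => if_neg fun h => hj h.symm), if_pos rfl]
        _ = 1 := hw1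
    have hcover : ∀ m : ℕ, k m ∈ F := by
      intro m
      rcases lt_or_ge m N with h | h
      · exact Finset.mem_union_left _ (Finset.mem_image.mpr ⟨m, Finset.mem_range.mpr h, rfl⟩)
      · refine Finset.mem_union_right _ (Finset.mem_Icc.mpr ⟨?_, ?_⟩)
        · exact Int.floor_mono (by gcongr; exact hptmono N m h)
        · have h1 : pt m / ε < 0 := div_neg_of_neg_of_pos (hptlt m) hε
          have h2 : k m < 0 := Int.floor_lt.mpr (by exact_mod_cast h1)
          omega
    have hTF : ∀ j ∉ F, T j = 0 := by
      intro j hj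
      rw [hT]
      exact ENNReal.tsum_eq_zero.mpr fun m => if_neg fun h => hj (by rw [← h]; exact hcover m)
    have hb : ∀ n : ℕ, T (k n) ≤ μ (Ioo (pt n - ε) (pt n + ε)) := by
      intro n
      rw [hμ, Measure.sum_apply _ measurableSet_Ioo, hT]
      refine Summable.tsum_le_tsum (fun m => ?_) ENNReal.summable ENNReal.summable
      rw [Measure.smul_apply, smul_eq_mul, Measure.dirac_apply' _ measurableSet_Ioo]
      split_ifs with h
      · have hkm : (⌊pt m / ε⌋ : ℤ) = ⌊pt n / ε⌋ := h
        have h1 : ((⌊pt n / ε⌋ : ℤ) : ℝ) ≤ pt m / ε := hkm ▸ Int.floor_le (pt m / ε)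
        have h2 : pt m / ε < (⌊pt n / ε⌋ : ℤ) + 1 := by
          rw [← hkm]; exact Int.lt_floor_add_one (pt m / ε)
        have h3 : ((⌊pt n / ε⌋ : ℤ) : ℝ) ≤ pt n / ε := Int.floor_le (pt n / ε)
        have h4 : pt n / ε < (⌊pt n / ε⌋ : ℤ) + 1 := Int.lt_floor_add_one (pt n / ε)
        have e1 : pt m < ((⌊pt n / ε⌋ : ℤ) + 1) * ε := by
          rw [← div_lt_iff₀ hε]; exact h2
        have e2 : ((⌊pt n / ε⌋ : ℤ) : ℝ) * ε ≤ pt m := by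
          rw [← le_div_iff₀ hε]; exact h1
        have e3 : pt n < ((⌊pt n / ε⌋ : ℤ) + 1) * ε := by
          rw [← div_lt_iff₀ hε]; exact h4
        have e4 : ((⌊pt n / ε⌋ : ℤ) : ℝ) * ε ≤ pt n := by
          rw [← le_div_iff₀ hε]; exact h3
        have hmemIoo : pt m ∈ Ioo (pt n - ε) (pt n + ε) := by
          constructor <;> nlinarith
        rw [Set.indicator_of_mem hmemIoo, Pi.one_apply, mul_one]
      · exact zero_le'
    -- the chain
    have chain1 : fracIntegral μ q ε ≤
        ∑' n, w n * (μ (Ioo (pt n - ε) (pt n + ε))) ^ (q - 1) := by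
      refine le_trans (setLIntegral_le_lintegral _ _) ?_
      conv_lhs => rw [hμ]
      rw [lintegral_sum_measure]
      refine le_of_eq (tsum_congr fun n => ?_)
      rw [lintegral_smul_measure, lintegral_dirac, ← hμ, smul_eq_mul]
    have chain2 : ∑' n, w n * (μ (Ioo (pt n - ε) (pt n + ε))) ^ (q - 1)
        ≤ ∑' n, w n * (T (k n)) ^ (q - 1) :=
      Summable.tsum_le_tsum (fun n => mul_le_mul_right (aux_rpow_antitone hq1 (hb n)) _)
        ENNReal.summable ENNReal.summable
    have chain3 : ∑' n, w n * (T (k n)) ^ (q - 1) = ∑' j, T j ^ q := by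
      rw [aux_tsum_regroup w k (fun j => T j ^ (q - 1))]
      exact tsum_congr fun j => aux_rpow_mul_self hq0 (hTtop j)
    have chain4 : ∑' j, T j ^ q ≤ (F.card : ℝ≥0∞) * s ^ q + s ^ (q - 1) := by
      calc ∑' j, T j ^ q
          ≤ ∑' j, ((↑F : Set ℤ).indicator (fun _ => s ^ q) j + s ^ (q - 1) * T j) := by
            refine Summable.tsum_le_tsum (fun j => ?_) ENNReal.summable ENNReal.summable
            by_cases hj : j ∈ F
            · rw [Set.indicator_of_mem (by exact_mod_cast hj)]
              exact aux_rpow_tangent hq0 hq1 (hTtop j)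
            · rw [hTF j hj, ENNReal.zero_rpow_of_pos hq0]
              exact zero_le'
        _ = (∑' j, (↑F : Set ℤ).indicator (fun _ => s ^ q) j) + s ^ (q - 1) * ∑' j, T j := by
            rw [ENNReal.tsum_add, ENNReal.tsum_mul_left]
        _ = (F.card : ℝ≥0∞) * s ^ q + s ^ (q - 1) := by
            rw [hTsum, mul_one]
            congr 1
            rw [tsum_eq_sum (s := F)
              (fun j hj => Set.indicator_of_notMem (by exact_mod_cast hj) _)]
            rw [Finset.sum_congr rfl fun j hj =>
              Set.indicator_of_mem (by exact_mod_cast hj) (fun _ => s ^ q)]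
            rw [Finset.sum_const, nsmul_eq_mul]
    -- cardinality bound
    have hNge : ε ^ (-(1:ℝ) / 3) ≤ (N : ℝ) := Nat.le_ceil _
    have hNle : (N : ℝ) ≤ ε ^ (-(1:ℝ) / 3) + 1 := (Nat.ceil_lt_add_one (hεpow_pos _).le).le
    have hone : (1:ℝ) ≤ ε ^ (-(1:ℝ) / 3) :=
      Real.one_le_rpow_of_pos_of_le_one_of_nonpos hε hε1.le (by norm_num)
    have hIccCard : ((Finset.Icc (k N) (-1)).card : ℝ) ≤ Λ * ε ^ (-(1:ℝ) / 3) + 1 := by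
      have hkN : (-(k N) : ℝ) ≤ Λ * ε ^ (-(1:ℝ) / 3) + 1 := by
        have hfl : pt N / ε - 1 < ((k N : ℤ) : ℝ) := Int.sub_one_lt_floor _
        have hpe : -(pt N) / ε ≤ Λ * ε ^ (-(1:ℝ) / 3) := by
          have e1 : -(pt N) = Λ / ((N : ℝ) + 1) ^ 2 := by
            simp only [hpt, lam]
            push_cast
            ring
          have e2 : ε ^ (-(1:ℝ) / 3) ≤ (N : ℝ) + 1 := le_trans hNge (by linarith)
          have e3 : ε ^ (-(2:ℝ) / 3) ≤ ((N : ℝ) + 1) ^ 2 := by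
            calc ε ^ (-(2:ℝ) / 3) = ε ^ (-(1:ℝ) / 3) * ε ^ (-(1:ℝ) / 3) := by
                  rw [← Real.rpow_add hε]; norm_num
              _ ≤ ((N : ℝ) + 1) ^ 2 := by nlinarith [hεpow_pos (-(1:ℝ)/3)]
          have e4 : ε ^ ((1:ℝ) / 3) ≤ ((N : ℝ) + 1) ^ 2 * ε := by
            calc ε ^ ((1:ℝ) / 3) = ε ^ (-(2:ℝ) / 3) * ε := by
                  rw [show ε ^ (-(2:ℝ) / 3) * ε = ε ^ (-(2:ℝ) / 3 + 1) from by
                    rw [Real.rpow_add hε, Real.rpow_one]]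
                  norm_num
              _ ≤ ((N : ℝ) + 1) ^ 2 * ε := by nlinarith
          have e5 : Λ * ε ^ (-(1:ℝ) / 3) = Λ / ε ^ ((1:ℝ) / 3) := by
            rw [show (-(1:ℝ) / 3) = -((1:ℝ)/3) by norm_num, Real.rpow_neg hε.le,
              div_eq_mul_inv]
            ring
          rw [e1, div_div, e5]
          exact div_le_div_of_nonneg_left hΛ.le (hεpow_pos _) e4
        have : -(pt N / ε) = -(pt N) / ε := by ring
        linarith
      rw [Int.card_Icc, show (-1 + 1 - k N) = -(k N) from by ring]
      rcases le_or_gt 0 (-(k N)) with hpos | hneg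
      · have h9 : (((-k N).toNat : ℕ) : ℝ) = -((k N : ℤ) : ℝ) := by
          rw [← Int.cast_natCast, Int.toNat_of_nonneg hpos]
          push_cast
          ring
        rw [h9]
        linarith
      · rw [Int.toNat_of_nonpos hneg.le]
        norm_num
        positivity
    have hcard : (F.card : ℝ) ≤ (Λ + 3) * ε ^ (-(1:ℝ) / 3) := by
      have h1 : (F.card : ℝ) ≤ (N : ℝ) + ((Finset.Icc (k N) (-1)).card : ℝ) := by
        have := Finset.card_union_le ((Finset.range N).image k) (Finset.Icc (k N) (-1))
        have h2 := Finset.card_image_le (s := Finset.range N) (f := k)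
        rw [Finset.card_range] at h2
        rw [hF]
        push_cast
        exact_mod_cast le_trans (Nat.cast_le.mpr this) (by push_cast; linarith)
      nlinarith
    -- put it together
    have hsq : s ^ q = ENNReal.ofReal (ε ^ (q / 3)) := by
      rw [hs, ENNReal.ofReal_rpow_of_pos (hεpow_pos _), ← Real.rpow_mul hε.le]
      congr 1
      ring
    have hsq1 : s ^ (q - 1) = ENNReal.ofReal (ε ^ ((q - 1) / 3)) := by
      rw [hs, ENNReal.ofReal_rpow_of_pos (hεpow_pos _), ← Real.rpow_mul hε.le]
      congr 1
      ring
    have hfinal : (F.card : ℝ≥0∞) * s ^ q + s ^ (q - 1)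
        ≤ ENNReal.ofReal ((Λ + 4) * ε ^ ((q - 1) / 3)) := by
      rw [hsq, hsq1, show ((F.card : ℝ≥0∞)) = ENNReal.ofReal ((F.card : ℝ)) from
        (ENNReal.ofReal_natCast _).symm, ← ENNReal.ofReal_mul (by positivity),
        ← ENNReal.ofReal_add (by positivity) (hεpow_pos _).le]
      apply ENNReal.ofReal_le_ofReal
      have e6 : ε ^ (-(1:ℝ) / 3) * ε ^ (q / 3) = ε ^ ((q - 1) / 3) := by
        rw [← Real.rpow_add hε]; ring_nf
      have e7 : (F.card : ℝ) * ε ^ (q / 3) ≤ (Λ + 3) * ε ^ ((q - 1) / 3) := by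
        calc (F.card : ℝ) * ε ^ (q / 3) ≤ (Λ + 3) * ε ^ (-(1:ℝ) / 3) * ε ^ (q / 3) := by
              have := hεpow_pos (q / 3)
              nlinarith
          _ = (Λ + 3) * ε ^ ((q - 1) / 3) := by rw [mul_assoc, e6]
      linarith
    exact le_trans chain1 (le_trans chain2 (le_trans (le_of_eq chain3)
      (le_trans chain4 hfinal)))
  -- the limsup argument
  rw [Dupper]
  set f := fun ε : ℝ => Real.log (fracIntegral μ q ε).toReal / ((q - 1) * Real.log ε) with hfd
  set C : ℝ := Λ + 4 with hCd
  have hC1 : (1:ℝ) < C := by rw [hCd]; linarith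
  have hev : ∀ᶠ ε in 𝓝[>] (0:ℝ),
      Real.log (c (n₀ + 1)) / ((q - 1) * Real.log ε) ≤ f ε ∧
      f ε ≤ 1 / 3 + Real.log C / ((q - 1) * Real.log ε) := by
    filter_upwards [Ioo_mem_nhdsGT_of_mem (show (0:ℝ) ∈ Ico (0:ℝ) 1 by
      constructor <;> norm_num)] with ε hε
    obtain ⟨hε0, hε1⟩ := hε
    have hD : 0 < (q - 1) * Real.log ε :=
      mul_pos_of_neg_of_neg (by linarith) (Real.log_neg hε0 hε1)
    have hIu := hkey ε ⟨hε0, hε1⟩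
    have hIl := hlow ε hε0
    have hεpp : (0:ℝ) < ε ^ ((q - 1) / 3) := Real.rpow_pos_of_pos hε0 _
    have hMpos : 0 < C * ε ^ ((q - 1) / 3) := by positivity
    have hIne : fracIntegral μ q ε ≠ ∞ := (hIu.trans_lt ENNReal.ofReal_lt_top).ne
    have hI0 : fracIntegral μ q ε ≠ 0 :=
      (lt_of_lt_of_le (ENNReal.ofReal_pos.mpr hn₀) hIl).ne'
    have htR_pos : 0 < (fracIntegral μ q ε).toReal := ENNReal.toReal_pos hI0 hIne
    have htR_le : (fracIntegral μ q ε).toReal ≤ C * ε ^ ((q - 1) / 3) := by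
      have h := ENNReal.toReal_mono ENNReal.ofReal_ne_top hIu
      rwa [ENNReal.toReal_ofReal hMpos.le] at h
    have htR_ge : c (n₀ + 1) ≤ (fracIntegral μ q ε).toReal := by
      have h := ENNReal.toReal_mono hIne hIl
      rwa [ENNReal.toReal_ofReal (hc _)] at h
    constructor
    · exact (div_le_div_iff_of_pos_right hD).mpr (Real.log_le_log hn₀ htR_ge)
    · have hlog : Real.log (fracIntegral μ q ε).toReal
          ≤ Real.log C + (q - 1) / 3 * Real.log ε := by
        calc Real.log (fracIntegral μ q ε).toReal ≤ Real.log (C * ε ^ ((q - 1) / 3)) :=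
              Real.log_le_log htR_pos htR_le
          _ = Real.log C + (q - 1) / 3 * Real.log ε := by
              rw [Real.log_mul (by linarith) hεpp.ne', Real.log_rpow hε0]
      calc f ε ≤ (Real.log C + (q - 1) / 3 * Real.log ε) / ((q - 1) * Real.log ε) :=
            (div_le_div_iff_of_pos_right hD).mpr hlog
        _ = 1 / 3 + Real.log C / ((q - 1) * Real.log ε) := by
            have h8 : ((q - 1) / 3 * Real.log ε) / ((q - 1) * Real.log ε) = 1 / 3 := by
              rw [div_eq_iff hD.ne']
              ring
            rw [add_div, h8, add_comm]
  have hDtop : Tendsto (fun ε : ℝ => (q - 1) * Real.log ε) (𝓝[>] 0) atTop :=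
    Tendsto.const_mul_atBot_of_neg (by linarith) Real.tendsto_log_nhdsGT_zero
  have hg : Tendsto (fun ε : ℝ => 1 / 3 + Real.log C / ((q - 1) * Real.log ε)) (𝓝[>] 0)
      (𝓝 (1 / 3)) := by
    have h := (tendsto_const_nhds (x := Real.log C) (f := 𝓝[>] (0:ℝ))).div_atTop hDtop
    have h2 := (tendsto_const_nhds (x := (1/3 : ℝ)) (f := 𝓝[>] (0:ℝ))).add h
    rwa [add_zero] at h2
  have hu : Tendsto (fun ε : ℝ => Real.log (c (n₀ + 1)) / ((q - 1) * Real.log ε)) (𝓝[>] 0)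
      (𝓝 0) := (tendsto_const_nhds).div_atTop hDtop
  have hcob : IsCoboundedUnder (· ≤ ·) (𝓝[>] (0:ℝ)) f :=
    (hu.isBoundedUnder_ge.mono_ge (hev.mono fun ε h => h.1)).isCoboundedUnder_le
  have hls := limsup_le_limsup (hev.mono fun ε h => h.2) hcob hg.isBoundedUnder_le
  rwa [hg.limsup_eq] at hls
end
end

section
/- For every q ∈ (0,1) and every γ ∈ [0,1], the set G⁻_γ(q) := {ψ ∈ 𝓗 : D⁻_{μ_ψ}(q) ≤ γ} is a Gδ subset of 𝓗 (a countable intersection of open sets). -/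
open MeasureTheory Filter Set Topology ENNReal

noncomputable section

namespace HydAux

open scoped Classical

theorem HIndex_inj : Function.Injective (fun i : HIndex => (i.n, i.l, i.m)) := by
  rintro ⟨a,b,c,h1,h2,h3⟩ ⟨a',b',c',h1',h2',h3'⟩ h
  simp only [Prod.mk.injEq] at h
  obtain ⟨rfl, rfl, rfl⟩ := h; rfl

instance : Countable HIndex := Function.Injective.countable HIndex_inj

theorem finite_le (N : ℕ) : {i : HIndex | i.n ≤ N}.Finite := by
  apply Set.Finite.of_finite_image (f := fun i : HIndex => (i.n, i.l, i.m))
  · apply (Set.finite_Icc ((0:ℕ),(0:ℕ),(-(N:ℤ))) (N, N, (N:ℤ))).subset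
    rintro ⟨a,b,c⟩ ⟨i, hi, h⟩
    simp only [Prod.mk.injEq] at h
    obtain ⟨rfl, rfl, rfl⟩ := h
    simp only [Set.mem_setOf_eq] at hi
    have h2 := i.hl; have h3 := i.hm
    constructor <;> refine ⟨by omega, ?_, ?_⟩ <;> simp <;> omega
  · exact HIndex_inj.injOn

theorem lam_neg {Λ : ℝ} (hΛ : 0 < Λ) {n : ℕ} (hn : 1 ≤ n) : lam Λ n < 0 := by
  have h : (0:ℝ) < (n:ℝ)^2 := by positivity
  exact div_neg_of_neg_of_pos (by linarith) h

theorem neg_lam_le {Λ : ℝ} (hΛ : 0 < Λ) {n : ℕ} (hn : 1 ≤ n) : -Λ ≤ lam Λ n := by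
  have h1 : (1:ℝ) ≤ (n:ℝ)^2 := by
    have : (1:ℝ) ≤ (n:ℝ) := by exact_mod_cast hn
    nlinarith
  have : Λ / (n:ℝ)^2 ≤ Λ := div_le_self hΛ.le h1
  have e : lam Λ n = -(Λ / (n:ℝ)^2) := by rw [lam, neg_div]
  rw [e]; linarith

theorem lam_lt_lam {Λ : ℝ} (hΛ : 0 < Λ) {a b : ℕ} (ha : 1 ≤ a) (hab : a < b) :
    lam Λ a < lam Λ b := by
  have h1 : (0:ℝ) < (a:ℝ)^2 := by positivity
  have h2 : ((a:ℝ))^2 < ((b:ℝ))^2 := by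
    have : (a:ℝ) < (b:ℝ) := by exact_mod_cast hab
    have : (0:ℝ) ≤ (a:ℝ) := by positivity
    nlinarith [this]
  have := div_lt_div_of_pos_left hΛ h1 h2
  simp only [lam, neg_div]
  linarith

theorem lam_le_lam_iff {Λ : ℝ} (hΛ : 0 < Λ) {a b : ℕ} (ha : 1 ≤ a) (hb : 1 ≤ b) :
    lam Λ a ≤ lam Λ b ↔ a ≤ b := by
  constructor
  · intro h; by_contra hc; push_neg at hc
    exact absurd h (not_le.mpr (lam_lt_lam hΛ hb hc))
  · intro h; rcases eq_or_lt_of_le h with rfl | h'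
    · exact le_rfl
    · exact (lam_lt_lam hΛ ha h').le

/-- restriction of ψ to a set of indices -/
def restr (E : Set HIndex) (ψ : Hspace) : Hspace :=
  ⟨fun i => if i ∈ E then ψ i else 0, by
    apply memℓp_gen
    have h2 : ((2:ℝ≥0∞)).toReal = (2:ℝ) := by simp
    have hs := (lp.hasSum_norm (p := 2) (by rw [h2]; norm_num) ψ).summable
    rw [h2] at hs
    rw [h2]
    apply Summable.of_nonneg_of_le (fun i => by positivity) _ hs
    intro i
    by_cases h : i ∈ E
    · simp [h]
    · simp only [h, if_false, norm_zero]
      have : (0:ℝ) ^ (2:ℝ) = 0 := by norm_num [Real.rpow_natCast]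
      rw [this]
      positivity⟩

theorem restr_apply (E : Set HIndex) (ψ : Hspace) (i : HIndex) :
    (restr E ψ) i = if i ∈ E then ψ i else 0 := rfl

theorem restr_sub (E : Set HIndex) (ψ φ : Hspace) :
    restr E (ψ - φ) = restr E ψ - restr E φ := by
  ext i
  simp only [restr_apply, lp.coeFn_sub, Pi.sub_apply]
  by_cases h : i ∈ E <;> simp [h]

theorem hasSum_sq (ψ : Hspace) : HasSum (fun i => ‖ψ i‖ ^ 2) (‖ψ‖ ^ 2) := by
  have h2 : ((2:ℝ≥0∞)).toReal = (2:ℝ) := by simp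
  have := lp.hasSum_norm (p := 2) (by rw [h2]; norm_num) ψ
  rw [h2] at this
  convert this using 2 with i
  · rw [← Real.rpow_natCast (‖ψ i‖) 2]; norm_num
  · rw [← Real.rpow_natCast (‖ψ‖) 2]; norm_num

def idx (Λ : ℝ) (E : Set ℝ) : Set HIndex := {i | lam Λ i.n ∈ E}

def massR (Λ : ℝ) (E : Set ℝ) (ψ : Hspace) : ℝ := ‖restr (idx Λ E) ψ‖ ^ 2

theorem massR_nonneg (Λ : ℝ) (E : Set ℝ) (ψ : Hspace) : 0 ≤ massR Λ E ψ := by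
  unfold massR; positivity

theorem hasSum_massR (Λ : ℝ) (E : Set ℝ) (ψ : Hspace) :
    HasSum (fun i => if i ∈ idx Λ E then ‖ψ i‖ ^ 2 else 0) (massR Λ E ψ) := by
  have h := hasSum_sq (restr (idx Λ E) ψ)
  convert h using 2 with i
  by_cases hi : i ∈ idx Λ E <;> simp [restr_apply, hi]
  rfl

theorem massR_le_sq_norm (Λ : ℝ) (E : Set ℝ) (ψ : Hspace) : massR Λ E ψ ≤ ‖ψ‖ ^ 2 := by
  refine hasSum_le (fun i => ?_) (hasSum_massR Λ E ψ) (hasSum_sq ψ)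
  by_cases hi : i ∈ idx Λ E <;> simp [hi] <;> positivity

theorem single_le_massR (Λ : ℝ) (E : Set ℝ) (ψ : Hspace) {i : HIndex} (hi : lam Λ i.n ∈ E) :
    ‖ψ i‖ ^ 2 ≤ massR Λ E ψ := by
  have := le_hasSum (hasSum_massR Λ E ψ) i (fun j _ => by positivity)
  simpa [show i ∈ idx Λ E from hi] using this

theorem massR_mono (Λ : ℝ) {E F : Set ℝ} (h : E ⊆ F) (ψ : Hspace) :
    massR Λ E ψ ≤ massR Λ F ψ := by
  refine hasSum_le (fun i => ?_) (hasSum_massR Λ E ψ) (hasSum_massR Λ F ψ)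
  by_cases hi : i ∈ idx Λ E
  · have : i ∈ idx Λ F := h hi
    simp [hi, this]
  · by_cases hj : i ∈ idx Λ F <;> simp [hi, hj] <;> positivity

theorem meas_eq (Λ : ℝ) {E : Set ℝ} (hE : MeasurableSet E) (ψ : Hspace) :
    specMeasure Λ ψ E = ENNReal.ofReal (massR Λ E ψ) := by
  rw [specMeasure, Measure.sum_apply _ hE]
  have h : ∀ i : HIndex, (ENNReal.ofReal (‖ψ i‖ ^ 2) • Measure.dirac (lam Λ i.n)) E
      = ENNReal.ofReal (if i ∈ idx Λ E then ‖ψ i‖ ^ 2 else 0) := by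
    intro i
    rw [Measure.smul_apply, smul_eq_mul, Measure.dirac_apply' _ hE]
    by_cases h : i ∈ idx Λ E
    · have h' : lam Λ i.n ∈ E := h
      simp [Set.indicator_of_mem h', h]
    · have h' : lam Λ i.n ∉ E := h
      simp [Set.indicator_of_notMem h', h]
  rw [tsum_congr h, ← ENNReal.ofReal_tsum_of_nonneg (fun i => by positivity)
    (hasSum_massR Λ E ψ).summable, (hasSum_massR Λ E ψ).tsum_eq]

theorem norm_restr_le (E : Set HIndex) (ψ : Hspace) : ‖restr E ψ‖ ≤ ‖ψ‖ := by
  have h1 := hasSum_sq (restr E ψ)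
  have h2 := hasSum_sq ψ
  have hle : ‖restr E ψ‖ ^ 2 ≤ ‖ψ‖ ^ 2 := by
    refine hasSum_le (fun i => ?_) h1 h2
    by_cases hi : i ∈ E <;> simp [restr_apply, hi] <;> positivity
  exact (pow_le_pow_iff_left₀ (norm_nonneg _) (norm_nonneg _) two_ne_zero).mp hle

theorem lipschitz_restr (E : Set HIndex) : LipschitzWith 1 (restr E) := by
  refine LipschitzWith.of_dist_le_mul fun ψ φ => ?_
  rw [NNReal.coe_one, one_mul, dist_eq_norm, dist_eq_norm, ← restr_sub]
  exact norm_restr_le E (ψ - φ)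

theorem continuous_massR (Λ : ℝ) (E : Set ℝ) : Continuous (massR Λ E) := by
  unfold massR
  exact (continuous_norm.comp (lipschitz_restr (idx Λ E)).continuous).pow 2

theorem continuous_meas (Λ : ℝ) {E : Set ℝ} (hE : MeasurableSet E) :
    Continuous fun ψ : Hspace => specMeasure Λ ψ E := by
  simp_rw [meas_eq Λ hE]
  exact ENNReal.continuous_ofReal.comp (continuous_massR Λ E)

theorem meas_pos_iff (Λ : ℝ) {E : Set ℝ} (hE : MeasurableSet E) (ψ : Hspace) :
    0 < specMeasure Λ ψ E ↔ ∃ i : HIndex, lam Λ i.n ∈ E ∧ ψ i ≠ 0 := by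
  rw [meas_eq Λ hE, ENNReal.ofReal_pos]
  constructor
  · intro h
    by_contra hc; push_neg at hc
    have hz : ∀ i : HIndex, (if i ∈ idx Λ E then ‖ψ i‖ ^ 2 else 0) = 0 := by
      intro i
      by_cases hi : i ∈ idx Λ E
      · simp [hi, hc i hi]
      · simp [hi]
    have : massR Λ E ψ = 0 := by
      have h0 : HasSum (fun i : HIndex => (if i ∈ idx Λ E then ‖ψ i‖ ^ 2 else 0)) 0 := by
        rw [funext hz]; exact hasSum_zero
      exact (hasSum_massR Λ E ψ).unique h0
    rw [this] at h; exact lt_irrefl _ h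
  · rintro ⟨i, hi, hne⟩
    have := single_le_massR Λ E ψ hi
    have hpos : (0:ℝ) < ‖ψ i‖ ^ 2 := by
      have h0 : 0 < ‖ψ i‖ := norm_pos_iff.mpr hne
      positivity
    linarith
def sball (Λ : ℝ) (n : ℕ) (ε : ℝ) : Set ℝ := Ioo (lam Λ n - ε) (lam Λ n + ε)

theorem sball_meas (Λ : ℝ) (n : ℕ) (ε : ℝ) : MeasurableSet (sball Λ n ε) :=
  measurableSet_Ioo

def Jf (Λ q ε : ℝ) (ψ : Hspace) : ℝ≥0∞ :=
  ∑' i : HIndex, ENNReal.ofReal (‖ψ i‖ ^ 2) * (specMeasure Λ ψ (sball Λ i.n ε)) ^ (q - 1)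

theorem Jf_eq (Λ q : ℝ) {ε : ℝ} (hε : 0 < ε) (ψ : Hspace) :
    fracIntegral (specMeasure Λ ψ) q ε = Jf Λ q ε ψ := by
  set μ := specMeasure Λ ψ with hμ
  set s := {x : ℝ | 0 < μ (Ioo (x - ε) (x + ε))} with hs
  have hres : μ.restrict s = Measure.sum
      (fun i : HIndex => ENNReal.ofReal (‖ψ i‖ ^ 2) • ((Measure.dirac (lam Λ i.n)).restrict s)) := by
    rw [hμ, specMeasure, Measure.restrict_sum_of_countable]
    congr 1; funext i; rw [Measure.restrict_smul]
  rw [fracIntegral, hres, lintegral_sum_measure]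
  rw [Jf]
  congr 1; funext i
  rw [lintegral_smul_measure, setLIntegral_dirac]
  by_cases hψ : ψ i = 0
  · simp [hψ]
  · have hmem : lam Λ i.n ∈ s := by
      rw [hs, Set.mem_setOf_eq]
      refine (meas_pos_iff Λ measurableSet_Ioo ψ).mpr ⟨i, ?_, hψ⟩
      constructor <;> simp <;> linarith
    rw [if_pos hmem]
    rfl

theorem rpow_anti {x y : ℝ≥0∞} {c : ℝ} (hc : c ≤ 0) (hxy : x ≤ y) : y ^ c ≤ x ^ c := by
  have h1 : y ^ c = (y ^ (-c))⁻¹ := by rw [← ENNReal.rpow_neg, neg_neg]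
  have h2 : x ^ c = (x ^ (-c))⁻¹ := by rw [← ENNReal.rpow_neg, neg_neg]
  rw [h1, h2]
  exact ENNReal.inv_le_inv.mpr (ENNReal.rpow_le_rpow hxy (neg_nonneg.mpr hc))

theorem mul_rpow_self {q : ℝ} {x : ℝ≥0∞} (hq : 0 < q) : x * x ^ (q - 1) ≤ x ^ q := by
  rcases eq_or_ne x 0 with rfl | hx0
  · simp
  rcases eq_or_ne x ⊤ with rfl | hxt
  · rcases lt_or_ge (q - 1) 0 with h | h
    · rw [ENNReal.top_rpow_of_neg h, mul_zero]; exact zero_le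
    · rw [ENNReal.top_rpow_of_pos hq]; exact le_top
  · refine le_of_eq ?_
    calc x * x ^ (q - 1) = x ^ (1:ℝ) * x ^ (q - 1) := by rw [ENNReal.rpow_one]
    _ = x ^ (1 + (q - 1)) := (ENNReal.rpow_add _ _ hx0 hxt).symm
    _ = x ^ q := by ring_nf

theorem meas_eq' (Λ : ℝ) {E : Set ℝ} (hE : MeasurableSet E) (ψ : Hspace) :
    specMeasure Λ ψ E
      = ∑' i : HIndex, (if lam Λ i.n ∈ E then ENNReal.ofReal (‖ψ i‖ ^ 2) else 0) := by
  rw [specMeasure, Measure.sum_apply _ hE]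
  congr 1; funext i
  rw [Measure.smul_apply, smul_eq_mul, Measure.dirac_apply' _ hE]
  by_cases h : lam Λ i.n ∈ E
  · simp [Set.indicator_of_mem h, h]
  · simp [Set.indicator_of_notMem h, h]

theorem tsum_fiber_le_meas (Λ : ℝ) {E : Set ℝ} (hE : MeasurableSet E) (ψ : Hspace)
    (P : HIndex → Prop) (hP : ∀ i, P i → lam Λ i.n ∈ E) :
    ∑' i : {i // P i}, ENNReal.ofReal (‖ψ i.1‖ ^ 2) ≤ specMeasure Λ ψ E := by
  rw [meas_eq' Λ hE ψ]
  have h1 : ∑' i : {i // P i}, ENNReal.ofReal (‖ψ i.1‖ ^ 2)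
      = ∑' i : HIndex, Set.indicator {i | P i} (fun j => ENNReal.ofReal (‖ψ j‖ ^ 2)) i :=
    tsum_subtype {i | P i} (fun j => ENNReal.ofReal (‖ψ j‖ ^ 2))
  rw [h1]
  refine ENNReal.tsum_le_tsum fun i => ?_
  by_cases h : P i
  · rw [Set.indicator_of_mem (show i ∈ {j | P j} from h), if_pos (hP i h)]
  · rw [Set.indicator_of_notMem (show i ∉ {j | P j} from h)]; exact zero_le
theorem key_mem {Λ ε : ℝ} (hΛ : 0 < Λ) (hε : 0 < ε) (i : HIndex) :
    -((⌊(-(lam Λ i.n))/ε⌋₊ : ℝ)+1)*ε < lam Λ i.n ∧ lam Λ i.n ≤ -(⌊(-(lam Λ i.n))/ε⌋₊:ℝ)*ε := by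
  have hneg := lam_neg hΛ i.hn
  have hpos : 0 ≤ (-(lam Λ i.n))/ε := div_nonneg (by linarith) hε.le
  have h1 : (⌊(-(lam Λ i.n))/ε⌋₊ : ℝ) ≤ (-(lam Λ i.n))/ε := Nat.floor_le hpos
  have h2 : (-(lam Λ i.n))/ε < (⌊(-(lam Λ i.n))/ε⌋₊ : ℝ) + 1 := Nat.lt_floor_add_one _
  have h1' : (⌊(-(lam Λ i.n))/ε⌋₊ : ℝ) * ε ≤ -(lam Λ i.n) := (le_div_iff₀ hε).mp h1
  have h2' : -(lam Λ i.n) < ((⌊(-(lam Λ i.n))/ε⌋₊ : ℝ) + 1) * ε := (div_lt_iff₀ hε).mp h2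
  constructor <;> linarith

theorem Jf_le_bound {Λ q ε : ℝ} (hΛ : 0 < Λ) (hq0 : 0 < q) (hq1 : q < 1) (hε : 0 < ε)
    (ψ : Hspace) :
    Jf Λ q ε ψ ≤ ((⌊Λ/ε⌋₊ + 1 : ℕ) : ℝ≥0∞) * (specMeasure Λ ψ Set.univ) ^ q := by
  classical
  set μ := specMeasure Λ ψ with hμ
  set key : HIndex → ℕ := fun i => ⌊(-(lam Λ i.n))/ε⌋₊ with hkey
  set Jk : ℕ → Set ℝ := fun k => Ioc (-((k:ℝ)+1)*ε) (-(k:ℝ)*ε) with hJk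
  set c : HIndex → ℝ≥0∞ := fun i => ENNReal.ofReal (‖ψ i‖ ^ 2) with hc
  have hsub : ∀ i : HIndex, Jk (key i) ⊆ sball Λ i.n ε := by
    intro i y hy
    obtain ⟨hy1, hy2⟩ := hy
    obtain ⟨ha, hb⟩ := key_mem hΛ hε i
    constructor <;> simp only [hkey] at hy1 hy2 <;> linarith
  have step1 : Jf Λ q ε ψ ≤ ∑' i : HIndex, c i * (μ (Jk (key i))) ^ (q-1) := by
    refine ENNReal.tsum_le_tsum fun i => ?_
    exact mul_le_mul_right (rpow_anti (by linarith) (measure_mono (hsub i))) _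
  have step2 : ∑' i : HIndex, c i * (μ (Jk (key i))) ^ (q-1)
      = ∑' k : ℕ, (∑' i : key ⁻¹' {k}, c i.1) * (μ (Jk k)) ^ (q-1) := by
    rw [← ENNReal.tsum_fiberwise (fun i => c i * (μ (Jk (key i))) ^ (q-1)) key]
    congr 1; funext k
    rw [← ENNReal.tsum_mul_right]
    refine tsum_congr fun i => ?_
    have hik : key i.1 = k := i.2
    rw [hik]
  have hterm : ∀ k : ℕ, (∑' i : key ⁻¹' {k}, c i.1) * (μ (Jk k)) ^ (q-1)
      ≤ (μ Set.univ) ^ q := by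
    intro k
    have hfib : ∑' i : key ⁻¹' {k}, c i.1 ≤ μ (Jk k) := by
      refine le_trans (le_of_eq ?_) (tsum_fiber_le_meas Λ measurableSet_Ioc ψ
        (fun i => key i = k) ?_)
      · rfl
      · intro i hi
        obtain ⟨ha, hb⟩ := key_mem hΛ hε i
        have hi' : (⌊(-(lam Λ i.n))/ε⌋₊ : ℕ) = k := hi
        rw [hi'] at ha hb
        exact ⟨ha, hb⟩
    calc (∑' i : key ⁻¹' {k}, c i.1) * (μ (Jk k)) ^ (q-1)
        ≤ μ (Jk k) * (μ (Jk k)) ^ (q-1) := mul_le_mul_left hfib _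
      _ ≤ (μ (Jk k)) ^ q := mul_rpow_self hq0
      _ ≤ (μ Set.univ) ^ q := ENNReal.rpow_le_rpow (measure_mono (Set.subset_univ _)) hq0.le
  have hzero : ∀ k : ℕ, ⌊Λ/ε⌋₊ < k →
      (∑' i : key ⁻¹' {k}, c i.1) * (μ (Jk k)) ^ (q-1) = 0 := by
    intro k hk
    have hemp : IsEmpty (key ⁻¹' {k} : Set HIndex) := by
      constructor
      rintro ⟨i, hi⟩
      have h1 : key i ≤ ⌊Λ/ε⌋₊ := by
        apply Nat.floor_le_floor
        have : -(lam Λ i.n) ≤ Λ := by linarith [neg_lam_le hΛ i.hn]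
        gcongr
      have h2 : key i = k := hi
      omega
    rw [tsum_empty, zero_mul]
  calc Jf Λ q ε ψ ≤ ∑' k : ℕ, (∑' i : key ⁻¹' {k}, c i.1) * (μ (Jk k)) ^ (q-1) :=
        step2 ▸ step1
    _ = ∑ k ∈ Finset.range (⌊Λ/ε⌋₊ + 1), (∑' i : key ⁻¹' {k}, c i.1) * (μ (Jk k)) ^ (q-1) := by
        refine tsum_eq_sum fun k hk => ?_
        refine hzero k ?_
        simp only [Finset.mem_range] at hk
        omega
    _ ≤ ((⌊Λ/ε⌋₊ + 1 : ℕ) : ℝ≥0∞) * (μ Set.univ) ^ q := by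
        have hb := Finset.sum_le_card_nsmul (Finset.range (⌊Λ/ε⌋₊ + 1)) _ ((μ Set.univ) ^ q)
          (fun k _ => hterm k)
        simpa [Finset.card_range, nsmul_eq_mul] using hb

theorem Jf_ne_top {Λ q ε : ℝ} (hΛ : 0 < Λ) (hq0 : 0 < q) (hq1 : q < 1) (hε : 0 < ε)
    (ψ : Hspace) : Jf Λ q ε ψ ≠ ⊤ := by
  refine ne_top_of_le_ne_top ?_ (Jf_le_bound hΛ hq0 hq1 hε ψ)
  apply ENNReal.mul_ne_top (ENNReal.natCast_ne_top _)
  rw [meas_eq Λ MeasurableSet.univ ψ]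
  exact ENNReal.rpow_ne_top_of_nonneg hq0.le ENNReal.ofReal_ne_top
def FN (N : ℕ) : Finset HIndex := (finite_le N).toFinset

theorem mem_FN {N : ℕ} {i : HIndex} : i ∈ FN N ↔ i.n ≤ N := by
  simp [FN, (finite_le N).mem_toFinset]

def tailSet (Λ : ℝ) (N : ℕ) : Set ℝ := Ico (lam Λ (N+1)) 0

theorem mem_idx_tailSet {Λ : ℝ} (hΛ : 0 < Λ) {N : ℕ} {i : HIndex} :
    lam Λ i.n ∈ tailSet Λ N ↔ N + 1 ≤ i.n := by
  constructor
  · rintro ⟨h1, _⟩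
    exact (lam_le_lam_iff hΛ (by omega) i.hn).mp h1
  · intro h
    exact ⟨(lam_le_lam_iff hΛ (by omega) i.hn).mpr h, lam_neg hΛ i.hn⟩

/-- the real-valued upper approximant -/
def U (Λ q : ℝ) (N : ℕ) (ε : ℝ) (ψ : Hspace) : ℝ :=
  (∑ i ∈ FN N, ‖ψ i‖ ^ 2 * (massR Λ (sball Λ i.n ε) ψ) ^ (q-1))
    + (massR Λ (tailSet Λ N) ψ) ^ q

theorem continuous_mul_rpow {X : Type*} [TopologicalSpace X] {f g : X → ℝ} (hf : Continuous f)
    (hg : Continuous g) (h0 : ∀ x, 0 ≤ f x) (hle : ∀ x, f x ≤ g x) {c : ℝ} (hc0 : -1 < c)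
    (hc1 : c < 0) : Continuous fun x => f x * g x ^ c := by
  rw [continuous_iff_continuousAt]
  intro x
  rcases (le_trans (h0 x) (hle x)).lt_or_eq with hgx | hgx
  · exact (hf.continuousAt).mul
      (((Real.continuousAt_rpow_const _ _ (Or.inl hgx.ne')).comp hg.continuousAt))
  · have hfx : f x = 0 := le_antisymm (hgx ▸ hle x) (h0 x)
    have hval : f x * g x ^ c = 0 := by rw [hfx, zero_mul]
    rw [ContinuousAt, hval]
    have hbound : ∀ y, f y * g y ^ c ≤ g y ^ (1 + c) := by
      intro y
      rcases (le_trans (h0 y) (hle y)).lt_or_eq with hgy | hgy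
      · calc f y * g y ^ c ≤ g y * g y ^ c :=
              mul_le_mul_of_nonneg_right (hle y) (Real.rpow_nonneg (le_trans (h0 y) (hle y)) c)
        _ = g y ^ (1 + c) := by
              rw [Real.rpow_add hgy, Real.rpow_one]
      · have hfy : f y = 0 := le_antisymm (hgy ▸ hle y) (h0 y)
        rw [hfy, zero_mul, ← hgy, Real.zero_rpow (by linarith)]
    have hcont : Tendsto (fun y => g y ^ (1 + c)) (𝓝 x) (𝓝 0) := by
      have := ((Real.continuousAt_rpow_const (g x) (1 + c) (Or.inr (by linarith))).comp
        hg.continuousAt)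
      rw [ContinuousAt] at this
      simpa [Function.comp_def, ← hgx, Real.zero_rpow (show (1:ℝ) + c ≠ 0 by linarith)] using this
    exact squeeze_zero (fun y => mul_nonneg (h0 y)
      (Real.rpow_nonneg (le_trans (h0 y) (hle y)) c)) hbound hcont

theorem continuous_coord (i : HIndex) : Continuous fun ψ : Hspace => ‖ψ i‖ := by
  refine LipschitzWith.continuous (K := 1) (LipschitzWith.of_dist_le_mul fun ψ φ => ?_)
  rw [NNReal.coe_one, one_mul, dist_eq_norm ψ φ]
  have h := lp.norm_apply_le_norm (p := 2) (by norm_num) (ψ - φ) i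
  rw [lp.coeFn_sub, Pi.sub_apply] at h
  calc dist ‖ψ i‖ ‖φ i‖ = |‖ψ i‖ - ‖φ i‖| := Real.dist_eq _ _
    _ ≤ ‖ψ i - φ i‖ := abs_norm_sub_norm_le _ _
    _ ≤ ‖ψ - φ‖ := h

theorem continuous_U {Λ q : ℝ} (hq0 : 0 < q) (hq1 : q < 1) {ε : ℝ} (hε : 0 < ε) (N : ℕ) :
    Continuous (U Λ q N ε) := by
  apply Continuous.add
  · apply continuous_finset_sum
    intro i _
    refine continuous_mul_rpow ?_ (continuous_massR Λ _) (fun ψ => by positivity)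
      (fun ψ => ?_) (by linarith) (by linarith)
    · exact (continuous_coord i).pow 2
    · refine single_le_massR Λ _ ψ ?_
      constructor <;> simp <;> linarith
  · exact (continuous_massR Λ _).rpow_const (fun ψ => Or.inr hq0.le)
theorem lam_succ_eq (Λ : ℝ) (N : ℕ) : lam Λ (N+1) = -(Λ/((N:ℝ)+1)^2) := by
  rw [lam, neg_div]
  push_cast
  ring_nf

theorem term_eq {Λ q : ℝ} (hq1 : q < 1) {ε : ℝ} (hε : 0 < ε) (ψ : Hspace) (i : HIndex) :
    ENNReal.ofReal (‖ψ i‖ ^ 2) * (specMeasure Λ ψ (sball Λ i.n ε)) ^ (q-1)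
      = ENNReal.ofReal (‖ψ i‖ ^ 2 * (massR Λ (sball Λ i.n ε) ψ) ^ (q-1)) := by
  have hmem : lam Λ i.n ∈ sball Λ i.n ε := by
    simp only [sball, mem_Ioo]; constructor <;> linarith
  rw [meas_eq Λ (sball_meas Λ i.n ε) ψ]
  rcases (massR_nonneg Λ (sball Λ i.n ε) ψ).lt_or_eq with hpos | hzero
  · rw [ENNReal.ofReal_rpow_of_pos hpos, ← ENNReal.ofReal_mul (by positivity)]
  · have hm := single_le_massR Λ (sball Λ i.n ε) ψ hmem
    rw [← hzero] at hm
    have h1 : ‖ψ i‖ ^ 2 = 0 := le_antisymm hm (by positivity)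
    rw [h1, ← hzero, zero_mul]
    simp

theorem head_eq {Λ q : ℝ} (hq1 : q < 1) {ε : ℝ} (hε : 0 < ε) (ψ : Hspace) (N : ℕ) :
    ∑ i ∈ FN N, ENNReal.ofReal (‖ψ i‖ ^ 2) * (specMeasure Λ ψ (sball Λ i.n ε)) ^ (q-1)
      = ENNReal.ofReal (∑ i ∈ FN N, ‖ψ i‖ ^ 2 * (massR Λ (sball Λ i.n ε) ψ) ^ (q-1)) := by
  rw [ENNReal.ofReal_sum_of_nonneg (fun i _ => by
    have := massR_nonneg Λ (sball Λ i.n ε) ψ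
    positivity)]
  exact Finset.sum_congr rfl fun i _ => term_eq hq1 hε ψ i

theorem head_le_Jf {Λ q : ℝ} (hq1 : q < 1) {ε : ℝ} (hε : 0 < ε) (ψ : Hspace) (N : ℕ) :
    ENNReal.ofReal (∑ i ∈ FN N, ‖ψ i‖ ^ 2 * (massR Λ (sball Λ i.n ε) ψ) ^ (q-1))
      ≤ Jf Λ q ε ψ := by
  rw [← head_eq hq1 hε ψ N]
  exact ENNReal.sum_le_tsum (FN N)

theorem Jf_le_U {Λ q ε : ℝ} (hΛ : 0 < Λ) (hq0 : 0 < q) (hq1 : q < 1) (hε : 0 < ε) {N : ℕ}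
    (hN : Λ / ((N:ℝ)+1)^2 ≤ ε) (ψ : Hspace) :
    Jf Λ q ε ψ ≤ ENNReal.ofReal (U Λ q N ε ψ) := by
  classical
  set μ := specMeasure Λ ψ with hμ
  set c : HIndex → ℝ≥0∞ := fun i => ENNReal.ofReal (‖ψ i‖^2) with hc
  set F : HIndex → ℝ≥0∞ := fun i => c i * (μ (sball Λ i.n ε)) ^ (q-1) with hF
  have hNε : -ε ≤ lam Λ (N+1) := by rw [lam_succ_eq]; linarith
  have hsplit : Jf Λ q ε ψ
      = (∑' i, if i.n ≤ N then F i else 0) + (∑' i, if i.n ≤ N then 0 else F i) := by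
    rw [Jf, ← ENNReal.tsum_add]
    refine tsum_congr fun i => ?_
    by_cases h : i.n ≤ N <;> simp [h, hF, hc, hμ]
  have hhead : (∑' i, if i.n ≤ N then F i else 0) = ∑ i ∈ FN N, F i := by
    rw [tsum_eq_sum (s := FN N) (fun i hi => if_neg (fun hc' => hi (mem_FN.mpr hc')))]
    exact Finset.sum_congr rfl fun i hi => if_pos (mem_FN.mp hi)
  have hsub : ∀ i : HIndex, N + 1 ≤ i.n → tailSet Λ N ⊆ sball Λ i.n ε := by
    intro i hi y hy
    obtain ⟨hy1, hy2⟩ := hy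
    have hmono : lam Λ (N+1) ≤ lam Λ i.n := (lam_le_lam_iff hΛ (by omega) i.hn).mpr hi
    have hneg := lam_neg hΛ i.hn
    simp only [sball, mem_Ioo]
    constructor <;> linarith
  have htail : (∑' i, if i.n ≤ N then 0 else F i)
      ≤ ENNReal.ofReal ((massR Λ (tailSet Λ N) ψ) ^ q) := by
    refine le_trans (ENNReal.tsum_le_tsum (f := fun i => if i.n ≤ N then 0 else F i)
      (g := fun i => (if i.n ≤ N then 0 else c i) * (μ (tailSet Λ N)) ^ (q-1)) fun i => ?_) ?_
    · show (if i.n ≤ N then 0 else F i) ≤ (if i.n ≤ N then 0 else c i) * (μ (tailSet Λ N)) ^ (q-1)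
      by_cases h : i.n ≤ N
      · simp [h]
      · rw [if_neg h, if_neg h, hF]
        exact mul_le_mul_right (rpow_anti (by linarith) (measure_mono (hsub i (by omega)))) _
    · rw [ENNReal.tsum_mul_right]
      have hT : (∑' i, if i.n ≤ N then 0 else c i) ≤ μ (tailSet Λ N) := by
        rw [show μ (tailSet Λ N) = _ from meas_eq' Λ measurableSet_Ico ψ]
        refine ENNReal.tsum_le_tsum fun i => ?_
        by_cases h : i.n ≤ N
        · simp [h]
        · rw [if_neg h, if_pos (show lam Λ i.n ∈ Ico (lam Λ (N+1)) 0 from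
            (mem_idx_tailSet hΛ).mpr (by omega))]
      refine le_trans (mul_le_mul_left hT _) (le_trans (mul_rpow_self hq0) ?_)
      rw [show μ (tailSet Λ N) = _ from meas_eq Λ measurableSet_Ico ψ]
      exact le_of_eq (ENNReal.ofReal_rpow_of_nonneg (massR_nonneg _ _ _) hq0.le)
  rw [hsplit, hhead]
  refine le_trans (add_le_add (le_of_eq (head_eq hq1 hε ψ N)) htail) (le_of_eq ?_)
  rw [← ENNReal.ofReal_add (Finset.sum_nonneg fun i _ => by
      have := massR_nonneg Λ (sball Λ i.n ε) ψ
      positivity) (Real.rpow_nonneg (massR_nonneg _ _ _) q)]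
  rfl

theorem tail_tendsto {Λ : ℝ} (hΛ : 0 < Λ) (ψ : Hspace) :
    Tendsto (fun N => massR Λ (tailSet Λ N) ψ) atTop (𝓝 0) := by
  have h := hasSum_sq ψ
  have hmono : Monotone FN := by
    intro a b hab i hi
    rw [mem_FN] at hi ⊢
    omega
  have hexh : ∀ i : HIndex, ∃ N, i ∈ FN N := fun i => ⟨i.n, mem_FN.mpr le_rfl⟩
  have htend : Tendsto (fun N => ∑ i ∈ FN N, ‖ψ i‖ ^ 2) atTop (𝓝 (‖ψ‖ ^ 2)) :=
    h.comp (tendsto_atTop_finset_of_monotone hmono hexh)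
  have heq : ∀ N, massR Λ (tailSet Λ N) ψ = ‖ψ‖ ^ 2 - ∑ i ∈ FN N, ‖ψ i‖ ^ 2 := by
    intro N
    have h1 : HasSum (fun i : HIndex => if i.n ≤ N then ‖ψ i‖ ^ 2 else 0)
        (∑ i ∈ FN N, ‖ψ i‖ ^ 2) := by
      have := hasSum_sum_of_ne_finset_zero (L := SummationFilter.unconditional HIndex) (s := FN N)
        (f := fun i : HIndex => if i.n ≤ N then ‖ψ i‖ ^ 2 else 0)
        (fun i hi => if_neg (fun hc' => hi (mem_FN.mpr hc')))
      convert this using 1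
      exact (Finset.sum_congr rfl fun i hi => (if_pos (mem_FN.mp hi)).symm)
    have h2 := hasSum_massR Λ (tailSet Λ N) ψ
    have h3 : HasSum (fun i : HIndex => ‖ψ i‖ ^ 2)
        ((∑ i ∈ FN N, ‖ψ i‖ ^ 2) + massR Λ (tailSet Λ N) ψ) := by
      have := h1.add h2
      convert this using 1
      funext i
      by_cases hi : i.n ≤ N
      · rw [if_pos hi]
        have : i ∉ idx Λ (tailSet Λ N) := by
          intro hmem
          have := (mem_idx_tailSet hΛ).mp hmem
          omega
        simp [this]
      · rw [if_neg hi]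
        have : i ∈ idx Λ (tailSet Λ N) := (mem_idx_tailSet hΛ).mpr (by omega)
        simp [this]
    have := h.unique h3
    linarith
  simp_rw [heq]
  have hT2 : Tendsto (fun N : ℕ => ‖ψ‖ ^ 2 - ∑ i ∈ FN N, ‖ψ i‖ ^ 2) atTop
      (𝓝 (‖ψ‖ ^ 2 - ‖ψ‖ ^ 2)) := tendsto_const_nhds.sub htend
  simpa using hT2

theorem exists_U_lt {Λ q ε τ : ℝ} (hΛ : 0 < Λ) (hq0 : 0 < q) (hq1 : q < 1) (hε : 0 < ε)
    (ψ : Hspace) (hJ : Jf Λ q ε ψ < ENNReal.ofReal τ) :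
    ∃ N : ℕ, Λ / ((N:ℝ)+1)^2 ≤ ε ∧ U Λ q N ε ψ < τ := by
  set a := (Jf Λ q ε ψ).toReal with ha
  have hfin : Jf Λ q ε ψ ≠ ⊤ := Jf_ne_top hΛ hq0 hq1 hε ψ
  have haτ : a < τ := ENNReal.toReal_lt_of_lt_ofReal hJ
  have hhead : ∀ N : ℕ, ∑ i ∈ FN N, ‖ψ i‖ ^ 2 * (massR Λ (sball Λ i.n ε) ψ) ^ (q-1) ≤ a := by
    intro N
    have h1 := head_le_Jf (Λ := Λ) hq1 hε ψ N
    rw [← ENNReal.ofReal_toReal hfin, ← ha] at h1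
    exact (ENNReal.ofReal_le_ofReal_iff ENNReal.toReal_nonneg).mp h1
  have htail : Tendsto (fun N => (massR Λ (tailSet Λ N) ψ) ^ q) atTop (𝓝 0) := by
    have hc : ContinuousAt (fun x : ℝ => x ^ q) 0 :=
      Real.continuousAt_rpow_const 0 q (Or.inr hq0.le)
    have := hc.tendsto.comp (tail_tendsto hΛ ψ)
    simpa [Function.comp_def, Real.zero_rpow hq0.ne'] using this
  have hev1 : ∀ᶠ N : ℕ in atTop, (massR Λ (tailSet Λ N) ψ) ^ q < τ - a :=
    htail.eventually (eventually_lt_nhds (show (0:ℝ) < τ - a by linarith))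
  have hev2 : ∀ᶠ N : ℕ in atTop, Λ / ((N:ℝ)+1)^2 ≤ ε := by
    obtain ⟨N₀, hN₀⟩ := exists_nat_ge (Λ / ε)
    rw [eventually_atTop]
    refine ⟨N₀, fun N hN => ?_⟩
    have hcast : (N₀:ℝ) ≤ (N:ℝ) := by exact_mod_cast hN
    have hN0 : (0:ℝ) ≤ (N:ℝ) := Nat.cast_nonneg N
    have h1 : Λ / ε ≤ ((N:ℝ)+1)^2 := by nlinarith
    have h2 : Λ ≤ ((N:ℝ)+1)^2 * ε := by
      have := (div_le_iff₀ hε).mp h1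
      linarith
    rw [div_le_iff₀ (by positivity)]
    linarith
  obtain ⟨N, hN2, hN1⟩ := (hev2.and hev1).exists
  refine ⟨N, hN2, ?_⟩
  have hh := hhead N
  have : U Λ q N ε ψ = (∑ i ∈ FN N, ‖ψ i‖ ^ 2 * (massR Λ (sball Λ i.n ε) ψ) ^ (q-1))
      + (massR Λ (tailSet Λ N) ψ) ^ q := rfl
  rw [this]
  linarith
theorem f_ev_bound {Λ q : ℝ} (hΛ : 0 < Λ) (hq0 : 0 < q) (hq1 : q < 1) (ψ : Hspace) :
    ∀ᶠ ε in 𝓝[>] (0:ℝ), Real.log ((fracIntegral (specMeasure Λ ψ) q ε).toReal)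
      / ((q-1) * Real.log ε) ≤ 2/(1-q) := by
  set D := ((specMeasure Λ ψ Set.univ) ^ q).toReal with hD
  have hD0 : 0 ≤ D := ENNReal.toReal_nonneg
  set B := (Λ+1)*(D+1) with hB
  have hB1 : 1 ≤ B := by nlinarith
  set ε₀ := min 1 (Real.exp (-(Real.log B))) with hε₀
  have hε₀pos : 0 < ε₀ := lt_min one_pos (Real.exp_pos _)
  have hmem : Ioo (0:ℝ) ε₀ ∈ 𝓝[>] (0:ℝ) := Ioo_mem_nhdsGT_of_mem ⟨le_rfl, hε₀pos⟩
  filter_upwards [hmem] with ε hε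
  obtain ⟨hε0, hεlt⟩ := hε
  have hε1 : ε < 1 := lt_of_lt_of_le hεlt (min_le_left _ _)
  have hεe : ε < Real.exp (-(Real.log B)) := lt_of_lt_of_le hεlt (min_le_right _ _)
  have hlogB : Real.log B ≤ -Real.log ε := by
    have h := Real.log_lt_log hε0 hεe
    rw [Real.log_exp] at h
    linarith
  have hlogε : Real.log ε < 0 := Real.log_neg hε0 hε1
  have hd : 0 < (q-1) * Real.log ε := mul_pos_of_neg_of_neg (by linarith) hlogε
  have hIbound : (fracIntegral (specMeasure Λ ψ) q ε).toReal ≤ B / ε := by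
    rw [Jf_eq Λ q hε0 ψ]
    have h1 := Jf_le_bound hΛ hq0 hq1 hε0 ψ
    have hfin2 : ((⌊Λ/ε⌋₊ + 1 : ℕ) : ℝ≥0∞) * (specMeasure Λ ψ Set.univ) ^ q ≠ ⊤ := by
      apply ENNReal.mul_ne_top (ENNReal.natCast_ne_top _)
      rw [meas_eq Λ MeasurableSet.univ ψ]
      exact ENNReal.rpow_ne_top_of_nonneg hq0.le ENNReal.ofReal_ne_top
    have h2 := ENNReal.toReal_mono hfin2 h1
    rw [ENNReal.toReal_mul, ENNReal.toReal_natCast] at h2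
    have h4 : ((⌊Λ/ε⌋₊ + 1 : ℕ) : ℝ) ≤ Λ/ε + 1 := by
      push_cast
      have := Nat.floor_le (show (0:ℝ) ≤ Λ/ε by positivity)
      linarith
    have h5 : (Jf Λ q ε ψ).toReal ≤ (Λ/ε + 1) * D := by
      refine le_trans h2 (mul_le_mul_of_nonneg_right h4 hD0)
    have h6 : (Λ/ε + 1) * D ≤ B / ε := by
      rw [le_div_iff₀ hε0]
      have he : (Λ/ε + 1) * D * ε = Λ * D + D * ε := by field_simp
      rw [he, hB]
      nlinarith
    linarith
  have hlogI : Real.log ((fracIntegral (specMeasure Λ ψ) q ε).toReal)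
      ≤ Real.log B - Real.log ε := by
    rcases eq_or_lt_of_le (ENNReal.toReal_nonneg
        (a := fracIntegral (specMeasure Λ ψ) q ε)) with h0 | h0
    · rw [← h0, Real.log_zero]
      have h7 : 0 ≤ Real.log B := Real.log_nonneg hB1
      linarith
    · have h8 := Real.log_le_log h0 hIbound
      rwa [Real.log_div (by linarith) (ne_of_gt hε0)] at h8
  rw [div_le_iff₀ hd]
  have hexp : 2/(1-q) * ((q-1) * Real.log ε) = 2 * (-Real.log ε) := by
    have h9 : (1:ℝ) - q ≠ 0 := by linarith
    field_simp
    ring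
  rw [hexp]
  linarith
end HydAux

theorem hydrogen_Gdelta_lower (Λ : ℝ) (hΛ : 0 < Λ)
    (q : ℝ) (hq : q ∈ Ioo (0 : ℝ) 1) (γ : ℝ) (hγ : γ ∈ Icc (0 : ℝ) 1) :
    IsGδ {ψ : Hspace | Dlower (specMeasure Λ ψ) q ≤ γ} := by
  obtain ⟨hq0, hq1⟩ := hq
  obtain ⟨hγ0, hγ1⟩ := hγ
  have hrep : {ψ : Hspace | Dlower (specMeasure Λ ψ) q ≤ γ}
      = ⋂ (k : ℕ), ⋂ (j : ℕ), ⋃ (ε : ℝ) (_ : ε ∈ Ioo (0:ℝ) (1/((j:ℝ)+1)))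
          (N : ℕ) (_ : Λ / ((N:ℝ)+1)^2 ≤ ε),
          {ψ : Hspace | HydAux.U Λ q N ε ψ
            < Real.exp ((γ + 1/((k:ℝ)+1)) * ((q-1) * Real.log ε))} := by
    ext ψ
    simp only [Set.mem_setOf_eq, Set.mem_iInter, Set.mem_iUnion]
    set f : ℝ → ℝ := fun ε =>
      Real.log ((fracIntegral (specMeasure Λ ψ) q ε).toReal) / ((q-1) * Real.log ε) with hf
    have hbdd : BddAbove {a : ℝ | ∀ᶠ ε in 𝓝[>] (0:ℝ), a ≤ f ε} := by
      refine ⟨2/(1-q), fun a ha => ?_⟩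
      have ha' : ∀ᶠ ε in 𝓝[>] (0:ℝ), a ≤ f ε := ha
      obtain ⟨ε, h1, h2⟩ := (ha'.and (HydAux.f_ev_bound hΛ hq0 hq1 ψ)).exists
      exact le_trans h1 h2
    constructor
    · -- Dlower ≤ γ implies membership in all pieces
      intro hD k j
      set c : ℝ := γ + 1/((k:ℝ)+1) with hcdef
      have hck : (0:ℝ) < 1/((k:ℝ)+1) := by positivity
      have hcpos : 0 < c := hcdef ▸ add_pos_of_nonneg_of_pos hγ0 hck
      have hfreq : ∃ᶠ ε in 𝓝[>] (0:ℝ), f ε < c := by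
        by_contra hev
        rw [Filter.not_frequently] at hev
        have hmem : c ∈ {a : ℝ | ∀ᶠ ε in 𝓝[>] (0:ℝ), a ≤ f ε} :=
          hev.mono fun ε h => not_lt.mp h
        have hle := le_csSup hbdd hmem
        rw [Dlower, Filter.liminf_eq] at hD
        have hcγ : c ≤ γ := le_trans hle hD
        rw [hcdef] at hcγ
        linarith
      have hIoo : Ioo (0:ℝ) (1/((j:ℝ)+1)) ∈ 𝓝[>] (0:ℝ) :=
        Ioo_mem_nhdsGT_of_mem ⟨le_rfl, by positivity⟩
      obtain ⟨ε, hfε, hεmem⟩ :=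
        (hfreq.and_eventually ((Filter.eventually_iff).mpr hIoo)).exists
      have hε0 : 0 < ε := hεmem.1
      have hj1 : 1/((j:ℝ)+1) ≤ 1 := by
        rw [div_le_one (by positivity)]
        have : (0:ℝ) ≤ (j:ℝ) := Nat.cast_nonneg j
        linarith
      have hε1 : ε < 1 := lt_of_lt_of_le hεmem.2 hj1
      have hlogε : Real.log ε < 0 := Real.log_neg hε0 hε1
      have hd : 0 < (q-1) * Real.log ε := mul_pos_of_neg_of_neg (by linarith) hlogε
      have hlog : Real.log ((fracIntegral (specMeasure Λ ψ) q ε).toReal)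
          < c * ((q-1) * Real.log ε) := (div_lt_iff₀ hd).mp hfε
      have htoReal : (fracIntegral (specMeasure Λ ψ) q ε).toReal
          < Real.exp (c * ((q-1) * Real.log ε)) := by
        rcases eq_or_lt_of_le (ENNReal.toReal_nonneg
            (a := fracIntegral (specMeasure Λ ψ) q ε)) with h0 | h0
        · rw [← h0]; exact Real.exp_pos _
        · exact (Real.log_lt_iff_lt_exp h0).mp hlog
      have hfin : HydAux.Jf Λ q ε ψ ≠ ⊤ := HydAux.Jf_ne_top hΛ hq0 hq1 hε0 ψ
      have hJ : HydAux.Jf Λ q ε ψ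
          < ENNReal.ofReal (Real.exp (c * ((q-1) * Real.log ε))) := by
        rw [ENNReal.lt_ofReal_iff_toReal_lt hfin, ← HydAux.Jf_eq Λ q hε0 ψ]
        exact htoReal
      obtain ⟨N, hN, hUlt⟩ := HydAux.exists_U_lt hΛ hq0 hq1 hε0 ψ hJ
      exact ⟨ε, hεmem, N, hN, hUlt⟩
    · -- membership in all pieces implies Dlower ≤ γ
      intro hU
      rw [Dlower, Filter.liminf_eq]
      refine Real.sSup_le ?_ hγ0
      rintro a ha
      by_contra hc
      push_neg at hc
      obtain ⟨k, hk⟩ := exists_nat_one_div_lt (show (0:ℝ) < a - γ by linarith)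
      obtain ⟨u, hu, hsub⟩ := mem_nhdsGT_iff_exists_Ioo_subset.mp ha
      have hu0 : (0:ℝ) < u := hu
      obtain ⟨j, hj⟩ := exists_nat_one_div_lt hu0
      obtain ⟨ε, hεmem, N, hN, hUlt⟩ := hU k j
      have hε0 : 0 < ε := hεmem.1
      have hj1 : 1/((j:ℝ)+1) ≤ 1 := by
        rw [div_le_one (by positivity)]
        have : (0:ℝ) ≤ (j:ℝ) := Nat.cast_nonneg j
        linarith
      have hε1 : ε < 1 := lt_of_lt_of_le hεmem.2 hj1
      have hεu : ε < u := lt_of_lt_of_le hεmem.2 (le_of_lt hj)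
      have hfa : a ≤ f ε := hsub ⟨hε0, hεu⟩
      have hJU := HydAux.Jf_le_U hΛ hq0 hq1 hε0 hN ψ
      have hJlt : HydAux.Jf Λ q ε ψ
          < ENNReal.ofReal (Real.exp ((γ + 1/((k:ℝ)+1)) * ((q-1) * Real.log ε))) :=
        lt_of_le_of_lt hJU ((ENNReal.ofReal_lt_ofReal_iff (Real.exp_pos _)).mpr hUlt)
      rw [← HydAux.Jf_eq Λ q hε0 ψ] at hJlt
      have htoReal := ENNReal.toReal_lt_of_lt_ofReal hJlt
      have hlogε : Real.log ε < 0 := Real.log_neg hε0 hε1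
      have hd : 0 < (q-1) * Real.log ε := mul_pos_of_neg_of_neg (by linarith) hlogε
      have hck : (0:ℝ) < 1/((k:ℝ)+1) := by positivity
      have hlog : Real.log ((fracIntegral (specMeasure Λ ψ) q ε).toReal)
          < (γ + 1/((k:ℝ)+1)) * ((q-1) * Real.log ε) := by
        rcases eq_or_lt_of_le (ENNReal.toReal_nonneg
            (a := fracIntegral (specMeasure Λ ψ) q ε)) with h0 | h0
        · rw [← h0, Real.log_zero]
          exact mul_pos (by linarith) hd
        · calc Real.log ((fracIntegral (specMeasure Λ ψ) q ε).toReal)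
              < Real.log (Real.exp ((γ + 1/((k:ℝ)+1)) * ((q-1) * Real.log ε))) :=
                Real.log_lt_log h0 htoReal
          _ = (γ + 1/((k:ℝ)+1)) * ((q-1) * Real.log ε) := Real.log_exp _
      have hfε : f ε < γ + 1/((k:ℝ)+1) := (div_lt_iff₀ hd).mpr hlog
      have : (1:ℝ)/((k:ℝ)+1) < a - γ := hk
      linarith
  rw [hrep]
  refine IsGδ.iInter fun k => IsGδ.iInter fun j => IsOpen.isGδ ?_
  apply isOpen_iUnion; intro ε
  apply isOpen_iUnion; intro hε
  apply isOpen_iUnion; intro N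
  apply isOpen_iUnion; intro hN
  exact isOpen_lt (HydAux.continuous_U hq0 hq1 hε.1 N) continuous_const
end
end

section
/- For every q ∈ (0,1) and every γ ∈ [0,1], the set G⁺_γ(q) := {ψ ∈ 𝓗 : D⁺_{μ_ψ}(q) ≥ γ} is a Gδ subset of 𝓗 (a countable intersection of open sets). -/
open MeasureTheory Filter Set Topology ENNReal

noncomputable section

instance : Countable HIndex := by
  have h : Function.Injective (fun i : HIndex => (i.n, i.l, i.m)) := by
    rintro ⟨a,b,c,_,_,_⟩ ⟨a',b',c',_,_,_⟩ h
    simp only [Prod.mk.injEq] at h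
    obtain ⟨rfl, rfl, rfl⟩ := h
    rfl
  exact h.countable

/-- real total of squares -/
lemma summable_normsq (ψ : Hspace) : Summable (fun i : HIndex => ‖ψ i‖ ^ 2) := by
  have := (lp.memℓp ψ).summable (p := 2) (by norm_num)
  simpa using this

lemma normsq_eq_tsum (ψ : Hspace) : ‖ψ‖ ^ 2 = ∑' i : HIndex, ‖ψ i‖ ^ 2 := by
  have := lp.norm_rpow_eq_tsum (p := 2) (by norm_num) ψ
  simpa using this

/-- coordinate evaluation is Lipschitz -/
lemma coord_lipschitz (i : HIndex) : LipschitzWith 1 (fun ψ : Hspace => ψ i) := by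
  apply LipschitzWith.of_dist_le_mul
  intro ψ φ
  rw [NNReal.coe_one, one_mul, dist_eq_norm, dist_eq_norm]
  have : (ψ - φ) i = ψ i - φ i := by rw [lp.coeFn_sub]; rfl
  rw [← this]
  exact lp.norm_apply_le_norm two_ne_zero _ _

lemma coord_continuous (i : HIndex) : Continuous (fun ψ : Hspace => ψ i) :=
  (coord_lipschitz i).continuous
/-- the mass function of `specMeasure`, real-valued -/
def mB (Λ : ℝ) (B : Set ℝ) (ψ : Hspace) : ℝ :=
  ∑' i : HIndex, B.indicator (fun _ => ‖ψ i‖ ^ 2) (lam Λ i.n)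

lemma mB_term_nonneg (Λ : ℝ) (B : Set ℝ) (ψ : Hspace) (i : HIndex) :
    0 ≤ B.indicator (fun _ => ‖ψ i‖ ^ 2) (lam Λ i.n) :=
  Set.indicator_nonneg (fun _ _ => sq_nonneg _) _

lemma mB_term_le (Λ : ℝ) (B : Set ℝ) (ψ : Hspace) (i : HIndex) :
    B.indicator (fun _ => ‖ψ i‖ ^ 2) (lam Λ i.n) ≤ ‖ψ i‖ ^ 2 :=
  Set.indicator_le_self' (fun _ _ => sq_nonneg _) _

lemma summable_mB (Λ : ℝ) (B : Set ℝ) (ψ : Hspace) :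
    Summable (fun i : HIndex => B.indicator (fun _ => ‖ψ i‖ ^ 2) (lam Λ i.n)) :=
  Summable.of_nonneg_of_le (mB_term_nonneg Λ B ψ) (mB_term_le Λ B ψ) (summable_normsq ψ)

lemma mB_nonneg (Λ : ℝ) (B : Set ℝ) (ψ : Hspace) : 0 ≤ mB Λ B ψ :=
  tsum_nonneg (mB_term_nonneg Λ B ψ)

lemma mB_le_normsq (Λ : ℝ) (B : Set ℝ) (ψ : Hspace) : mB Λ B ψ ≤ ‖ψ‖ ^ 2 := by
  rw [normsq_eq_tsum]
  exact Summable.tsum_le_tsum (mB_term_le Λ B ψ) (summable_mB Λ B ψ) (summable_normsq ψ)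

lemma specMeasure_apply (Λ : ℝ) (ψ : Hspace) {B : Set ℝ} (hB : MeasurableSet B) :
    specMeasure Λ ψ B = ENNReal.ofReal (mB Λ B ψ) := by
  rw [specMeasure, Measure.sum_apply _ hB, mB,
    ENNReal.ofReal_tsum_of_nonneg (mB_term_nonneg Λ B ψ) (summable_mB Λ B ψ)]
  congr 1
  ext i
  rw [Measure.smul_apply, Measure.dirac_apply' _ hB, smul_eq_mul]
  by_cases h : lam Λ i.n ∈ B
  · simp [Set.indicator_of_mem h]
  · simp [Set.indicator_of_notMem h]

lemma specMeasure_ne_top (Λ : ℝ) (ψ : Hspace) {B : Set ℝ} (hB : MeasurableSet B) :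
    specMeasure Λ ψ B ≠ ⊤ := by
  rw [specMeasure_apply Λ ψ hB]; exact ENNReal.ofReal_ne_top

lemma specMeasure_univ (Λ : ℝ) (ψ : Hspace) :
    specMeasure Λ ψ univ = ENNReal.ofReal (‖ψ‖ ^ 2) := by
  rw [specMeasure_apply Λ ψ MeasurableSet.univ]
  congr 1
  rw [mB, normsq_eq_tsum]
  exact tsum_congr fun i => by simp

lemma specMeasure_le_univ (Λ : ℝ) (ψ : Hspace) {B : Set ℝ} :
    specMeasure Λ ψ B ≤ ENNReal.ofReal (‖ψ‖ ^ 2) := by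
  rw [← specMeasure_univ Λ ψ]
  exact measure_mono (subset_univ B)
lemma tsum_compl_le (ψ : Hspace) (F : Finset HIndex) :
    ∑' i : ↥((↑F : Set HIndex)ᶜ), ‖ψ i‖ ^ 2 = ‖ψ‖ ^ 2 - ∑ i ∈ F, ‖ψ i‖ ^ 2 := by
  have h := Summable.sum_add_tsum_compl (s := F) (summable_normsq ψ)
  rw [normsq_eq_tsum]
  linarith [h]

lemma mB_continuous (Λ : ℝ) (B : Set ℝ) : Continuous (mB Λ B) := by
  rw [continuous_iff_continuousAt]
  intro ψ₀
  rw [ContinuousAt, Metric.tendsto_nhds]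
  intro η hη
  obtain ⟨F, hF⟩ : ∃ F : Finset HIndex, ‖ψ₀‖ ^ 2 - ∑ i ∈ F, ‖ψ₀ i‖ ^ 2 < η / 4 := by
    have hs := (summable_normsq ψ₀).hasSum
    rw [HasSum] at hs
    have h4 : ‖ψ₀‖ ^ 2 - η / 4 < ∑' i : HIndex, ‖ψ₀ i‖ ^ 2 := by
      rw [← normsq_eq_tsum]; linarith
    obtain ⟨F, hF⟩ := (hs.eventually (eventually_gt_nhds h4)).exists
    exact ⟨F, by linarith⟩
  set w : Hspace → HIndex → ℝ := fun ψ i => B.indicator (fun _ => ‖ψ i‖ ^ 2) (lam Λ i.n) with hw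
  have hbound : ∀ ψ : Hspace, dist (mB Λ B ψ) (mB Λ B ψ₀)
      ≤ (∑ i ∈ F, |w ψ i - w ψ₀ i|) + (‖ψ‖ ^ 2 - ∑ i ∈ F, ‖ψ i‖ ^ 2)
        + (‖ψ₀‖ ^ 2 - ∑ i ∈ F, ‖ψ₀ i‖ ^ 2) := by
    intro ψ
    have hsplit : ∀ φ : Hspace,
        mB Λ B φ = (∑ i ∈ F, w φ i) + ∑' i : ↥((↑F : Set HIndex)ᶜ), w φ i :=
      fun φ => (Summable.sum_add_tsum_compl (s := F) (summable_mB Λ B φ)).symm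
    have htail_le : ∀ φ : Hspace,
        ∑' i : ↥((↑F : Set HIndex)ᶜ), w φ i ≤ ‖φ‖ ^ 2 - ∑ i ∈ F, ‖φ i‖ ^ 2 := by
      intro φ
      rw [← tsum_compl_le φ F]
      exact Summable.tsum_le_tsum (fun i => mB_term_le Λ B φ i.1)
        ((summable_mB Λ B φ).subtype _) ((summable_normsq φ).subtype _)
    have htail_nonneg : ∀ φ : Hspace, 0 ≤ ∑' i : ↥((↑F : Set HIndex)ᶜ), w φ i :=
      fun φ => tsum_nonneg (fun i => mB_term_nonneg Λ B φ i.1)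
    rw [Real.dist_eq, hsplit ψ, hsplit ψ₀]
    have h1 : |∑ i ∈ F, w ψ i - ∑ i ∈ F, w ψ₀ i| ≤ ∑ i ∈ F, |w ψ i - w ψ₀ i| := by
      rw [← Finset.sum_sub_distrib]
      exact Finset.abs_sum_le_sum_abs _ _
    have h2 : |(∑' i : ↥((↑F : Set HIndex)ᶜ), w ψ i) - ∑' i : ↥((↑F : Set HIndex)ᶜ), w ψ₀ i|
        ≤ (‖ψ‖ ^ 2 - ∑ i ∈ F, ‖ψ i‖ ^ 2) + (‖ψ₀‖ ^ 2 - ∑ i ∈ F, ‖ψ₀ i‖ ^ 2) := by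
      rw [abs_le]
      have ha := htail_le ψ; have hb := htail_le ψ₀
      have hc := htail_nonneg ψ; have hd := htail_nonneg ψ₀
      constructor
      · have h0 : (0:ℝ) ≤ ‖ψ‖ ^ 2 - ∑ i ∈ F, ‖ψ i‖ ^ 2 := le_trans hc ha
        linarith
      · have h0 : (0:ℝ) ≤ ‖ψ₀‖ ^ 2 - ∑ i ∈ F, ‖ψ₀ i‖ ^ 2 := le_trans hd hb
        linarith
    calc |∑ i ∈ F, w ψ i + (∑' i : ↥((↑F : Set HIndex)ᶜ), w ψ i)
        - (∑ i ∈ F, w ψ₀ i + ∑' i : ↥((↑F : Set HIndex)ᶜ), w ψ₀ i)|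
        ≤ |∑ i ∈ F, w ψ i - ∑ i ∈ F, w ψ₀ i|
          + |(∑' i : ↥((↑F : Set HIndex)ᶜ), w ψ i) - ∑' i : ↥((↑F : Set HIndex)ᶜ), w ψ₀ i| := by
          rw [show ∑ i ∈ F, w ψ i + (∑' i : ↥((↑F : Set HIndex)ᶜ), w ψ i)
            - (∑ i ∈ F, w ψ₀ i + ∑' i : ↥((↑F : Set HIndex)ᶜ), w ψ₀ i)
            = (∑ i ∈ F, w ψ i - ∑ i ∈ F, w ψ₀ i)
              + ((∑' i : ↥((↑F : Set HIndex)ᶜ), w ψ i)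
                - ∑' i : ↥((↑F : Set HIndex)ᶜ), w ψ₀ i) by ring]
          exact abs_add_le _ _
      _ ≤ _ := by linarith [h1, h2]
  have hwcont : ∀ i, Continuous (fun ψ => w ψ i) := by
    intro i
    by_cases hmem : lam Λ i.n ∈ B
    · simp only [hw, Set.indicator_of_mem hmem]
      exact ((coord_continuous i).norm.pow 2)
    · simp only [hw, Set.indicator_of_notMem hmem]
      exact continuous_const
  have hcont : Continuous (fun ψ : Hspace =>
      (∑ i ∈ F, |w ψ i - w ψ₀ i|) + (‖ψ‖ ^ 2 - ∑ i ∈ F, ‖ψ i‖ ^ 2)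
        + (‖ψ₀‖ ^ 2 - ∑ i ∈ F, ‖ψ₀ i‖ ^ 2)) := by
    apply Continuous.add
    apply Continuous.add
    · exact continuous_finset_sum _ fun i _ => ((hwcont i).sub continuous_const).abs
    · exact (continuous_norm.pow 2).sub (continuous_finset_sum _ fun i _ =>
        (coord_continuous i).norm.pow 2)
    · exact continuous_const
  have hψ₀ : (∑ i ∈ F, |w ψ₀ i - w ψ₀ i|) + (‖ψ₀‖ ^ 2 - ∑ i ∈ F, ‖ψ₀ i‖ ^ 2)
        + (‖ψ₀‖ ^ 2 - ∑ i ∈ F, ‖ψ₀ i‖ ^ 2) < η := by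
    simp only [sub_self, abs_zero, Finset.sum_const_zero, zero_add]
    linarith
  have hev : ∀ᶠ ψ in 𝓝 ψ₀, (∑ i ∈ F, |w ψ i - w ψ₀ i|) + (‖ψ‖ ^ 2 - ∑ i ∈ F, ‖ψ i‖ ^ 2)
        + (‖ψ₀‖ ^ 2 - ∑ i ∈ F, ‖ψ₀ i‖ ^ 2) < η :=
    (hcont.continuousAt).eventually_lt continuousAt_const hψ₀
  filter_upwards [hev] with ψ hψ
  exact lt_of_le_of_lt (hbound ψ) hψ
lemma lam_mem_Ioo (Λ : ℝ) (i : HIndex) (ε : ℝ) (hε : 0 < ε) :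
    lam Λ i.n ∈ Ioo (lam Λ i.n - ε) (lam Λ i.n + ε) :=
  ⟨by linarith, by linarith⟩

lemma normsq_le_mB (Λ : ℝ) (ψ : Hspace) (i : HIndex) {B : Set ℝ} (hmem : lam Λ i.n ∈ B) :
    ‖ψ i‖ ^ 2 ≤ mB Λ B ψ := by
  have := Summable.le_tsum (summable_mB Λ B ψ) i (fun j _ => mB_term_nonneg Λ B ψ j)
  rwa [Set.indicator_of_mem hmem] at this

lemma fracIntegral_eq (Λ : ℝ) (ψ : Hspace) (q : ℝ) {ε : ℝ} (hε : 0 < ε) :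
    fracIntegral (specMeasure Λ ψ) q ε
      = ∑' i : HIndex, ENNReal.ofReal (‖ψ i‖ ^ 2) *
          (specMeasure Λ ψ (Ioo (lam Λ i.n - ε) (lam Λ i.n + ε))) ^ (q - 1) := by
  classical
  set μ := specMeasure Λ ψ with hμ
  set S : Set ℝ := {x : ℝ | 0 < μ (Ioo (x - ε) (x + ε))} with hSdef
  have hrs : μ.restrict S
      = Measure.sum (fun i : HIndex => ENNReal.ofReal (‖ψ i‖ ^ 2) •
          ((Measure.dirac (lam Λ i.n)).restrict S)) := by
    rw [hμ, specMeasure, Measure.restrict_sum_of_countable]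
    congr 1; funext i; rw [Measure.restrict_smul]
  rw [fracIntegral]
  rw [show ∫⁻ x in {x : ℝ | 0 < μ (Ioo (x - ε) (x + ε))},
        μ (Ioo (x - ε) (x + ε)) ^ (q - 1) ∂μ
      = ∫⁻ x, μ (Ioo (x - ε) (x + ε)) ^ (q - 1) ∂(μ.restrict S) from rfl]
  rw [hrs, lintegral_sum_measure]
  apply tsum_congr
  intro i
  rw [lintegral_smul_measure, restrict_dirac]
  by_cases hS : lam Λ i.n ∈ S
  · rw [if_pos hS, lintegral_dirac, smul_eq_mul]
  · rw [if_neg hS, lintegral_zero_measure, smul_zero]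
    have h0 : μ (Ioo (lam Λ i.n - ε) (lam Λ i.n + ε)) = 0 := by
      by_contra h
      exact hS (pos_iff_ne_zero.mpr h)
    have hle : ENNReal.ofReal (‖ψ i‖ ^ 2) ≤ μ (Ioo (lam Λ i.n - ε) (lam Λ i.n + ε)) := by
      rw [hμ, specMeasure_apply Λ ψ measurableSet_Ioo]
      exact ENNReal.ofReal_le_ofReal (normsq_le_mB Λ ψ i (lam_mem_Ioo Λ i ε hε))
    have : ENNReal.ofReal (‖ψ i‖ ^ 2) = 0 := le_antisymm (h0 ▸ hle) zero_le
    rw [this, zero_mul]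

lemma fracIntegral_eq' (Λ : ℝ) (ψ : Hspace) (q : ℝ) {ε : ℝ} (hε : 0 < ε) :
    fracIntegral (specMeasure Λ ψ) q ε
      = ∑' i : HIndex, ENNReal.ofReal (‖ψ i‖ ^ 2) *
          (ENNReal.ofReal (mB Λ (Ioo (lam Λ i.n - ε) (lam Λ i.n + ε)) ψ)) ^ (q - 1) := by
  rw [fracIntegral_eq Λ ψ q hε]
  exact tsum_congr fun i => by rw [specMeasure_apply Λ ψ measurableSet_Ioo]

lemma lsc_fracIntegral (Λ : ℝ) {q : ℝ} (hq : q < 1) {ε : ℝ} (hε : 0 < ε) :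
    LowerSemicontinuous (fun ψ : Hspace => fracIntegral (specMeasure Λ ψ) q ε) := by
  have heq : (fun ψ : Hspace => fracIntegral (specMeasure Λ ψ) q ε)
      = fun ψ => ∑' i : HIndex, ENNReal.ofReal (‖ψ i‖ ^ 2) *
          (ENNReal.ofReal (mB Λ (Ioo (lam Λ i.n - ε) (lam Λ i.n + ε)) ψ)) ^ (q - 1) :=
    funext fun ψ => fracIntegral_eq' Λ ψ q hε
  rw [heq]
  apply lowerSemicontinuous_tsum
  intro i ψ₀
  set B := Ioo (lam Λ i.n - ε) (lam Λ i.n + ε) with hB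
  by_cases h0 : mB Λ B ψ₀ = 0
  · have hzero : ENNReal.ofReal (‖ψ₀ i‖ ^ 2) = 0 := by
      rw [ENNReal.ofReal_eq_zero]
      have := normsq_le_mB Λ ψ₀ i (lam_mem_Ioo Λ i ε hε)
      rw [h0] at this
      exact this
    intro y hy
    dsimp only at hy
    rw [hzero, zero_mul] at hy
    exact absurd hy (by simp)
  · apply ContinuousAt.lowerSemicontinuousAt
    have hbne : ENNReal.ofReal (mB Λ B ψ₀) ≠ 0 := by
      rw [Ne, ENNReal.ofReal_eq_zero]
      intro h
      exact h0 (le_antisymm h (mB_nonneg Λ B ψ₀))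
    have hbtop : (ENNReal.ofReal (mB Λ B ψ₀)) ^ (q - 1) ≠ ⊤ := by
      rw [Ne, ENNReal.rpow_eq_top_iff]
      push_neg
      exact ⟨fun h => absurd h hbne, fun h => absurd h ENNReal.ofReal_ne_top⟩
    have h1 : ContinuousAt (fun ψ : Hspace => ENNReal.ofReal (‖ψ i‖ ^ 2)) ψ₀ :=
      (ENNReal.continuous_ofReal.comp ((coord_continuous i).norm.pow 2)).continuousAt
    have h2 : ContinuousAt (fun ψ : Hspace =>
        (ENNReal.ofReal (mB Λ B ψ)) ^ (q - 1)) ψ₀ :=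
      (ENNReal.continuous_rpow_const.comp
        (ENNReal.continuous_ofReal.comp (mB_continuous Λ B))).continuousAt
    exact ENNReal.Tendsto.mul h1 (Or.inr hbtop) h2 (Or.inr ENNReal.ofReal_ne_top)

lemma isOpen_fracIntegral_gt (Λ : ℝ) {q : ℝ} (hq : q < 1) {ε : ℝ} (hε : 0 < ε) (t : ℝ≥0∞) :
    IsOpen {ψ : Hspace | t < fracIntegral (specMeasure Λ ψ) q ε} :=
  (lsc_fracIntegral Λ hq hε).isOpen_preimage t
lemma rpow_anti {x y : ℝ≥0∞} {r : ℝ} (hr : r ≤ 0) (h : x ≤ y) : y ^ r ≤ x ^ r := by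
  have h1 : y ^ r = (y ^ (-r))⁻¹ := by rw [← ENNReal.rpow_neg, neg_neg]
  have h2 : x ^ r = (x ^ (-r))⁻¹ := by rw [← ENNReal.rpow_neg, neg_neg]
  rw [h1, h2]
  exact ENNReal.inv_le_inv.mpr (ENNReal.rpow_le_rpow h (neg_nonneg.mpr hr))

lemma rpow_mul_self_le {x : ℝ≥0∞} {q : ℝ} (hq0 : 0 < q) (hq1 : q < 1) :
    x ^ (q - 1) * x ≤ x ^ q := by
  rcases eq_or_ne x 0 with rfl | hx0
  · simp
  rcases eq_or_ne x ⊤ with rfl | hxt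
  · rw [ENNReal.top_rpow_of_pos hq0]; exact le_top
  rw [show x ^ q = x ^ (q - 1 + 1) by norm_num, ENNReal.rpow_add _ _ hx0 hxt, ENNReal.rpow_one]

lemma exists_ne_zero_of_ne_zero {ψ : Hspace} (hψ : ψ ≠ 0) : ∃ i, ψ i ≠ 0 := by
  by_contra h
  push_neg at h
  exact hψ (lp.ext (funext fun i => by rw [h i]; rfl))

lemma fracIntegral_lower (Λ : ℝ) {ψ : Hspace} (hψ : ψ ≠ 0) {q : ℝ} (hq1 : q < 1) :
    ∃ c : ℝ≥0∞, 0 < c ∧ c ≠ ⊤ ∧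
      ∀ {ε : ℝ}, 0 < ε → c ≤ fracIntegral (specMeasure Λ ψ) q ε := by
  obtain ⟨i₀, hi₀⟩ := exists_ne_zero_of_ne_zero hψ
  have hnorm : 0 < ‖ψ i₀‖ ^ 2 := pow_pos (norm_pos_iff.mpr hi₀) 2
  have hnorm' : 0 < ‖ψ‖ ^ 2 := by
    have : 0 < ‖ψ‖ := norm_pos_iff.mpr hψ
    positivity
  have hbase0 : ENNReal.ofReal (‖ψ‖ ^ 2) ≠ 0 := by
    rw [Ne, ENNReal.ofReal_eq_zero]; linarith
  have hpow_ne_top : (ENNReal.ofReal (‖ψ‖ ^ 2)) ^ (q - 1) ≠ ⊤ := by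
    rw [Ne, ENNReal.rpow_eq_top_iff]
    push_neg
    exact ⟨fun h => absurd h hbase0, fun h => absurd h ENNReal.ofReal_ne_top⟩
  have hpow_ne_zero : (ENNReal.ofReal (‖ψ‖ ^ 2)) ^ (q - 1) ≠ 0 := by
    rw [Ne, ENNReal.rpow_eq_zero_iff]
    push_neg
    exact ⟨fun h => absurd h hbase0, fun h => absurd h ENNReal.ofReal_ne_top⟩
  refine ⟨ENNReal.ofReal (‖ψ i₀‖ ^ 2) * (ENNReal.ofReal (‖ψ‖ ^ 2)) ^ (q - 1), ?_, ?_, ?_⟩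
  · apply ENNReal.mul_pos _ hpow_ne_zero
    rw [Ne, ENNReal.ofReal_eq_zero]; linarith
  · exact ENNReal.mul_ne_top ENNReal.ofReal_ne_top hpow_ne_top
  · intro ε hε
    rw [fracIntegral_eq Λ ψ q hε]
    calc ENNReal.ofReal (‖ψ i₀‖ ^ 2) * (ENNReal.ofReal (‖ψ‖ ^ 2)) ^ (q - 1)
        ≤ ENNReal.ofReal (‖ψ i₀‖ ^ 2) *
            (specMeasure Λ ψ (Ioo (lam Λ i₀.n - ε) (lam Λ i₀.n + ε))) ^ (q - 1) :=
          mul_le_mul_right (rpow_anti (by linarith) (specMeasure_le_univ Λ ψ)) _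
      _ ≤ _ := ENNReal.le_tsum i₀

lemma lam_bounds (Λ : ℝ) (hΛ : 0 < Λ) (i : HIndex) : -Λ ≤ lam Λ i.n ∧ lam Λ i.n < 0 := by
  have hn : (1 : ℝ) ≤ (i.n : ℝ) := by exact_mod_cast i.hn
  have hn2 : (1 : ℝ) ≤ ((i.n : ℝ)) ^ 2 := one_le_pow₀ hn
  constructor
  · rw [lam, neg_div, neg_le_neg_iff]
    exact div_le_self hΛ.le hn2
  · rw [lam, neg_div, neg_lt_zero]
    positivity

lemma fracIntegral_upper (Λ : ℝ) (hΛ : 0 < Λ) {q : ℝ} (hq0 : 0 < q) (hq1 : q < 1) (ψ : Hspace)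
    {ε : ℝ} (hε0 : 0 < ε) (hε1 : ε < 1) :
    fracIntegral (specMeasure Λ ψ) q ε
      ≤ (⌈(Λ + 2) / ε⌉₊ : ℝ≥0∞) * (ENNReal.ofReal (‖ψ‖ ^ 2)) ^ q := by
  classical
  set μ := specMeasure Λ ψ with hμ
  set a : ℝ := -Λ - 1 with ha
  set k : HIndex → ℕ := fun i => ⌊(lam Λ i.n - a) / ε⌋₊ with hk
  set J : ℕ → Set ℝ := fun kk => Ico (a + kk * ε) (a + (kk + 1) * ε) with hJ
  set N : ℕ := ⌈(Λ + 2) / ε⌉₊ with hN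
  have hNε : Λ + 2 ≤ N * ε := by
    have h1 : (Λ + 2) / ε ≤ (N : ℝ) := Nat.le_ceil _
    calc Λ + 2 = ((Λ + 2) / ε) * ε := by field_simp
      _ ≤ N * ε := by apply mul_le_mul_of_nonneg_right h1 hε0.le
  have hki : ∀ i : HIndex, lam Λ i.n ∈ J (k i) := by
    intro i
    have hia := lam_bounds Λ hΛ i
    have hx0 : 0 ≤ (lam Λ i.n - a) / ε := by
      apply div_nonneg _ hε0.le
      rw [ha]; linarith
    have hfl : ((k i : ℝ)) * ε ≤ lam Λ i.n - a := by
      calc ((k i : ℝ)) * ε ≤ ((lam Λ i.n - a) / ε) * ε :=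
          mul_le_mul_of_nonneg_right (Nat.floor_le hx0) hε0.le
        _ = lam Λ i.n - a := by field_simp
    have hfu : lam Λ i.n - a < ((k i : ℝ) + 1) * ε := by
      calc lam Λ i.n - a = ((lam Λ i.n - a) / ε) * ε := by field_simp
        _ < ((k i : ℝ) + 1) * ε :=
            mul_lt_mul_of_pos_right (Nat.lt_floor_add_one _) hε0
    have hmem : lam Λ i.n ∈ Ico (a + (k i : ℝ) * ε) (a + ((k i : ℝ) + 1) * ε) :=
      ⟨by linarith, by linarith⟩
    exact hmem
  have hJsub : ∀ i : HIndex, J (k i) ⊆ Ioo (lam Λ i.n - ε) (lam Λ i.n + ε) := by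
    intro i y hy
    have h1 : lam Λ i.n ∈ Ico (a + (k i : ℝ) * ε) (a + ((k i : ℝ) + 1) * ε) := hki i
    have hy' : y ∈ Ico (a + (k i : ℝ) * ε) (a + ((k i : ℝ) + 1) * ε) := hy
    obtain ⟨hl1, hl2⟩ := h1
    obtain ⟨hy1, hy2⟩ := hy'
    exact ⟨by linarith, by linarith⟩
  have hμJ : ∀ kk : ℕ, μ (J kk) = ∑' i : HIndex,
      ENNReal.ofReal (‖ψ i‖ ^ 2) * (J kk).indicator (1 : ℝ → ℝ≥0∞) (lam Λ i.n) := by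
    intro kk
    rw [hμ, specMeasure, Measure.sum_apply _ measurableSet_Ico]
    exact tsum_congr fun i => by
      rw [Measure.smul_apply, Measure.dirac_apply' _ measurableSet_Ico, smul_eq_mul]
  have hμJ_zero : ∀ kk : ℕ, N ≤ kk → μ (J kk) = 0 := by
    intro kk hkk
    rw [hμJ]
    rw [ENNReal.tsum_eq_zero]
    intro i
    have hia := lam_bounds Λ hΛ i
    have hout : lam Λ i.n ∉ J kk := by
      rw [hJ]
      simp only [mem_Ico, not_and, not_lt]
      intro habs
      exfalso
      have h5 : (N : ℝ) ≤ (kk : ℝ) := by exact_mod_cast hkk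
      have h6 : a + (kk : ℝ) * ε ≥ a + (N : ℝ) * ε := by
        have := mul_le_mul_of_nonneg_right h5 hε0.le
        linarith
      have : a + (N : ℝ) * ε ≥ 1 := by rw [ha]; linarith
      linarith [hia.2]
    rw [Set.indicator_of_notMem hout, mul_zero]
  calc fracIntegral μ q ε
      = ∑' i : HIndex, ENNReal.ofReal (‖ψ i‖ ^ 2) *
          (μ (Ioo (lam Λ i.n - ε) (lam Λ i.n + ε))) ^ (q - 1) := fracIntegral_eq Λ ψ q hε0
    _ ≤ ∑' i : HIndex, ENNReal.ofReal (‖ψ i‖ ^ 2) * (μ (J (k i))) ^ (q - 1) :=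
        ENNReal.tsum_le_tsum fun i =>
          mul_le_mul_right (rpow_anti (by linarith) (measure_mono (hJsub i))) _
    _ = ∑' i : HIndex, ∑' kk : ℕ,
          (if kk = k i then ENNReal.ofReal (‖ψ i‖ ^ 2) * (μ (J kk)) ^ (q - 1) else 0) := by
        refine tsum_congr fun i => ?_
        rw [tsum_eq_single (k i) (fun kk hkk => if_neg hkk)]
        rw [if_pos rfl]
    _ = ∑' kk : ℕ, ∑' i : HIndex,
          (if kk = k i then ENNReal.ofReal (‖ψ i‖ ^ 2) * (μ (J kk)) ^ (q - 1) else 0) :=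
        ENNReal.tsum_comm
    _ ≤ ∑' kk : ℕ, (μ (J kk)) ^ q := by
        refine ENNReal.tsum_le_tsum fun kk => ?_
        have hrw : ∀ i : HIndex,
            (if kk = k i then ENNReal.ofReal (‖ψ i‖ ^ 2) * (μ (J kk)) ^ (q - 1) else 0)
            = (μ (J kk)) ^ (q - 1) * (if kk = k i then ENNReal.ofReal (‖ψ i‖ ^ 2) else 0) := by
          intro i
          split_ifs with h
          · ring
          · rw [mul_zero]
        calc ∑' i : HIndex,
            (if kk = k i then ENNReal.ofReal (‖ψ i‖ ^ 2) * (μ (J kk)) ^ (q - 1) else 0)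
            = (μ (J kk)) ^ (q - 1) *
              ∑' i : HIndex, (if kk = k i then ENNReal.ofReal (‖ψ i‖ ^ 2) else 0) := by
              rw [← ENNReal.tsum_mul_left]
              exact tsum_congr hrw
          _ ≤ (μ (J kk)) ^ (q - 1) * μ (J kk) := by
              apply mul_le_mul_right
              rw [hμJ kk]
              refine ENNReal.tsum_le_tsum fun i => ?_
              split_ifs with h
              · rw [Set.indicator_of_mem (h ▸ hki i), Pi.one_apply, mul_one]
              · exact zero_le
          _ ≤ (μ (J kk)) ^ q := rpow_mul_self_le hq0 hq1
    _ ≤ (N : ℝ≥0∞) * (ENNReal.ofReal (‖ψ‖ ^ 2)) ^ q := by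
        rw [tsum_eq_sum (s := Finset.range N) (fun kk hkk => by
          rw [hμJ_zero kk (by simpa using hkk), ENNReal.zero_rpow_of_pos hq0])]
        calc ∑ kk ∈ Finset.range N, (μ (J kk)) ^ q
            ≤ ∑ kk ∈ Finset.range N, (ENNReal.ofReal (‖ψ‖ ^ 2)) ^ q :=
              Finset.sum_le_sum fun kk _ =>
                ENNReal.rpow_le_rpow (hμ ▸ specMeasure_le_univ Λ ψ) hq0.le
          _ = (N : ℝ≥0∞) * (ENNReal.ofReal (‖ψ‖ ^ 2)) ^ q := by
              rw [Finset.sum_const, Finset.card_range, nsmul_eq_mul]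
def gfun (Λ : ℝ) (q : ℝ) (ψ : Hspace) (ε : ℝ) : ℝ :=
  Real.log (fracIntegral (specMeasure Λ ψ) q ε).toReal / ((q - 1) * Real.log ε)

lemma Dupper_eq_limsup (Λ q : ℝ) (ψ : Hspace) :
    Dupper (specMeasure Λ ψ) q = limsup (gfun Λ q ψ) (𝓝[>](0:ℝ)) := rfl

lemma tendsto_D {q : ℝ} (hq1 : q < 1) :
    Tendsto (fun ε : ℝ => (q - 1) * Real.log ε) (𝓝[>](0:ℝ)) atTop :=
  Filter.Tendsto.const_mul_atBot_of_neg (by linarith) Real.tendsto_log_nhdsGT_zero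

lemma eventually_pos : ∀ᶠ ε in 𝓝[>](0:ℝ), 0 < ε :=
  eventually_nhdsWithin_of_forall fun x hx => hx

lemma eventually_lt_one : ∀ᶠ ε in 𝓝[>](0:ℝ), ε < 1 :=
  (eventually_lt_nhds zero_lt_one).filter_mono nhdsWithin_le_nhds

lemma frac_zero (Λ q : ℝ) {ε : ℝ} (hε : 0 < ε) :
    fracIntegral (specMeasure Λ (0 : Hspace)) q ε = 0 := by
  rw [fracIntegral_eq Λ 0 q hε, ENNReal.tsum_eq_zero]
  intro i
  have : (0 : Hspace) i = 0 := by rw [lp.coeFn_zero]; rfl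
  rw [this]
  simp

lemma gfun_zero (Λ q : ℝ) {ε : ℝ} (hε : 0 < ε) : gfun Λ q (0 : Hspace) ε = 0 := by
  rw [gfun, frac_zero Λ q hε]
  simp

/-- bounds on the logarithm of the fractal integral -/
lemma log_frac_bounds (Λ : ℝ) (hΛ : 0 < Λ) {q : ℝ} (hq0 : 0 < q) (hq1 : q < 1)
    {ψ : Hspace} (hψ : ψ ≠ 0) :
    ∃ c' K : ℝ, 0 < K ∧ ∀ {ε : ℝ}, 0 < ε → ε < 1 →
      c' ≤ Real.log (fracIntegral (specMeasure Λ ψ) q ε).toReal ∧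
      Real.log (fracIntegral (specMeasure Λ ψ) q ε).toReal ≤ Real.log K - Real.log ε := by
  obtain ⟨c, hc0, hctop, hcle⟩ := fracIntegral_lower Λ hψ hq1
  set Kq : ℝ≥0∞ := (ENNReal.ofReal (‖ψ‖ ^ 2)) ^ q with hKq
  have hKq_top : Kq ≠ ⊤ := ENNReal.rpow_ne_top_of_nonneg hq0.le ENNReal.ofReal_ne_top
  have hnorm' : 0 < ‖ψ‖ ^ 2 := by
    have : 0 < ‖ψ‖ := norm_pos_iff.mpr hψ
    positivity
  have hKq_ne : Kq ≠ 0 := by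
    rw [hKq, Ne, ENNReal.rpow_eq_zero_iff]
    push_neg
    constructor
    · intro h; exfalso; rw [ENNReal.ofReal_eq_zero] at h; linarith
    · intro h; exact absurd h ENNReal.ofReal_ne_top
  set K : ℝ := (Λ + 3) * Kq.toReal with hK
  have hKpos : 0 < K := by
    apply _root_.mul_pos (by linarith)
    exact ENNReal.toReal_pos hKq_ne hKq_top
  refine ⟨Real.log c.toReal, K, hKpos, ?_⟩
  intro ε hε0 hε1
  set I := fracIntegral (specMeasure Λ ψ) q ε with hI
  have hItop : I ≠ ⊤ := by
    have := fracIntegral_upper Λ hΛ hq0 hq1 ψ hε0 hε1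
    exact ne_top_of_le_ne_top (ENNReal.mul_ne_top (ENNReal.natCast_ne_top _) hKq_top) this
  have h0I : (0:ℝ≥0∞) < I := lt_of_lt_of_le hc0 (hcle hε0)
  have hIpos : 0 < I.toReal := ENNReal.toReal_pos h0I.ne' hItop
  have hcI : c.toReal ≤ I.toReal := ENNReal.toReal_mono hItop (hcle hε0)
  constructor
  · exact Real.log_le_log (ENNReal.toReal_pos hc0.ne' hctop) hcI
  · have hup : I.toReal ≤ K / ε := by
      have h1 : I.toReal ≤ (⌈(Λ + 2) / ε⌉₊ : ℝ) * Kq.toReal := by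
        have h2 := fracIntegral_upper Λ hΛ hq0 hq1 ψ hε0 hε1
        calc I.toReal ≤ ((⌈(Λ + 2) / ε⌉₊ : ℝ≥0∞) * Kq).toReal :=
            ENNReal.toReal_mono (ENNReal.mul_ne_top (ENNReal.natCast_ne_top _) hKq_top) h2
          _ = (⌈(Λ + 2) / ε⌉₊ : ℝ) * Kq.toReal := by
            rw [ENNReal.toReal_mul]; simp
      have h3 : (⌈(Λ + 2) / ε⌉₊ : ℝ) ≤ (Λ + 3) / ε := by
        have h4 : (⌈(Λ + 2) / ε⌉₊ : ℝ) < (Λ + 2) / ε + 1 :=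
          Nat.ceil_lt_add_one (by positivity)
        have h5 : (Λ + 2) / ε + 1 ≤ (Λ + 3) / ε := by
          rw [div_add' _ _ _ hε0.ne', div_le_div_iff₀ hε0 hε0]
          nlinarith
        linarith
      calc I.toReal ≤ ((Λ + 3) / ε) * Kq.toReal :=
          le_trans h1 (mul_le_mul_of_nonneg_right h3 ENNReal.toReal_nonneg)
        _ = K / ε := by rw [hK]; ring
    calc Real.log I.toReal ≤ Real.log (K / ε) := Real.log_le_log hIpos hup
      _ = Real.log K - Real.log ε := Real.log_div hKpos.ne' hε0.ne'

lemma g_up (Λ : ℝ) (hΛ : 0 < Λ) {q : ℝ} (hq0 : 0 < q) (hq1 : q < 1)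
    {ψ : Hspace} (hψ : ψ ≠ 0) :
    ∀ᶠ ε in 𝓝[>](0:ℝ), gfun Λ q ψ ε ≤ 1 + 1 / (1 - q) := by
  obtain ⟨c', K, hKpos, hbounds⟩ := log_frac_bounds Λ hΛ hq0 hq1 hψ
  filter_upwards [eventually_pos, eventually_lt_one,
    (tendsto_D hq1).eventually_ge_atTop (max 1 |Real.log K|)] with ε hε0 hε1 hD
  set D : ℝ := (q - 1) * Real.log ε with hDdef
  have hD1 : (1:ℝ) ≤ D := le_trans (le_max_left _ _) hD
  have hDK : |Real.log K| ≤ D := le_trans (le_max_right _ _) hD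
  have hD0 : 0 < D := lt_of_lt_of_le one_pos hD1
  have hlogε : Real.log ε ≠ 0 := by
    intro h
    rw [hDdef, h, mul_zero] at hD0
    exact lt_irrefl _ hD0
  have hb := (hbounds hε0 hε1).2
  rw [gfun]
  calc Real.log (fracIntegral (specMeasure Λ ψ) q ε).toReal / D
      ≤ (Real.log K - Real.log ε) / D := by
        rw [div_le_div_iff_of_pos_right hD0]
        exact hb
    _ = Real.log K / D + (- Real.log ε) / D := by ring
    _ ≤ 1 + 1 / (1 - q) := by
        have h1 : Real.log K / D ≤ 1 := by
          rw [div_le_one hD0]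
          exact le_trans (le_abs_self _) hDK
        have h2 : (- Real.log ε) / D = 1 / (1 - q) := by
          rw [div_eq_div_iff hD0.ne' (by linarith : (0:ℝ) < 1 - q).ne']
          rw [hDdef]
          ring
        linarith

lemma g_down (Λ : ℝ) (hΛ : 0 < Λ) {q : ℝ} (hq0 : 0 < q) (hq1 : q < 1)
    {ψ : Hspace} (hψ : ψ ≠ 0) {η : ℝ} (hη : 0 < η) :
    ∀ᶠ ε in 𝓝[>](0:ℝ), -η ≤ gfun Λ q ψ ε := by
  obtain ⟨c', K, hKpos, hbounds⟩ := log_frac_bounds Λ hΛ hq0 hq1 hψ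
  filter_upwards [eventually_pos, eventually_lt_one,
    (tendsto_D hq1).eventually_ge_atTop (max 1 (|c'| / η))] with ε hε0 hε1 hD
  set D : ℝ := (q - 1) * Real.log ε with hDdef
  have hD1 : (1:ℝ) ≤ D := le_trans (le_max_left _ _) hD
  have hDc : |c'| / η ≤ D := le_trans (le_max_right _ _) hD
  have hD0 : 0 < D := lt_of_lt_of_le one_pos hD1
  have hb := (hbounds hε0 hε1).1
  rw [gfun]
  have h1 : c' / D ≤ Real.log (fracIntegral (specMeasure Λ ψ) q ε).toReal / D := by
    rw [div_le_div_iff_of_pos_right hD0]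
    exact hb
  have h2 : -η ≤ c' / D := by
    have hnegabs : -|c'| / D ≤ c' / D := by
      rw [div_le_div_iff_of_pos_right hD0]
      exact neg_abs_le c'
    have key : |c'| ≤ η * D := by
      have := (div_le_iff₀ hη).mp hDc
      linarith
    have h3 : -η ≤ -|c'| / D := by
      rw [neg_div, neg_le_neg_iff, div_le_iff₀ hD0]
      linarith
    linarith
  linarith
lemma g_boundedUnder (Λ : ℝ) (hΛ : 0 < Λ) {q : ℝ} (hq0 : 0 < q) (hq1 : q < 1) (ψ : Hspace) :
    IsBoundedUnder (· ≤ ·) (𝓝[>](0:ℝ)) (gfun Λ q ψ) := by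
  by_cases hψ : ψ = 0
  · refine ⟨0, eventually_map.mpr ?_⟩
    filter_upwards [eventually_pos] with ε hε
    rw [hψ, gfun_zero Λ q hε]
  · exact ⟨1 + 1 / (1 - q), eventually_map.mpr (g_up Λ hΛ hq0 hq1 hψ)⟩

lemma g_coboundedUnder (Λ : ℝ) (hΛ : 0 < Λ) {q : ℝ} (hq0 : 0 < q) (hq1 : q < 1) (ψ : Hspace) :
    IsCoboundedUnder (· ≤ ·) (𝓝[>](0:ℝ)) (gfun Λ q ψ) := by
  by_cases hψ : ψ = 0
  · refine Filter.IsBoundedUnder.isCoboundedUnder_le ⟨0, eventually_map.mpr ?_⟩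
    filter_upwards [eventually_pos] with ε hε
    rw [hψ, gfun_zero Λ q hε]
  · exact Filter.IsBoundedUnder.isCoboundedUnder_le
      ⟨-1, eventually_map.mpr (g_down Λ hΛ hq0 hq1 hψ one_pos)⟩

lemma Dupper_nonneg (Λ : ℝ) (hΛ : 0 < Λ) {q : ℝ} (hq0 : 0 < q) (hq1 : q < 1) (ψ : Hspace) :
    0 ≤ Dupper (specMeasure Λ ψ) q := by
  by_cases hψ : ψ = 0
  · rw [hψ, Dupper_eq_limsup]
    have he : gfun Λ q (0 : Hspace) =ᶠ[𝓝[>](0:ℝ)] fun _ => (0:ℝ) := by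
      filter_upwards [eventually_pos] with ε hε
      exact gfun_zero Λ q hε
    rw [limsup_congr he, limsup_const]
  · rw [Dupper_eq_limsup]
    by_contra hneg
    push_neg at hneg
    set L := limsup (gfun Λ q ψ) (𝓝[>](0:ℝ)) with hL
    have hfr : ∃ᶠ ε in 𝓝[>](0:ℝ), -(-L / 2) ≤ gfun Λ q ψ ε :=
      (g_down Λ hΛ hq0 hq1 hψ (by linarith)).frequently
    have := le_limsup_of_frequently_le hfr (g_boundedUnder Λ hΛ hq0 hq1 ψ)
    rw [← hL] at this
    linarith

lemma threshold_iff (Λ : ℝ) (hΛ : 0 < Λ) {q : ℝ} (hq0 : 0 < q) (hq1 : q < 1) (ψ : Hspace)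
    {c : ℝ} (hc : 0 < c) {ε : ℝ} (hε0 : 0 < ε) (hε1 : ε < 1) :
    (ENNReal.ofReal (Real.exp (c * ((q - 1) * Real.log ε)))
      < fracIntegral (specMeasure Λ ψ) q ε) ↔ c < gfun Λ q ψ ε := by
  set D : ℝ := (q - 1) * Real.log ε with hDdef
  have hD0 : 0 < D := mul_pos_of_neg_of_neg (by linarith) (Real.log_neg hε0 hε1)
  set I := fracIntegral (specMeasure Λ ψ) q ε with hI
  have hItop : I ≠ ⊤ := by
    have h2 := fracIntegral_upper Λ hΛ hq0 hq1 ψ hε0 hε1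
    exact ne_top_of_le_ne_top (ENNReal.mul_ne_top (ENNReal.natCast_ne_top _)
      (ENNReal.rpow_ne_top_of_nonneg hq0.le ENNReal.ofReal_ne_top)) h2
  have hgl : gfun Λ q ψ ε = Real.log I.toReal / D := rfl
  rw [hgl, lt_div_iff₀ hD0]
  rcases eq_or_lt_of_le (ENNReal.toReal_nonneg (a := I)) with h0 | hpos
  · have hI0 : I = 0 := by
      rcases ENNReal.toReal_eq_zero_iff I |>.mp h0.symm with h | h
      · exact h
      · exact absurd h hItop
    constructor
    · intro h
      exfalso
      rw [hI0] at h
      simp at h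
    · intro h
      exfalso
      rw [← h0, Real.log_zero] at h
      nlinarith
  · rw [ENNReal.ofReal_lt_iff_lt_toReal (Real.exp_pos _).le hItop]
    rw [← Real.lt_log_iff_exp_lt hpos]

theorem hydrogen_Gdelta_upper (Λ : ℝ) (hΛ : 0 < Λ)
    (q : ℝ) (hq : q ∈ Ioo (0 : ℝ) 1) (γ : ℝ) (hγ : γ ∈ Icc (0 : ℝ) 1) :
    IsGδ {ψ : Hspace | γ ≤ Dupper (specMeasure Λ ψ) q} := by
  obtain ⟨hq0, hq1⟩ := hq
  obtain ⟨hγ0, _⟩ := hγ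
  rcases eq_or_lt_of_le hγ0 with hγz | hγpos
  · have huniv : {ψ : Hspace | γ ≤ Dupper (specMeasure Λ ψ) q} = univ := by
      ext ψ
      simp only [mem_setOf_eq, mem_univ, iff_true]
      rw [← hγz]
      exact Dupper_nonneg Λ hΛ hq0 hq1 ψ
    rw [huniv]
    exact IsGδ.univ
  · set c : ℕ → ℝ := fun j => γ - γ / ((j : ℝ) + 2) with hcdef
    have hc_pos : ∀ j, 0 < c j := by
      intro j
      have h1 : γ / ((j : ℝ) + 2) < γ := div_lt_self hγpos (by have := Nat.cast_nonneg (α := ℝ) j; linarith)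
      simp only [hcdef]
      linarith
    have hc_lt : ∀ j, c j < γ := by
      intro j
      simp only [hcdef]
      have : 0 < γ / ((j : ℝ) + 2) := div_pos hγpos (by positivity)
      linarith
    have hc_approx : ∀ b < γ, ∃ j : ℕ, b ≤ c j := by
      intro b hb
      obtain ⟨j, hj⟩ := exists_nat_ge (γ / (γ - b))
      refine ⟨j, ?_⟩
      have hd : γ / ((j : ℝ) + 2) ≤ γ - b := by
        rw [div_le_iff₀ (by positivity : (0:ℝ) < (j : ℝ) + 2)]
        rw [div_le_iff₀ (by linarith : (0:ℝ) < γ - b)] at hj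
        nlinarith [hγpos.le]
      simp only [hcdef]
      linarith
    have hset : {ψ : Hspace | γ ≤ Dupper (specMeasure Λ ψ) q}
        = ⋂ (j : ℕ), ⋂ (m : ℕ), ⋃ (ε : ℝ) (_ : ε ∈ Ioo (0:ℝ) (1 / ((m:ℝ) + 1))),
          {ψ : Hspace | ENNReal.ofReal (Real.exp ((c j) * ((q - 1) * Real.log ε)))
            < fracIntegral (specMeasure Λ ψ) q ε} := by
      ext ψ
      simp only [mem_setOf_eq, mem_iInter, mem_iUnion]
      rw [Dupper_eq_limsup,
        le_limsup_iff (g_coboundedUnder Λ hΛ hq0 hq1 ψ) (g_boundedUnder Λ hΛ hq0 hq1 ψ)]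
      constructor
      · intro h j m
        have hfreq : ∃ᶠ ε in 𝓝[>](0:ℝ), c j < gfun Λ q ψ ε := h (c j) (hc_lt j)
        have hmem : Ioo (0:ℝ) (1 / ((m:ℝ) + 1)) ∈ 𝓝[>](0:ℝ) :=
          Ioo_mem_nhdsGT_of_mem ⟨le_refl 0, by positivity⟩
        have hev : ∀ᶠ ε in 𝓝[>](0:ℝ), ε ∈ Ioo (0:ℝ) (1 / ((m:ℝ) + 1)) := hmem
        obtain ⟨ε, hlt, hεm⟩ := (hfreq.and_eventually hev).exists
        have hε1 : ε < 1 := by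
          have h2 : (1:ℝ) / ((m:ℝ) + 1) ≤ 1 := by
            rw [div_le_one (by positivity)]
            simp
          exact lt_of_lt_of_le hεm.2 h2
        refine ⟨ε, hεm, ?_⟩
        exact (threshold_iff Λ hΛ hq0 hq1 ψ (hc_pos j) hεm.1 hε1).mpr hlt
      · intro h b hb
        obtain ⟨j, hj⟩ := hc_approx b hb
        rw [Filter.frequently_iff]
        intro U hU
        obtain ⟨u, hu, hsub⟩ := mem_nhdsGT_iff_exists_Ioo_subset.mp hU
        obtain ⟨m, hm⟩ := exists_nat_one_div_lt (show (0:ℝ) < min u 1 from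
          lt_min hu (by norm_num))
        obtain ⟨ε, hεm, hεlt⟩ := h j m
        have hε0 : 0 < ε := hεm.1
        have hεsmall : ε < min u 1 := lt_trans hεm.2 hm
        have hε1 : ε < 1 := lt_of_lt_of_le hεsmall (min_le_right _ _)
        have hεu : ε < u := lt_of_lt_of_le hεsmall (min_le_left _ _)
        refine ⟨ε, hsub ⟨hε0, hεu⟩, ?_⟩
        have hcg : c j < gfun Λ q ψ ε :=
          (threshold_iff Λ hΛ hq0 hq1 ψ (hc_pos j) hε0 hε1).mp hεlt
        exact lt_of_le_of_lt hj hcg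
    rw [hset]
    refine IsGδ.iInter fun j => IsGδ.iInter fun m => IsOpen.isGδ ?_
    exact isOpen_iUnion fun ε => isOpen_iUnion fun hε =>
      isOpen_fracIntegral_gt Λ hq1 hε.1 _
end
end

section
/- Fix Λ > 0, λ_n = −Λ/n², and j ∈ ℕ, and let μ_j = Σ_{n≥1} n^{−(1+1/j)} δ_{λ_n} (a finite measure on ℝ). Then for every q ∈ (0,1) with j > q/(1−q), one has D⁺_{μ_j}(q) ≥ (1 − (1 + 1/j)q)/(3(1−q)). -/
open MeasureTheory Filter Set Topology ENNReal

noncomputable section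

namespace HydroAux

/-- shifted eigenvalue -/
def l (Λ : ℝ) (n : ℕ) : ℝ := -Λ / ((n : ℝ) + 1) ^ 2
/-- weight -/
def a (j : ℕ) (n : ℕ) : ℝ := ((n : ℝ) + 1) ^ (-(1 + 1 / (j : ℝ)))
def aE (j : ℕ) (n : ℕ) : ℝ≥0∞ := ENNReal.ofReal (a j n)
def mu (Λ : ℝ) (j : ℕ) : Measure ℝ := Measure.sum fun n => aE j n • Measure.dirac (l Λ n)

variable {Λ : ℝ} {j : ℕ}

lemma a_pos (j n : ℕ) : 0 < a j n := by
  unfold a; positivity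

lemma a_le_one (hj : j ≠ 0) (n : ℕ) : a j n ≤ 1 := by
  unfold a
  have h1 : (0:ℝ) < 1 + 1 / (j:ℝ) := by positivity
  have : ((n:ℝ)+1) ^ (-(1 + 1/(j:ℝ))) ≤ ((n:ℝ)+1) ^ (0:ℝ) := by
    apply Real.rpow_le_rpow_of_exponent_le (by push_cast; linarith) (by linarith)
  simpa using this

lemma aE_pos (j n : ℕ) : 0 < aE j n := ENNReal.ofReal_pos.mpr (a_pos j n)
lemma aE_ne_top (j n : ℕ) : aE j n ≠ ⊤ := ENNReal.ofReal_ne_top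

lemma l_strictMono (hΛ : 0 < Λ) : StrictMono (l Λ) := by
  intro n m h
  unfold l
  rw [div_lt_div_iff₀ (by positivity) (by positivity)]
  have h1 : ((n:ℝ)+1) < ((m:ℝ)+1) := by exact_mod_cast by omega
  have h0 : (0:ℝ) < (n:ℝ)+1 := by positivity
  nlinarith [mul_lt_mul_of_pos_left (by nlinarith : ((n:ℝ)+1)^2 < ((m:ℝ)+1)^2) hΛ]

lemma l_neg (hΛ : 0 < Λ) (n : ℕ) : l Λ n < 0 := by
  unfold l
  have : (0:ℝ) < Λ / ((n:ℝ)+1)^2 := by positivity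
  rw [neg_div]; linarith

lemma gap (hΛ : 0 < Λ) {n m : ℕ} (h : n < m) :
    2 * Λ / ((n:ℝ) + 2) ^ 3 ≤ l Λ m - l Λ n := by
  have h1 : l Λ (n+1) ≤ l Λ m := (l_strictMono hΛ).monotone (by omega)
  have h2 : 2 * Λ / ((n:ℝ) + 2) ^ 3 ≤ l Λ (n+1) - l Λ n := by
    unfold l
    push_cast
    set x : ℝ := (n:ℝ) + 1 with hx
    have hx1 : (1:ℝ) ≤ x := by
      rw [hx]; have := Nat.cast_nonneg (α := ℝ) n; linarith
    have e : -Λ / (x + 1) ^ 2 - -Λ / x ^ 2 = Λ * (2*x+1) / (x^2 * (x+1)^2) := by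
      field_simp; ring
    rw [show (n:ℝ) + 1 + 1 = x + 1 by rw [hx],
      show (n:ℝ) + 2 = x + 1 by rw [hx]; ring, e,
      div_le_div_iff₀ (by positivity) (by positivity)]
    nlinarith [mul_nonneg (mul_nonneg hΛ.le (sq_nonneg (x+1))) (by linarith : (0:ℝ) ≤ 3*x+1)]
  linarith

lemma mu_apply (Λ : ℝ) (j : ℕ) (s : Set ℝ) :
    mu Λ j s = ∑' n, aE j n * s.indicator 1 (l Λ n) := by
  rw [mu, Measure.sum_apply_of_countable]
  congr 1; funext n
  rw [Measure.smul_apply, Measure.dirac_apply, smul_eq_mul]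

lemma mu_singleton (hΛ : 0 < Λ) (j : ℕ) (n : ℕ) : mu Λ j {l Λ n} = aE j n := by
  rw [mu_apply]
  rw [tsum_eq_single n]
  · simp
  · intro m hm
    have : l Λ m ≠ l Λ n := fun h => hm ((l_strictMono hΛ).injective h)
    simp [Set.indicator_apply, this]

lemma le_mu_of_mem (hΛ : 0 < Λ) (j : ℕ) {n : ℕ} {s : Set ℝ} (h : l Λ n ∈ s) :
    aE j n ≤ mu Λ j s := by
  rw [mu_apply]
  have := ENNReal.le_tsum (f := fun n => aE j n * s.indicator 1 (l Λ n)) n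
  simpa [Set.indicator_of_mem h] using this


lemma mu_Ioo_isolated (hΛ : 0 < Λ) (j : ℕ) {n : ℕ} {ε : ℝ} (hε : 0 < ε)
    (hiso : ∀ m, m ≠ n → l Λ m ∉ Ioo (l Λ n - ε) (l Λ n + ε)) :
    mu Λ j (Ioo (l Λ n - ε) (l Λ n + ε)) = aE j n := by
  rw [mu_apply, tsum_eq_single n]
  · rw [Set.indicator_of_mem (by constructor <;> linarith), Pi.one_apply, mul_one]
  · intro m hm
    rw [Set.indicator_of_notMem (hiso m hm), mul_zero]

/-- lintegral of a countable sum of weighted diracs over a set containing all the atoms -/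
lemma setLIntegral_sum_dirac (c : ℕ → ℝ≥0∞) (x : ℕ → ℝ) (f : ℝ → ℝ≥0∞) {S : Set ℝ}
    (hx : ∀ i, x i ∈ S) :
    ∫⁻ y in S, f y ∂(Measure.sum fun i => c i • Measure.dirac (x i)) = ∑' i, c i * f (x i) := by
  classical
  rw [Measure.restrict_sum_of_countable, lintegral_sum_measure]
  congr 1; funext i
  rw [Measure.restrict_smul, lintegral_smul_measure, restrict_dirac, if_pos (hx i),
    lintegral_dirac, smul_eq_mul]

/-- the integral representation -/
lemma I_repr (hΛ : 0 < Λ) (j : ℕ) (q : ℝ) {ε : ℝ} (hε : 0 < ε) :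
    fracIntegral (mu Λ j) q ε
      = ∑' n, aE j n * (mu Λ j (Ioo (l Λ n - ε) (l Λ n + ε))) ^ (q - 1) := by
  have hmem : ∀ i : ℕ, l Λ i ∈ {x : ℝ | 0 < mu Λ j (Ioo (x - ε) (x + ε))} := by
    intro i
    have h1 : l Λ i ∈ Ioo (l Λ i - ε) (l Λ i + ε) := by constructor <;> linarith
    exact lt_of_lt_of_le (aE_pos j i) (le_mu_of_mem hΛ j h1)
  have := setLIntegral_sum_dirac (aE j) (l Λ)
    (fun y => mu Λ j (Ioo (y - ε) (y + ε)) ^ (q - 1)) hmem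
  exact this


lemma summable_a (hj : j ≠ 0) : Summable (a j) := by
  have hjpos : (0:ℝ) < (j:ℝ) := by exact_mod_cast Nat.pos_of_ne_zero hj
  have h : Summable (fun n : ℕ => (n:ℝ) ^ (-(1 + 1/(j:ℝ)))) := by
    apply Real.summable_nat_rpow.mpr
    have : 0 < 1/(j:ℝ) := by positivity
    linarith
  refine ((summable_nat_add_iff 1).mpr h).congr ?_
  intro n; simp only [a]; push_cast; ring_nf

def Ctot (j : ℕ) : ℝ≥0∞ := ∑' n, aE j n

lemma Ctot_eq (hj : j ≠ 0) : Ctot j = ENNReal.ofReal (∑' n, a j n) := by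
  rw [Ctot, ENNReal.ofReal_tsum_of_nonneg (fun n => (a_pos j n).le) (summable_a hj)]
  rfl

lemma Ctot_ne_top (hj : j ≠ 0) : Ctot j ≠ ⊤ := by
  rw [Ctot_eq hj]; exact ofReal_ne_top

lemma rpow_anti {x y : ℝ≥0∞} {t : ℝ} (ht : t ≤ 0) (h : x ≤ y) : y ^ t ≤ x ^ t := by
  rw [show t = -(-t) by ring, ENNReal.rpow_neg y, ENNReal.rpow_neg x]
  exact ENNReal.inv_le_inv.mpr (ENNReal.rpow_le_rpow h (by linarith))

lemma aE_mul_rpow (j n : ℕ) {q : ℝ} : aE j n * aE j n ^ (q - 1) = aE j n ^ q := by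
  nth_rewrite 1 [← ENNReal.rpow_one (aE j n)]
  rw [← ENNReal.rpow_add _ _ (aE_pos j n).ne' (aE_ne_top j n)]
  norm_num

lemma aE_rpow (j n : ℕ) (t : ℝ) :
    aE j n ^ t = ENNReal.ofReal (((n:ℝ)+1) ^ (-(1 + 1/(j:ℝ)) * t)) := by
  rw [aE, a, ENNReal.ofReal_rpow_of_pos (by positivity), ← Real.rpow_mul (by positivity)]

lemma cast_succ_sq (N : ℕ) :
    ENNReal.ofReal (((N:ℝ)+1)^(2:ℝ)) = ((N+1:ℕ) : ℝ≥0∞)^2 := by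
  rw [show ((2:ℝ)) = ((2:ℕ):ℝ) by norm_num, Real.rpow_natCast,
    ENNReal.ofReal_pow (by positivity), show ((N:ℝ)+1) = ((N+1:ℕ):ℝ) by push_cast; ring,
    ENNReal.ofReal_natCast]

lemma I_upper (hΛ : 0 < Λ) (hj : j ≠ 0) {q : ℝ} (hq : q ∈ Ioo (0:ℝ) 1) {ε : ℝ} (hε : 0 < ε) :
    fracIntegral (mu Λ j) q ε
      ≤ (1 + Ctot j) * ((⌈Real.sqrt (2*Λ/ε)⌉₊ + 1 : ℕ) : ℝ≥0∞) ^ 2 := by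
  obtain ⟨hq0, hq1⟩ := hq
  set N := ⌈Real.sqrt (2*Λ/ε)⌉₊ with hN
  have hN1 : 2*Λ/ε ≤ ((N:ℝ)+1)^2 := by
    have h0 : Real.sqrt (2*Λ/ε) ≤ (N:ℝ) := Nat.le_ceil _
    have h1 : (0:ℝ) ≤ 2*Λ/ε := by positivity
    calc 2*Λ/ε = Real.sqrt (2*Λ/ε)^2 := (Real.sq_sqrt h1).symm
      _ ≤ ((N:ℝ)+1)^2 := by nlinarith [Real.sqrt_nonneg (2*Λ/ε)]
  have hkey : ∀ n, N ≤ n → aE j N ≤ mu Λ j (Ioo (l Λ n - ε) (l Λ n + ε)) := by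
    intro n hn
    apply le_mu_of_mem hΛ
    have h2 : l Λ N ≤ l Λ n := (l_strictMono hΛ).monotone hn
    have h3 : l Λ n - l Λ N ≤ Λ / ((N:ℝ)+1)^2 := by
      have he : l Λ N = -(Λ / ((N:ℝ)+1)^2) := by rw [l]; ring
      have h4 : l Λ n < 0 := l_neg hΛ n
      rw [he]; linarith
    have h5 : Λ / ((N:ℝ)+1)^2 < ε := by
      rw [div_lt_iff₀ (by positivity)]
      have he : ε * (2*Λ/ε) = 2*Λ := by field_simp
      nlinarith [mul_le_mul_of_nonneg_left hN1 hε.le]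
    rw [Set.mem_Ioo]; constructor <;> linarith
  rw [I_repr hΛ j q hε]
  have hsum1 : (∑' n, if n < N then (1:ℝ≥0∞) else 0) = N := by
    rw [tsum_eq_sum (s := Finset.range N)
      (by intro n hn; rw [Finset.mem_range] at hn; simp [hn])]
    rw [Finset.sum_congr rfl (fun n hn => if_pos (Finset.mem_range.mp hn))]
    simp
  have hrp : aE j N ^ (q-1) ≤ ((N+1:ℕ) : ℝ≥0∞)^2 := by
    rw [aE_rpow]
    have hj1 : (1:ℝ) ≤ (j:ℝ) := by exact_mod_cast Nat.one_le_iff_ne_zero.mpr hj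
    have hfrac : 1/(j:ℝ) ≤ 1 := by rw [div_le_one (by linarith)]; linarith
    have hexp : -(1 + 1/(j:ℝ)) * (q-1) ≤ 2 := by nlinarith
    have hmon : ((N:ℝ)+1) ^ (-(1 + 1/(j:ℝ)) * (q-1)) ≤ ((N:ℝ)+1) ^ (2:ℝ) :=
      Real.rpow_le_rpow_of_exponent_le (by linarith [Nat.cast_nonneg (α := ℝ) N]) hexp
    calc ENNReal.ofReal _ ≤ ENNReal.ofReal (((N:ℝ)+1)^(2:ℝ)) := ENNReal.ofReal_le_ofReal hmon
      _ = ((N+1:ℕ) : ℝ≥0∞)^2 := cast_succ_sq N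
  have hNle : (N : ℝ≥0∞) ≤ ((N+1:ℕ) : ℝ≥0∞)^2 := by
    rw [← Nat.cast_pow]
    exact_mod_cast Nat.cast_le.mpr (by nlinarith : N ≤ (N+1)^2)
  calc ∑' n, aE j n * (mu Λ j (Ioo (l Λ n - ε) (l Λ n + ε))) ^ (q-1)
      ≤ ∑' n, ((if n < N then 1 else 0) + aE j N ^ (q-1) * aE j n) := by
        apply ENNReal.tsum_le_tsum
        intro n
        by_cases h : n < N
        · rw [if_pos h]
          have hball : aE j n ≤ mu Λ j (Ioo (l Λ n - ε) (l Λ n + ε)) :=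
            le_mu_of_mem hΛ j (by rw [Set.mem_Ioo]; constructor <;> linarith)
          have hmono := rpow_anti (by linarith : q - 1 ≤ 0) hball
          calc aE j n * (mu Λ j (Ioo (l Λ n - ε) (l Λ n + ε))) ^ (q-1)
              ≤ aE j n * aE j n ^ (q-1) := mul_le_mul_right hmono _
            _ = aE j n ^ q := aE_mul_rpow j n
            _ ≤ 1 := ENNReal.rpow_le_one (ENNReal.ofReal_le_one.mpr (a_le_one hj n)) hq0.le
            _ ≤ _ := le_self_add
        · rw [if_neg h, zero_add, mul_comm]
          exact mul_le_mul_left (rpow_anti (by linarith) (hkey n (le_of_not_gt h))) _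
    _ = (∑' n, if n < N then (1:ℝ≥0∞) else 0) + ∑' n, aE j N ^ (q-1) * aE j n :=
        ENNReal.tsum_add
    _ = (N : ℝ≥0∞) + aE j N ^ (q-1) * Ctot j := by rw [hsum1, ENNReal.tsum_mul_left, Ctot]
    _ ≤ ((N+1:ℕ) : ℝ≥0∞)^2 + ((N+1:ℕ) : ℝ≥0∞)^2 * Ctot j :=
        add_le_add hNle (mul_le_mul_left hrp _)
    _ = (1 + Ctot j) * ((N+1:ℕ) : ℝ≥0∞)^2 := by ring


lemma rpow_neg_anti {x y t : ℝ} (hx : 0 < x) (hxy : x ≤ y) (ht : 0 ≤ t) :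
    y ^ (-t) ≤ x ^ (-t) := by
  rw [Real.rpow_neg (by linarith), Real.rpow_neg hx.le]
  exact inv_anti₀ (Real.rpow_pos_of_pos hx t) (Real.rpow_le_rpow hx.le hxy ht)

lemma I_lower (hΛ : 0 < Λ) (hj : j ≠ 0) {q : ℝ} (hq0 : 0 ≤ q) {N : ℕ} (hN : 1 ≤ N) :
    ENNReal.ofReal ((N:ℝ) ^ (1 - (1 + 1/(j:ℝ))*q))
      ≤ fracIntegral (mu Λ j) q (Λ / ((N:ℝ)+1)^3) := by
  set s : ℝ := (1 + 1/(j:ℝ))*q with hs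
  have hs0 : 0 ≤ s := by positivity
  set ε := Λ / ((N:ℝ)+1)^3 with hε
  have hε0 : 0 < ε := by positivity
  have h2eps : 2 * ε = 2*Λ/((N:ℝ)+1)^3 := by rw [hε]; ring
  rw [I_repr hΛ j q hε0]
  have hNR : (1:ℝ) ≤ (N:ℝ) := by exact_mod_cast hN
  have hiso : ∀ n, n < N → mu Λ j (Ioo (l Λ n - ε) (l Λ n + ε)) = aE j n := by
    intro n hn
    apply mu_Ioo_isolated hΛ j hε0
    intro m hm
    rw [Set.mem_Ioo]
    rintro ⟨h1, h2⟩
    rcases lt_or_gt_of_ne hm with hlt | hgt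
    · have hg := gap hΛ hlt
      have hc : ((m:ℝ)+2) ≤ ((N:ℝ)+1) := by
        have : m + 2 ≤ N + 1 := by omega
        exact_mod_cast this
      have h3 : 2*Λ/((N:ℝ)+1)^3 ≤ 2*Λ/((m:ℝ)+2)^3 :=
        div_le_div_of_nonneg_left (by linarith) (by positivity)
          (pow_le_pow_left₀ (by positivity) hc 3)
      linarith
    · have hg := gap hΛ hgt
      have hc : ((n:ℝ)+2) ≤ ((N:ℝ)+1) := by
        have : n + 2 ≤ N + 1 := by omega
        exact_mod_cast this
      have h3 : 2*Λ/((N:ℝ)+1)^3 ≤ 2*Λ/((n:ℝ)+2)^3 :=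
        div_le_div_of_nonneg_left (by linarith) (by positivity)
          (pow_le_pow_left₀ (by positivity) hc 3)
      linarith
  have hterm : ∀ n, n < N →
      ENNReal.ofReal ((N:ℝ) ^ (-s)) ≤ aE j n * (mu Λ j (Ioo (l Λ n - ε) (l Λ n + ε))) ^ (q-1) := by
    intro n hn
    rw [hiso n hn, aE_mul_rpow, aE_rpow]
    apply ENNReal.ofReal_le_ofReal
    rw [show -(1 + 1/(j:ℝ)) * q = -s by rw [hs]; ring]
    apply rpow_neg_anti (by positivity) _ hs0
    have : n + 1 ≤ N := by omega
    exact_mod_cast this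
  calc ENNReal.ofReal ((N:ℝ) ^ (1 - s))
      = ∑ n ∈ Finset.range N, ENNReal.ofReal ((N:ℝ)^(-s)) := by
        rw [Finset.sum_const, Finset.card_range, nsmul_eq_mul]
        rw [show (1 - s) = 1 + -s by ring, Real.rpow_add (by linarith) 1 (-s),
          Real.rpow_one, ENNReal.ofReal_mul (by linarith), ENNReal.ofReal_natCast]
    _ ≤ ∑ n ∈ Finset.range N, aE j n * (mu Λ j (Ioo (l Λ n - ε) (l Λ n + ε))) ^ (q-1) :=
        Finset.sum_le_sum (fun n hn => hterm n (Finset.mem_range.mp hn))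
    _ ≤ ∑' n, aE j n * (mu Λ j (Ioo (l Λ n - ε) (l Λ n + ε))) ^ (q-1) :=
        ENNReal.sum_le_tsum _


lemma tendsto_ratio (L c1 c2 : ℝ) (hc2 : c2 ≠ 0) :
    Tendsto (fun N : ℕ => c1 * Real.log N / (c2 * (3 * Real.log ((N:ℝ)+1) - L))) atTop
      (𝓝 (c1 / (c2 * 3))) := by
  have hlog : Tendsto (fun N : ℕ => Real.log (N:ℝ)) atTop atTop :=
    Real.tendsto_log_atTop.comp tendsto_natCast_atTop_atTop
  have h2 : Tendsto (fun N : ℕ => 1 / Real.log (N:ℝ)) atTop (𝓝 0) := by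
    simp only [one_div]; exact (hlog.inv_tendsto_atTop : Tendsto (fun N : ℕ => (Real.log (N:ℝ))⁻¹) atTop (𝓝 0))
  have hupper : Tendsto (fun N : ℕ => 1 + Real.log 2 * (1 / Real.log (N:ℝ))) atTop (𝓝 1) := by
    have h0 := Tendsto.add (tendsto_const_nhds : Tendsto (fun _ : ℕ => (1:ℝ)) atTop (𝓝 1))
      (h2.const_mul (Real.log 2))
    simpa using h0
  have h1 : Tendsto (fun N : ℕ => Real.log ((N:ℝ)+1) / Real.log (N:ℝ)) atTop (𝓝 1) := by
    apply tendsto_of_tendsto_of_tendsto_of_le_of_le' (g := fun _ : ℕ => (1:ℝ))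
      (h := fun N : ℕ => 1 + Real.log 2 * (1 / Real.log (N:ℝ)))
      tendsto_const_nhds hupper
    · filter_upwards [eventually_ge_atTop 2] with N hN2
      have hN2R : (2:ℝ) ≤ (N:ℝ) := by exact_mod_cast hN2
      have hlp : 0 < Real.log (N:ℝ) := Real.log_pos (by linarith)
      rw [le_div_iff₀ hlp, one_mul]
      exact Real.log_le_log (by linarith) (by linarith)
    · filter_upwards [eventually_ge_atTop 2] with N hN2
      have hN2R : (2:ℝ) ≤ (N:ℝ) := by exact_mod_cast hN2
      have hlp : 0 < Real.log (N:ℝ) := Real.log_pos (by linarith)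
      rw [div_le_iff₀ hlp]
      have he : (1 + Real.log 2 * (1/Real.log (N:ℝ))) * Real.log (N:ℝ)
          = Real.log (N:ℝ) + Real.log 2 := by field_simp
      rw [he]
      have hb : ((N:ℝ)+1) ≤ 2*(N:ℝ) := by linarith
      calc Real.log ((N:ℝ)+1) ≤ Real.log (2*(N:ℝ)) := Real.log_le_log (by linarith) hb
        _ = Real.log 2 + Real.log (N:ℝ) := Real.log_mul two_ne_zero (by linarith)
        _ = Real.log (N:ℝ) + Real.log 2 := by ring
  have hv : Tendsto (fun N : ℕ =>
      c2 * (3 * (Real.log ((N:ℝ)+1) / Real.log (N:ℝ)) - L * (1 / Real.log (N:ℝ))))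
      atTop (𝓝 (c2 * 3)) := by
    have := ((h1.const_mul 3).sub (h2.const_mul L)).const_mul c2
    simpa using this
  have hfin : Tendsto (fun N : ℕ => c1 / (c2 * (3 * (Real.log ((N:ℝ)+1) / Real.log (N:ℝ))
      - L * (1 / Real.log (N:ℝ))))) atTop (𝓝 (c1 / (c2 * 3))) :=
    tendsto_const_nhds.div hv (by simpa using hc2)
  refine hfin.congr fun N => ?_
  have key : c2 * (3 * (Real.log ((N:ℝ)+1) / Real.log (N:ℝ)) - L * (1 / Real.log (N:ℝ)))
      = (c2 * (3 * Real.log ((N:ℝ)+1) - L)) / Real.log (N:ℝ) := by ring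
  rw [key, div_div_eq_mul_div, mul_comm c1 (Real.log (N:ℝ))]

end HydroAux

set_option maxHeartbeats 1000000 in
open HydroAux in
theorem hydrogen_model_upper_dimension_lower_bound
    (Λ : ℝ) (hΛ : 0 < Λ) (j : ℕ) (q : ℝ) (hq : q ∈ Ioo (0 : ℝ) 1)
    (hj : q / (1 - q) < (j : ℝ))
    (μj : Measure ℝ)
    (hμ : μj = Measure.sum fun n : ℕ =>
      ENNReal.ofReal (((n + 1 : ℕ) : ℝ) ^ (-(1 + 1 / (j : ℝ)))) •
        Measure.dirac (lam Λ (n + 1))) :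
    (1 - (1 + 1 / (j : ℝ)) * q) / (3 * (1 - q)) ≤ Dupper μj q := by
  obtain ⟨hq0, hq1⟩ := hq
  have h1q : (0:ℝ) < 1 - q := by linarith
  have hjR : (0:ℝ) < (j:ℝ) := lt_trans (div_pos hq0 h1q) hj
  have hj0 : j ≠ 0 := by
    intro h; rw [h] at hjR; norm_num at hjR
  -- rewrite the measure
  have hμ' : μj = mu Λ j := by
    rw [hμ, mu]
    congr 1
    funext n
    have h1 : ((n + 1 : ℕ) : ℝ) = (n:ℝ)+1 := by push_cast; ring
    have h2 : lam Λ (n+1) = l Λ n := by rw [lam, l, h1]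
    rw [aE, a, h1, h2]
  rw [hμ']
  set s : ℝ := (1 + 1/(j:ℝ)) * q with hs
  have hs0 : 0 ≤ s := by positivity
  have hs1 : s < 1 := by
    have h := (div_lt_iff₀ h1q).mp hj
    have h2 : q / (j:ℝ) < 1 - q := by rw [div_lt_iff₀ hjR]; nlinarith
    have e : s = q + q/(j:ℝ) := by rw [hs]; ring
    rw [e]; linarith
  -- the target
  set T : ℝ := (1 - (1 + 1/(j:ℝ)) * q) / (3 * (1 - q)) with hT
  -- finiteness of the integral
  have hfin : ∀ ε : ℝ, 0 < ε → fracIntegral (mu Λ j) q ε ≠ ⊤ := by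
    intro ε hε
    refine ne_top_of_le_ne_top ?_ (I_upper hΛ hj0 ⟨hq0, hq1⟩ hε)
    exact ENNReal.mul_ne_top (ENNReal.add_ne_top.mpr ⟨ENNReal.one_ne_top, Ctot_ne_top hj0⟩)
      (ENNReal.pow_ne_top (ENNReal.natCast_ne_top _))
  set K : ℝ := 1 + (Ctot j).toReal with hK
  have hK1 : (1:ℝ) ≤ K := by
    rw [hK]; have := ENNReal.toReal_nonneg (a := Ctot j); linarith
  have hIub : ∀ ε : ℝ, 0 < ε → (fracIntegral (mu Λ j) q ε).toReal
      ≤ K * ((⌈Real.sqrt (2*Λ/ε)⌉₊ + 1 : ℕ) : ℝ)^2 := by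
    intro ε hε
    have h := ENNReal.toReal_mono (ENNReal.mul_ne_top
      (ENNReal.add_ne_top.mpr ⟨ENNReal.one_ne_top, Ctot_ne_top hj0⟩)
      (ENNReal.pow_ne_top (ENNReal.natCast_ne_top _))) (I_upper hΛ hj0 ⟨hq0, hq1⟩ hε)
    rwa [ENNReal.toReal_mul, ENNReal.toReal_pow, ENNReal.toReal_natCast,
      ENNReal.toReal_add ENNReal.one_ne_top (Ctot_ne_top hj0), ENNReal.toReal_one] at h
  set u : ℝ → ℝ := fun ε =>
    Real.log (fracIntegral (mu Λ j) q ε).toReal / ((q - 1) * Real.log ε) with hu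
  show T ≤ limsup u (𝓝[>] (0:ℝ))
  -- boundedness
  set A : ℝ := Real.log K + 2 * Real.log (3 * Real.sqrt (2*Λ)) with hA
  have hbound : IsBoundedUnder (· ≤ ·) (𝓝[>] (0:ℝ)) u := by
    apply isBoundedUnder_of_eventually_le (a := (|A| + 1) / (1 - q))
    have hmem : Ioo (0:ℝ) (min (2*Λ) (Real.exp (-1))) ∈ 𝓝[>] (0:ℝ) :=
      Ioo_mem_nhdsGT_of_mem ⟨le_refl 0, lt_min (by linarith) (Real.exp_pos _)⟩
    filter_upwards [hmem] with ε hmemε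
    obtain ⟨hε, hεlt⟩ := hmemε
    have hε2Λ : ε ≤ 2*Λ := le_of_lt (lt_of_lt_of_le hεlt (min_le_left _ _))
    have hεexp : ε ≤ Real.exp (-1) := le_of_lt (lt_of_lt_of_le hεlt (min_le_right _ _))
    have hlogε : Real.log ε ≤ -1 := (Real.log_le_iff_le_exp hε).mpr hεexp
    have hden : 0 < (q - 1) * Real.log ε := mul_pos_of_neg_of_neg (by linarith) (by linarith)
    set M : ℕ := ⌈Real.sqrt (2*Λ/ε)⌉₊ + 1 with hM
    have hM1 : (1:ℝ) ≤ (M:ℝ) := by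
      rw [hM]; push_cast; linarith [Nat.cast_nonneg (α := ℝ) ⌈Real.sqrt (2*Λ/ε)⌉₊]
    have hx0 : (0:ℝ) ≤ Real.sqrt (2*Λ/ε) := Real.sqrt_nonneg _
    have hx1 : 1 ≤ Real.sqrt (2*Λ/ε) := by
      rw [show (1:ℝ) = Real.sqrt 1 from (Real.sqrt_one).symm]
      exact Real.sqrt_le_sqrt ((one_le_div hε).mpr hε2Λ)
    have hMle : (M:ℝ) ≤ 3 * Real.sqrt (2*Λ/ε) := by
      rw [hM]; push_cast
      have := Nat.ceil_lt_add_one hx0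
      linarith
    have hsq : Real.sqrt (2*Λ/ε) = Real.sqrt (2*Λ) / Real.sqrt ε :=
      Real.sqrt_div (by linarith) ε
    have hsqε : 0 < Real.sqrt ε := Real.sqrt_pos.mpr hε
    have hsq2Λ : 0 < Real.sqrt (2*Λ) := Real.sqrt_pos.mpr (by linarith)
    have hlogM : Real.log (M:ℝ) ≤ Real.log (3 * Real.sqrt (2*Λ)) - Real.log ε / 2 := by
      calc Real.log (M:ℝ) ≤ Real.log (3 * Real.sqrt (2*Λ/ε)) :=
            Real.log_le_log (by linarith) hMle
        _ = Real.log (3 * Real.sqrt (2*Λ) / Real.sqrt ε) := by rw [hsq, mul_div_assoc]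
        _ = Real.log (3 * Real.sqrt (2*Λ)) - Real.log (Real.sqrt ε) :=
            Real.log_div (by positivity) (by positivity)
        _ = Real.log (3 * Real.sqrt (2*Λ)) - Real.log ε / 2 := by
            rw [Real.log_sqrt hε.le]
    have hnum : Real.log (fracIntegral (mu Λ j) q ε).toReal ≤ (|A| + 1) * (-Real.log ε) := by
      have hKM : (1:ℝ) ≤ K * (M:ℝ)^2 := by nlinarith
      have h1 : Real.log (fracIntegral (mu Λ j) q ε).toReal ≤ Real.log (K * (M:ℝ)^2) := by
        rcases le_or_gt (fracIntegral (mu Λ j) q ε).toReal 1 with h | h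
        · exact le_trans (Real.log_nonpos ENNReal.toReal_nonneg h) (Real.log_nonneg hKM)
        · exact Real.log_le_log (by linarith) (hIub ε hε)
      have h2 : Real.log (K * (M:ℝ)^2) = Real.log K + 2 * Real.log (M:ℝ) := by
        rw [Real.log_mul (by linarith) (by positivity), Real.log_pow]
        push_cast; ring
      have h3 : Real.log K + 2 * Real.log (M:ℝ) ≤ A + (-Real.log ε) := by
        rw [hA]; linarith
      have h4 : A + (-Real.log ε) ≤ (|A| + 1) * (-Real.log ε) := by
        nlinarith [le_abs_self A, abs_nonneg A]
      linarith
    rw [hu]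
    rw [div_le_iff₀ hden]
    calc Real.log (fracIntegral (mu Λ j) q ε).toReal ≤ (|A| + 1) * (-Real.log ε) := hnum
      _ = (|A| + 1) / (1 - q) * ((q - 1) * Real.log ε) := by field_simp; ring
  -- the subsequence
  set φ : ℕ → ℝ := fun N => Λ / ((N:ℝ)+1)^3 with hφdef
  have hφpos : ∀ N, 0 < φ N := fun N => by rw [hφdef]; positivity
  have hφ : Tendsto φ atTop (𝓝[>] (0:ℝ)) := by
    rw [tendsto_nhdsWithin_iff]
    constructor
    · apply Tendsto.div_atTop (tendsto_const_nhds (x := Λ))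
      exact (tendsto_pow_atTop (three_ne_zero)).comp
        (tendsto_atTop_add_const_right atTop 1 tendsto_natCast_atTop_atTop)
    · exact Eventually.of_forall fun N => hφpos N
  have hw : Tendsto (fun N : ℕ => (1-s) * Real.log N /
      ((1-q) * (3 * Real.log ((N:ℝ)+1) - Real.log Λ))) atTop (𝓝 ((1-s)/((1-q)*3))) :=
    tendsto_ratio (Real.log Λ) (1-s) (1-q) (by linarith)
  have hTeq : (1-s)/((1-q)*3) = T := by rw [hT, hs, mul_comm (3:ℝ) (1-q)]
  have hlogatTop : Tendsto (fun N : ℕ => 3 * Real.log ((N:ℝ)+1)) atTop atTop := by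
    apply Tendsto.const_mul_atTop (by norm_num : (0:ℝ) < 3)
    exact Real.tendsto_log_atTop.comp
      (tendsto_atTop_add_const_right atTop 1 tendsto_natCast_atTop_atTop)
  have hlb : ∀ᶠ N : ℕ in atTop, (1-s) * Real.log (N:ℝ) /
      ((1-q) * (3 * Real.log ((N:ℝ)+1) - Real.log Λ)) ≤ u (φ N) := by
    filter_upwards [eventually_ge_atTop 1, hlogatTop.eventually_gt_atTop (Real.log Λ)]
      with N hN1 hNlog
    have hN1R : (1:ℝ) ≤ (N:ℝ) := by exact_mod_cast hN1
    have hε0 : 0 < φ N := hφpos N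
    have hIlb := I_lower (j := j) hΛ hj0 hq0.le hN1
    have hIne : fracIntegral (mu Λ j) q (φ N) ≠ ⊤ := hfin _ hε0
    have hIR : (N:ℝ)^(1-s) ≤ (fracIntegral (mu Λ j) q (φ N)).toReal := by
      have := ENNReal.toReal_mono hIne hIlb
      rwa [ENNReal.toReal_ofReal (by positivity)] at this
    have hN1rp : (1:ℝ) ≤ (N:ℝ)^(1-s) :=
      calc (1:ℝ) = (N:ℝ)^(0:ℝ) := (Real.rpow_zero _).symm
        _ ≤ (N:ℝ)^(1-s) := Real.rpow_le_rpow_of_exponent_le hN1R (by linarith)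
    have hnum : (1-s) * Real.log N ≤ Real.log (fracIntegral (mu Λ j) q (φ N)).toReal := by
      calc (1-s) * Real.log N = Real.log ((N:ℝ)^(1-s)) := (Real.log_rpow (by linarith) _).symm
        _ ≤ _ := Real.log_le_log (by linarith) hIR
    have hlogφ : Real.log (φ N) = Real.log Λ - 3 * Real.log ((N:ℝ)+1) := by
      have hφN : φ N = Λ / ((N:ℝ)+1)^3 := rfl
      rw [hφN, Real.log_div (ne_of_gt hΛ) (by positivity), Real.log_pow]
      push_cast; ring
    have hden : (q-1) * Real.log (φ N) = (1-q) * (3 * Real.log ((N:ℝ)+1) - Real.log Λ) := by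
      rw [hlogφ]; ring
    have hdenpos : 0 < (1-q) * (3 * Real.log ((N:ℝ)+1) - Real.log Λ) :=
      mul_pos h1q (by linarith)
    rw [hu]
    show _ ≤ Real.log (fracIntegral (mu Λ j) q (φ N)).toReal / ((q-1) * Real.log (φ N))
    rw [hden]
    exact (div_le_div_iff_of_pos_right hdenpos).mpr hnum
  -- conclusion
  by_contra hcon
  push_neg at hcon
  obtain ⟨c, hc1, hc2⟩ := exists_between hcon
  have hev : ∀ᶠ N in atTop, c ≤ u (φ N) := by
    have h1 : ∀ᶠ N : ℕ in atTop, c ≤ (1-s) * Real.log (N:ℝ) /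
        ((1-q) * (3 * Real.log ((N:ℝ)+1) - Real.log Λ)) := by
      apply Tendsto.eventually_const_le (v := (1-s)/((1-q)*3)) _ hw
      rw [hTeq]; exact hc2
    filter_upwards [h1, hlb] with N h1 h2 using le_trans h1 h2
  have hfreq : ∃ᶠ ε in 𝓝[>] (0:ℝ), c ≤ u ε := hφ.frequently hev.frequently
  have : c ≤ limsup u (𝓝[>] (0:ℝ)) := le_limsup_of_frequently_le hfreq hbound
  exact absurd this (not_le.mpr hc1)
end
end

section
/- Fix q ∈ (0,1) and an integer j > q/(1−q). For every ψ ∈ 𝓗 and every σ > 0, there exists φ ∈ 𝓗 with ‖ψ − φ‖² < 2σ² and D⁺_{μ_φ}(q) ≥ (1 − (1 + 1/j)q)/(3(1−q)). In particular, the set {ψ ∈ 𝓗 : D⁺_{μ_ψ}(q) ≥ (1 − (1 + 1/j)q)/(3(1−q))} is dense in 𝓗. -/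
open MeasureTheory Filter Set Topology ENNReal

noncomputable section

namespace HydroAux

instance : Countable HIndex := by
  have h : Function.Injective (fun i : HIndex => (i.n, i.l, i.m)) := by
    rintro ⟨n, l, m, _, _, _⟩ ⟨n', l', m', _, _, _⟩ h
    simp only [Prod.mk.injEq] at h
    obtain ⟨h1, h2, h3⟩ := h
    subst h1; subst h2; subst h3; rfl
  exact h.countable

/-- an `HIndex` with given `n ≥ 1`, `l = m = 0`. -/
def idx (n : ℕ) (hn : 1 ≤ n) : HIndex :=
  ⟨n, 0, 0, hn, hn, ⟨by simp, by simp⟩⟩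

lemma tsum_fiber (g : HIndex → ℝ≥0∞) (f : ℕ → ℝ≥0∞) :
    ∑' i : HIndex, g i * f i.n
      = ∑' n : ℕ, (∑' i : {i : HIndex // i.n = n}, g i.1) * f n := by
  rw [← Equiv.tsum_eq (Equiv.sigmaFiberEquiv (fun i : HIndex => i.n))
    (fun i => g i * f i.n)]
  rw [ENNReal.tsum_sigma']
  congr 1
  ext n
  rw [← ENNReal.tsum_mul_right]
  congr 1
  ext i
  simp only [Equiv.sigmaFiberEquiv, Equiv.coe_fn_mk]
  rw [i.2]

lemma specMeasure_apply (Λ : ℝ) (φ : Hspace) {s : Set ℝ} (hs : MeasurableSet s) :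
    specMeasure Λ φ s
      = ∑' i : HIndex, ENNReal.ofReal (‖φ i‖ ^ 2) * s.indicator 1 (lam Λ i.n) := by
  rw [specMeasure, Measure.sum_apply _ hs]
  congr 1
  ext i
  rw [Measure.smul_apply, Measure.dirac_apply' _ hs, smul_eq_mul]

lemma lam_mono {Λ : ℝ} (hΛ : 0 < Λ) {m n : ℕ} (hm : 1 ≤ m) (h : m < n) :
    lam Λ m < lam Λ n := by
  have hm' : (0:ℝ) < (m:ℝ)^2 := by positivity
  have hn' : ((m:ℝ))^2 < (n:ℝ)^2 := by
    have : (m:ℝ) < n := by exact_mod_cast h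
    have h1 : (1:ℝ) ≤ (m:ℝ) := by exact_mod_cast hm
    nlinarith
  have := div_lt_div_of_pos_left hΛ hm' hn'
  simp only [lam, neg_div]
  linarith

lemma lam_sub {Λ : ℝ} {m n : ℕ} (hm : 1 ≤ m) (hn : 1 ≤ n) :
    lam Λ n - lam Λ m = Λ * (1/(m:ℝ)^2 - 1/(n:ℝ)^2) := by
  have hm' : ((m:ℝ)) ≠ 0 := by positivity
  have hn' : ((n:ℝ)) ≠ 0 := by positivity
  unfold lam
  field_simp [lam]
  ring

lemma gap_ge {k N : ℕ} (hk : 1 ≤ k) (hkN : k ≤ N) :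
    1/(2*(N:ℝ)^3) ≤ 1/(k:ℝ)^2 - 1/((k:ℝ)+1)^2 := by
  have hk' : (1:ℝ) ≤ (k:ℝ) := by exact_mod_cast hk
  have hN' : (k:ℝ) ≤ (N:ℝ) := by exact_mod_cast hkN
  have hN1 : (1:ℝ) ≤ (N:ℝ) := le_trans hk' hN'
  have h1 : (0:ℝ) < (k:ℝ) := by linarith
  have h2 : (0:ℝ) < (k:ℝ)+1 := by linarith
  have expand : 1/(k:ℝ)^2 - 1/((k:ℝ)+1)^2 = (2*(k:ℝ)+1)/((k:ℝ)^2*((k:ℝ)+1)^2) := by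
    field_simp
    ring
  rw [expand, div_le_div_iff₀ (by positivity) (by positivity)]
  have hk3 : (k:ℝ)^3 ≤ (N:ℝ)^3 := pow_le_pow_left₀ (by positivity) hN' 3
  have h4 : ((k:ℝ)+1)^2 ≤ 4*(k:ℝ)^2 := by nlinarith [sq_nonneg ((k:ℝ) - 1)]
  have h5 : (k:ℝ)^4 ≤ (k:ℝ)*(N:ℝ)^3 := by nlinarith
  have h6 : (k:ℝ)^2*((k:ℝ)+1)^2 ≤ 4*(k:ℝ)^4 := by nlinarith [sq_nonneg (k:ℝ)]
  nlinarith

lemma separation {Λ : ℝ} (hΛ : 0 < Λ) {m n N : ℕ} (hm : 1 ≤ m) (hn : 1 ≤ n)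
    (hnN : n ≤ N) (hmn : m ≠ n) :
    Λ/(2*(N:ℝ)^3) ≤ |lam Λ m - lam Λ n| := by
  have hN : 1 ≤ N := le_trans hn hnN
  rcases lt_or_gt_of_ne hmn with h | h
  · -- m < n ≤ N, so m ≤ N; |lam m - lam n| = lam n - lam m = Λ(1/m² - 1/n²)
    have h1 : lam Λ m < lam Λ n := lam_mono hΛ hm h
    rw [abs_sub_comm, abs_of_pos (by linarith), lam_sub hm hn]
    have hmN : m ≤ N := le_trans (le_of_lt h) hnN
    have key : 1/(2*(N:ℝ)^3) ≤ 1/(m:ℝ)^2 - 1/(n:ℝ)^2 := by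
      have h2 : 1/((n:ℝ))^2 ≤ 1/((m:ℝ)+1)^2 := by
        have hmn' : (m:ℝ)+1 ≤ (n:ℝ) := by
          have : m + 1 ≤ n := h
          exact_mod_cast this
        apply one_div_le_one_div_of_le (by positivity)
        nlinarith
      have := gap_ge hm hmN
      linarith
    calc Λ/(2*(N:ℝ)^3) = Λ * (1/(2*(N:ℝ)^3)) := by ring
    _ ≤ Λ * (1/(m:ℝ)^2 - 1/(n:ℝ)^2) := by
        apply mul_le_mul_of_nonneg_left key (le_of_lt hΛ)
  · -- n < m
    have h1 : lam Λ n < lam Λ m := lam_mono hΛ hn h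
    rw [abs_of_pos (by linarith), lam_sub hn hm]
    have key : 1/(2*(N:ℝ)^3) ≤ 1/(n:ℝ)^2 - 1/(m:ℝ)^2 := by
      have h2 : 1/((m:ℝ))^2 ≤ 1/((n:ℝ)+1)^2 := by
        have hmn' : (n:ℝ)+1 ≤ (m:ℝ) := by
          have : n + 1 ≤ m := h
          exact_mod_cast this
        apply one_div_le_one_div_of_le (by positivity)
        nlinarith
      have := gap_ge hn hnN
      linarith
    calc Λ/(2*(N:ℝ)^3) = Λ * (1/(2*(N:ℝ)^3)) := by ring
    _ ≤ Λ * (1/(n:ℝ)^2 - 1/(m:ℝ)^2) := by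
        apply mul_le_mul_of_nonneg_left key (le_of_lt hΛ)

lemma mem_Ioo_iff_abs {x y ε : ℝ} : y ∈ Ioo (x - ε) (x + ε) ↔ |y - x| < ε := by
  rw [mem_Ioo, abs_sub_lt_iff]
  constructor <;> intro h <;> constructor <;> linarith [h.1, h.2]

lemma rpow_toReal_two (x : ℝ) : x ^ (2 : ℝ≥0∞).toReal = x ^ 2 := by
  rw [ENNReal.toReal_ofNat]
  exact_mod_cast Real.rpow_natCast x 2

lemma exists_phi (ψ : Hspace) (c γ : ℝ) (hc : 0 < c) (hγ : 1 < γ) :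
    ∃ φ : Hspace,
      (∀ i : HIndex, i.l = 0 → i.m = 0 → c * (i.n : ℝ) ^ (-γ) ≤ ‖φ i‖ ^ 2) ∧
      ‖ψ - φ‖ ^ 2 ≤ 4 * c * ∑' n : ℕ, (n : ℝ) ^ (-γ) := by
  classical
  set σn : ℕ → ℝ := fun n => Real.sqrt (c * (n : ℝ) ^ (-γ)) with hσn
  have hσn_nonneg : ∀ n, 0 ≤ σn n := fun n => Real.sqrt_nonneg _
  have hσn_sq : ∀ n, σn n ^ 2 = c * (n : ℝ) ^ (-γ) := by
    intro n
    exact Real.sq_sqrt (by positivity)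
  set d : (i : HIndex) → ℂ :=
    fun i => if i.l = 0 ∧ i.m = 0 ∧ ‖ψ i‖ < σn i.n then ((σn i.n : ℝ) : ℂ) - ψ i else 0
    with hd
  set bnd : HIndex → ℝ := fun i => if i.l = 0 ∧ i.m = 0 then (4 * c) * (i.n : ℝ) ^ (-γ) else 0
    with hbnd
  have hbnd_nonneg : ∀ i, 0 ≤ bnd i := by
    intro i
    simp only [hbnd]
    split
    · positivity
    · exact le_refl 0
  have hd_le : ∀ i, ‖d i‖ ^ 2 ≤ bnd i := by
    intro i
    simp only [hd, hbnd]
    split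
    · rename_i h
      rw [if_pos ⟨h.1, h.2.1⟩]
      have h1 : ‖((σn i.n : ℝ) : ℂ) - ψ i‖ ≤ σn i.n + ‖ψ i‖ := by
        calc ‖((σn i.n : ℝ) : ℂ) - ψ i‖ ≤ ‖((σn i.n : ℝ) : ℂ)‖ + ‖ψ i‖ := norm_sub_le _ _
        _ = σn i.n + ‖ψ i‖ := by
              rw [Complex.norm_real, Real.norm_eq_abs, abs_of_nonneg (hσn_nonneg _)]
      have h2 : ‖((σn i.n : ℝ) : ℂ) - ψ i‖ ≤ 2 * σn i.n := by
        have := h.2.2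
        linarith
      have h3 : ‖((σn i.n : ℝ) : ℂ) - ψ i‖ ^ 2 ≤ (2 * σn i.n) ^ 2 :=
        pow_le_pow_left₀ (norm_nonneg _) h2 2
      calc ‖((σn i.n : ℝ) : ℂ) - ψ i‖ ^ 2 ≤ (2 * σn i.n) ^ 2 := h3
      _ = 4 * (σn i.n ^ 2) := by ring
      _ = 4 * (c * (i.n : ℝ) ^ (-γ)) := by rw [hσn_sq]
      _ = 4 * c * (i.n : ℝ) ^ (-γ) := by ring
    · rename_i h
      simp only [norm_zero]
      split
      · have : (0:ℝ) ≤ 4 * c * (i.n : ℝ) ^ (-γ) := by positivity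
        simpa using this
      · norm_num
  -- summability of the bound
  set e : ℕ → HIndex := fun k => idx (k + 1) (Nat.succ_le_succ (Nat.zero_le k)) with he
  have he_inj : Function.Injective e := by
    intro a b h
    have : a + 1 = b + 1 := congrArg HIndex.n h
    omega
  have hsupp : ∀ i ∉ Set.range e, bnd i = 0 := by
    intro i hi
    simp only [hbnd]
    rw [if_neg]
    intro h
    apply hi
    obtain ⟨h1, h2⟩ := h
    refine ⟨i.n - 1, ?_⟩
    cases i with
    | mk n l m hn' hl' hm' =>
      simp only at h1 h2
      subst h1
      subst h2
      simp only [he, idx, HIndex.mk.injEq, and_true, true_and]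
      omega
  have hsum0 : Summable (fun n : ℕ => (n : ℝ) ^ (-γ)) :=
    Real.summable_nat_rpow.2 (by linarith)
  have hsum1 : Summable (fun k : ℕ => ((k + 1 : ℕ) : ℝ) ^ (-γ)) :=
    (summable_nat_add_iff 1).2 hsum0
  have hsum_bnd : Summable bnd := by
    rw [← Function.Injective.summable_iff he_inj hsupp]
    have : (bnd ∘ e) = fun k : ℕ => (4 * c) * ((k + 1 : ℕ) : ℝ) ^ (-γ) := by
      funext k
      simp only [Function.comp, hbnd, he, idx, if_pos]
      rfl
    rw [this]
    exact hsum1.mul_left _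
  have hsum_d : Summable (fun i => ‖d i‖ ^ 2) :=
    Summable.of_nonneg_of_le (fun i => sq_nonneg _) hd_le hsum_bnd
  have hd2 : Memℓp d 2 := by
    apply memℓp_gen
    have : (fun i => ‖d i‖ ^ (2 : ℝ≥0∞).toReal) = fun i => ‖d i‖ ^ 2 := by
      funext i
      exact rpow_toReal_two _
    rw [this]
    exact hsum_d
  set D : Hspace := ⟨d, hd2⟩ with hD
  have hDcoe : ∀ i, (D : ∀ i : HIndex, ℂ) i = d i := fun i => rfl
  refine ⟨ψ + D, ?_, ?_⟩
  · intro i hl hm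
    have hφi : (↑(ψ + D) : ∀ i : HIndex, ℂ) i = ψ i + d i := by
      rw [lp.coeFn_add]
      rfl
    by_cases hcase : ‖ψ i‖ < σn i.n
    · have : d i = ((σn i.n : ℝ) : ℂ) - ψ i := by
        simp only [hd]
        rw [if_pos ⟨hl, hm, hcase⟩]
      rw [hφi, this]
      have : ψ i + (((σn i.n : ℝ) : ℂ) - ψ i) = ((σn i.n : ℝ) : ℂ) := by ring
      rw [this, Complex.norm_real, Real.norm_eq_abs, abs_of_nonneg (hσn_nonneg _), hσn_sq]
    · have : d i = 0 := by
        simp only [hd]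
        rw [if_neg]
        intro h
        exact hcase h.2.2
      rw [hφi, this, add_zero]
      have h1 : σn i.n ≤ ‖ψ i‖ := le_of_not_gt hcase
      have := pow_le_pow_left₀ (hσn_nonneg i.n) h1 2
      rw [hσn_sq] at this
      exact this
  · have h1 : ψ - (ψ + D) = -D := by abel
    rw [h1, norm_neg]
    have h2 : ‖D‖ ^ 2 = ∑' i, ‖d i‖ ^ 2 := by
      have := lp.norm_rpow_eq_tsum (p := 2) (by norm_num) D
      rw [rpow_toReal_two] at this
      rw [this]
      apply tsum_congr
      intro i
      rw [hDcoe, rpow_toReal_two]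
    rw [h2]
    have h3 : ∑' i, ‖d i‖ ^ 2 ≤ ∑' i, bnd i :=
      Summable.tsum_le_tsum hd_le hsum_d hsum_bnd
    have hsupp' : Function.support bnd ⊆ Set.range e := by
      intro i hi
      by_contra hmem
      exact hi (hsupp i hmem)
    have h4 : ∑' i, bnd i = ∑' k : ℕ, (4 * c) * ((k + 1 : ℕ) : ℝ) ^ (-γ) := by
      rw [← Function.Injective.tsum_eq he_inj hsupp']
      apply tsum_congr
      intro k
      simp [hbnd, he, idx]
    have h5 : ∑' k : ℕ, (4 * c) * ((k + 1 : ℕ) : ℝ) ^ (-γ)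
        = (4 * c) * ∑' k : ℕ, ((k + 1 : ℕ) : ℝ) ^ (-γ) := tsum_mul_left
    have h6 : ∑' k : ℕ, ((k + 1 : ℕ) : ℝ) ^ (-γ) = ∑' n : ℕ, (n : ℝ) ^ (-γ) := by
      have h7 := Summable.tsum_eq_zero_add hsum0
      have h8 : ((0 : ℕ) : ℝ) ^ (-γ) = 0 := by
        rw [Nat.cast_zero]
        exact Real.zero_rpow (by linarith)
      rw [h7, h8, zero_add]
    calc ∑' i, ‖d i‖ ^ 2 ≤ ∑' i, bnd i := h3
    _ = (4 * c) * ∑' n : ℕ, (n : ℝ) ^ (-γ) := by rw [h4, h5, h6]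
    _ = 4 * c * ∑' n : ℕ, (n : ℝ) ^ (-γ) := by ring

set_option maxHeartbeats 1000000 in
lemma dim_lower (Λ q γ c : ℝ) (hΛ : 0 < Λ) (hq0 : 0 < q) (hq1 : q < 1)
    (hγ1 : 1 < γ) (hγq : γ * q < 1) (hc : 0 < c) (φ : Hspace)
    (hlow : ∀ i : HIndex, i.l = 0 → i.m = 0 → c * (i.n : ℝ) ^ (-γ) ≤ ‖φ i‖ ^ 2) :
    (1 - γ * q) / (3 * (1 - q)) ≤ Dupper (specMeasure Λ φ) q := by
  classical
  set μ := specMeasure Λ φ with hμdef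
  set co : HIndex → ℝ≥0∞ := fun i => ENNReal.ofReal (‖φ i‖ ^ 2) with hco
  set w : ℕ → ℝ≥0∞ := fun n => ∑' i : {i : HIndex // i.n = n}, co i.1 with hw
  -- measure formula
  have hμ : ∀ s : Set ℝ, MeasurableSet s →
      μ s = ∑' n : ℕ, w n * s.indicator 1 (lam Λ n) := by
    intro s hs
    rw [hμdef, specMeasure_apply Λ φ hs]
    exact tsum_fiber co (fun n => s.indicator 1 (lam Λ n))
  -- weight facts
  have hwlow : ∀ n : ℕ, ∀ hn : 1 ≤ n, ENNReal.ofReal (c * (n : ℝ) ^ (-γ)) ≤ w n := by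
    intro n hn
    have h0 := hlow (idx n hn) rfl rfl
    have h1 : ENNReal.ofReal (c * (n : ℝ) ^ (-γ)) ≤ co (idx n hn) :=
      ENNReal.ofReal_le_ofReal h0
    exact le_trans h1 (ENNReal.le_tsum (⟨idx n hn, rfl⟩ : {i : HIndex // i.n = n}))
  have hwpos : ∀ n : ℕ, 1 ≤ n → 0 < w n := by
    intro n hn
    refine lt_of_lt_of_le ?_ (hwlow n hn)
    rw [ENNReal.ofReal_pos]
    have : (0:ℝ) < (n:ℝ) := by exact_mod_cast hn
    positivity
  have hw0 : w 0 = 0 := by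
    have he : IsEmpty {i : HIndex // i.n = 0} := by
      refine ⟨fun i => ?_⟩
      have h1 := i.1.hn
      have h2 := i.2
      omega
    rw [hw]
    exact tsum_empty
  set T' : ℝ := ∑' i : HIndex, ‖φ i‖ ^ 2 with hT'
  have hsummable : Summable (fun i : HIndex => ‖φ i‖ ^ 2) := by
    have h1 := (lp.memℓp φ).summable (by norm_num : 0 < (2 : ℝ≥0∞).toReal)
    have h2 : (fun i : HIndex => ‖φ i‖ ^ (2 : ℝ≥0∞).toReal)
        = fun i : HIndex => ‖φ i‖ ^ 2 := by
      funext i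
      exact rpow_toReal_two _
    rwa [h2] at h1
  have hco_sum : ∑' i : HIndex, co i = ENNReal.ofReal T' :=
    (ENNReal.ofReal_tsum_of_nonneg (fun i => sq_nonneg _) hsummable).symm
  have hwsum : ∑' n : ℕ, w n = ENNReal.ofReal T' := by
    have h1 := tsum_fiber co (fun _ => 1)
    simp only [mul_one] at h1
    rw [← h1, hco_sum]
  have hwle : ∀ n : ℕ, w n ≤ ENNReal.ofReal T' := by
    intro n
    rw [← hwsum]
    exact ENNReal.le_tsum n
  have hwtop : ∀ n : ℕ, w n ≠ ⊤ := fun n =>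
    (lt_of_le_of_lt (hwle n) ENNReal.ofReal_lt_top).ne
  have hT'pos : 0 < T' := by
    have h1 := hlow (idx 1 le_rfl) rfl rfl
    have h2 : ((idx 1 le_rfl).n : ℝ) = 1 := by norm_num [idx]
    rw [h2, Real.one_rpow, mul_one] at h1
    have h3 : ‖φ (idx 1 le_rfl)‖ ^ 2 ≤ T' :=
      Summable.le_tsum hsummable _ (fun j _ => sq_nonneg _)
    linarith
  -- the ball-mass function
  set F : ℝ → ℝ → ℝ≥0∞ := fun ε x => μ (Ioo (x - ε) (x + ε)) with hF
  have hF_eq : ∀ ε x, F ε x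
      = ∑' n : ℕ, w n * (Ioo (lam Λ n - ε) (lam Λ n + ε)).indicator 1 x := by
    intro ε x
    show μ (Ioo (x - ε) (x + ε)) = _
    rw [hμ _ measurableSet_Ioo]
    apply tsum_congr
    intro n
    congr 1
    by_cases hmem : lam Λ n ∈ Ioo (x - ε) (x + ε)
    · rw [indicator_of_mem hmem]
      have : x ∈ Ioo (lam Λ n - ε) (lam Λ n + ε) := by
        rw [mem_Ioo_iff_abs, abs_sub_comm]
        exact mem_Ioo_iff_abs.1 hmem
      rw [indicator_of_mem this]
      rfl
    · rw [indicator_of_notMem hmem]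
      have : x ∉ Ioo (lam Λ n - ε) (lam Λ n + ε) := by
        rw [mem_Ioo_iff_abs, abs_sub_comm]
        exact fun h => hmem (mem_Ioo_iff_abs.2 h)
      rw [indicator_of_notMem this]
  have hFmeas : ∀ ε, Measurable (F ε) := by
    intro ε
    have h1 : F ε = fun x =>
        ∑' n : ℕ, w n * (Ioo (lam Λ n - ε) (lam Λ n + ε)).indicator 1 x :=
      funext (hF_eq ε)
    rw [h1]
    apply Measurable.ennreal_tsum
    intro n
    exact (measurable_one.indicator measurableSet_Ioo).const_mul _
  have hSmeas : ∀ ε, MeasurableSet {x : ℝ | 0 < F ε x} := fun ε =>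
    measurableSet_lt measurable_const (hFmeas ε)
  have hFself : ∀ ε, 0 < ε → ∀ n : ℕ, 1 ≤ n → w n ≤ F ε (lam Λ n) := by
    intro ε hε n hn
    rw [hF_eq]
    have hmem : lam Λ n ∈ Ioo (lam Λ n - ε) (lam Λ n + ε) := by
      rw [mem_Ioo_iff_abs, sub_self, abs_zero]
      exact hε
    calc w n = w n * (Ioo (lam Λ n - ε) (lam Λ n + ε)).indicator 1 (lam Λ n) := by
          rw [indicator_of_mem hmem]
          simp
    _ ≤ _ := ENNReal.le_tsum n
  have hFpos : ∀ ε, 0 < ε → ∀ n : ℕ, 1 ≤ n → 0 < F ε (lam Λ n) := by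
    intro ε hε n hn
    exact lt_of_lt_of_le (hwpos n hn) (hFself ε hε n hn)
  -- the integral formula
  have hfrac : ∀ ε, 0 < ε →
      fracIntegral μ q ε = ∑' n : ℕ, w n * (F ε (lam Λ n)) ^ (q - 1) := by
    intro ε hε
    have hfmeas : Measurable fun x => (F ε x) ^ (q - 1) :=
      (ENNReal.continuous_rpow_const.measurable).comp (hFmeas ε)
    have hindmeas : Measurable (({x : ℝ | 0 < F ε x}).indicator
        (fun x => (F ε x) ^ (q - 1))) := hfmeas.indicator (hSmeas ε)
    have h0 : fracIntegral μ q ε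
        = ∫⁻ x in {x : ℝ | 0 < F ε x}, (F ε x) ^ (q - 1) ∂μ := rfl
    rw [h0, ← lintegral_indicator (hSmeas ε)]
    rw [hμdef, specMeasure, lintegral_sum_measure]
    have h1 : ∀ i : HIndex,
        ∫⁻ x, ({x : ℝ | 0 < F ε x}).indicator (fun x => (F ε x) ^ (q - 1)) x
          ∂(ENNReal.ofReal (‖φ i‖ ^ 2) • Measure.dirac (lam Λ i.n))
        = co i * ({x : ℝ | 0 < F ε x}).indicator
            (fun x => (F ε x) ^ (q - 1)) (lam Λ i.n) := by
      intro i
      rw [lintegral_smul_measure, lintegral_dirac' _ hindmeas, smul_eq_mul]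
    rw [tsum_congr h1]
    rw [tsum_fiber co (fun n => ({x : ℝ | 0 < F ε x}).indicator
      (fun x => (F ε x) ^ (q - 1)) (lam Λ n))]
    apply tsum_congr
    intro n
    rcases Nat.eq_zero_or_pos n with h2 | h2
    · subst h2
      have e1 : (∑' (i : { i : HIndex // i.n = 0 }), co (i : HIndex)) = w 0 := rfl
      rw [e1, hw0, zero_mul, zero_mul]
    · have e1 : (∑' (i : { i : HIndex // i.n = n }), co (i : HIndex)) = w n := rfl
      rw [e1]
      congr 1
      exact indicator_of_mem (show lam Λ n ∈ {x : ℝ | 0 < F ε x} from hFpos ε hε n h2) _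
  -- uniform lower bound on ball masses
  set Mf : ℝ → ℕ := fun ε => ⌈Real.sqrt (Λ / ε)⌉₊ + 1 with hMf
  have hMf1 : ∀ ε, 1 ≤ Mf ε := fun ε => Nat.le_add_left 1 _
  have hMfgt : ∀ ε, 0 < ε → Λ / ((Mf ε : ℝ)) ^ 2 < ε := by
    intro ε hε
    have h1 : Real.sqrt (Λ / ε) < (Mf ε : ℝ) := by
      have h2 := Nat.le_ceil (Real.sqrt (Λ / ε))
      have h3 : (⌈Real.sqrt (Λ / ε)⌉₊ : ℝ) < (Mf ε : ℝ) := by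
        rw [hMf]
        push_cast
        linarith
      linarith
    have h4 : Λ / ε < ((Mf ε : ℝ)) ^ 2 := by
      have hM0 : (0:ℝ) < (Mf ε : ℝ) := by
        have := hMf1 ε
        exact_mod_cast Nat.lt_of_lt_of_le Nat.zero_lt_one this
      exact (Real.sqrt_lt' hM0).1 h1
    have hM0 : (0:ℝ) < ((Mf ε : ℝ)) ^ 2 := by
      have := hMf1 ε
      have : (0:ℝ) < (Mf ε : ℝ) := by exact_mod_cast Nat.lt_of_lt_of_le Nat.zero_lt_one this
      positivity
    rw [div_lt_iff₀ hM0]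
    rw [div_lt_iff₀ hε] at h4
    linarith [h4]
  have hunif : ∀ ε, 0 < ε → ∀ n : ℕ, 1 ≤ n →
      ENNReal.ofReal (c * ((Mf ε : ℝ)) ^ (-γ)) ≤ F ε (lam Λ n) := by
    intro ε hε n hn
    have hM1 : 1 ≤ Mf ε := hMf1 ε
    have hMpos : (0:ℝ) < (Mf ε : ℝ) := by exact_mod_cast Nat.lt_of_lt_of_le Nat.zero_lt_one hM1
    rcases le_or_gt (Mf ε) n with hcase | hcase
    · -- n ≥ Mf : the point lam (Mf ε) is within ε of lam n
      have hnpos : (0:ℝ) < (n : ℝ) := by exact_mod_cast Nat.lt_of_lt_of_le Nat.zero_lt_one hn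
      have hsub : lam Λ n - lam Λ (Mf ε) = Λ * (1 / ((Mf ε : ℝ))^2 - 1 / ((n : ℝ))^2) :=
        lam_sub hM1 hn
      have hle : ((Mf ε : ℝ)) ≤ (n : ℝ) := by exact_mod_cast hcase
      have h5 : 1 / ((n : ℝ))^2 ≤ 1 / ((Mf ε : ℝ))^2 := by
        apply one_div_le_one_div_of_le (by positivity)
        nlinarith
      have h6 : 0 ≤ lam Λ n - lam Λ (Mf ε) := by
        rw [hsub]
        have : 0 ≤ 1 / ((Mf ε : ℝ))^2 - 1 / ((n : ℝ))^2 := by linarith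
        positivity
      have h7 : lam Λ n - lam Λ (Mf ε) < ε := by
        rw [hsub]
        have h10 : Λ / ((Mf ε : ℝ))^2 = Λ * (1 / ((Mf ε : ℝ))^2) := by ring
        have h11 := hMfgt ε hε
        rw [h10] at h11
        have h9 : (0:ℝ) < 1 / ((n : ℝ))^2 := by positivity
        nlinarith
      have hmem : lam Λ n ∈ Ioo (lam Λ (Mf ε) - ε) (lam Λ (Mf ε) + ε) := by
        rw [mem_Ioo_iff_abs, abs_of_nonneg h6]
        exact h7
      calc ENNReal.ofReal (c * ((Mf ε : ℝ)) ^ (-γ)) ≤ w (Mf ε) := hwlow _ hM1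
      _ = w (Mf ε) * (Ioo (lam Λ (Mf ε) - ε) (lam Λ (Mf ε) + ε)).indicator 1 (lam Λ n) := by
          rw [indicator_of_mem hmem]
          simp
      _ ≤ F ε (lam Λ n) := by
          rw [hF_eq]
          exact ENNReal.le_tsum (Mf ε)
    · -- n < Mf : use the weight at n itself
      have hle : (n : ℝ) ≤ ((Mf ε : ℝ)) := by
        have : n ≤ Mf ε := le_of_lt hcase
        exact_mod_cast this
      have hnpos : (0:ℝ) < (n : ℝ) := by exact_mod_cast Nat.lt_of_lt_of_le Nat.zero_lt_one hn
      have h5 : ((Mf ε : ℝ)) ^ (-γ) ≤ ((n : ℝ)) ^ (-γ) :=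
        Real.rpow_le_rpow_of_nonpos hnpos hle (by linarith)
      calc ENNReal.ofReal (c * ((Mf ε : ℝ)) ^ (-γ))
          ≤ ENNReal.ofReal (c * ((n : ℝ)) ^ (-γ)) := by
            apply ENNReal.ofReal_le_ofReal
            nlinarith
      _ ≤ w n := hwlow _ hn
      _ ≤ F ε (lam Λ n) := hFself ε hε n hn
  -- upper bound for the integral
  have hIup : ∀ ε, 0 < ε → fracIntegral μ q ε
      ≤ ENNReal.ofReal (T' * (c * ((Mf ε : ℝ)) ^ (-γ)) ^ (q - 1)) := by
    intro ε hε
    rw [hfrac ε hε]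
    set b : ℝ≥0∞ := ENNReal.ofReal (c * ((Mf ε : ℝ)) ^ (-γ)) with hb
    have hMpos : (0:ℝ) < (Mf ε : ℝ) := by
      have := hMf1 ε
      exact_mod_cast Nat.lt_of_lt_of_le Nat.zero_lt_one this
    have hbval : (0:ℝ) < c * ((Mf ε : ℝ)) ^ (-γ) := by positivity
    have hstep : ∀ n : ℕ, w n * F ε (lam Λ n) ^ (q - 1) ≤ w n * b ^ (q - 1) := by
      intro n
      rcases Nat.eq_zero_or_pos n with h2 | h2
      · subst h2
        rw [hw0, zero_mul, zero_mul]
      · apply mul_le_mul_right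
        rw [show q - 1 = -(1 - q) by ring, ENNReal.rpow_neg, ENNReal.rpow_neg]
        exact ENNReal.inv_le_inv.2 (ENNReal.rpow_le_rpow (hunif ε hε n h2) (by linarith))
    calc ∑' n : ℕ, w n * F ε (lam Λ n) ^ (q - 1)
        ≤ ∑' n : ℕ, w n * b ^ (q - 1) := ENNReal.tsum_le_tsum hstep
    _ = (∑' n : ℕ, w n) * b ^ (q - 1) := ENNReal.tsum_mul_right
    _ = ENNReal.ofReal T' * b ^ (q - 1) := by rw [hwsum]
    _ = ENNReal.ofReal (T' * (c * ((Mf ε : ℝ)) ^ (-γ)) ^ (q - 1)) := by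
        rw [hb, ENNReal.ofReal_rpow_of_pos hbval,
          ← ENNReal.ofReal_mul (le_of_lt hT'pos)]
  have hItop : ∀ ε, 0 < ε → fracIntegral μ q ε ≠ ⊤ := fun ε hε =>
    (lt_of_le_of_lt (hIup ε hε) ENNReal.ofReal_lt_top).ne
  have hIto : ∀ ε, 0 < ε → (fracIntegral μ q ε).toReal
      ≤ T' * (c * ((Mf ε : ℝ)) ^ (-γ)) ^ (q - 1) := by
    intro ε hε
    apply ENNReal.toReal_le_of_le_ofReal _ (hIup ε hε)
    have hMpos : (0:ℝ) < (Mf ε : ℝ) := by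
      have := hMf1 ε
      exact_mod_cast Nat.lt_of_lt_of_le Nat.zero_lt_one this
    positivity
  -- lower bound along the scales ε_N = Λ / (2 N³)
  set εs : ℕ → ℝ := fun N => Λ / (2 * (N : ℝ) ^ 3) with hεs
  have hεspos : ∀ N : ℕ, 1 ≤ N → 0 < εs N := by
    intro N hN
    have : (0:ℝ) < (N : ℝ) := by exact_mod_cast Nat.lt_of_lt_of_le Nat.zero_lt_one hN
    rw [hεs]
    positivity
  have hiso : ∀ N : ℕ, 1 ≤ N → ∀ n : ℕ, 1 ≤ n → n ≤ N →
      F (εs N) (lam Λ n) = w n := by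
    intro N hN n hn hnN
    rw [hF_eq]
    rw [tsum_eq_single n ?_]
    · have hmem : lam Λ n ∈ Ioo (lam Λ n - εs N) (lam Λ n + εs N) := by
        rw [mem_Ioo_iff_abs, sub_self, abs_zero]
        exact hεspos N hN
      rw [indicator_of_mem hmem]
      simp
    · intro m hm
      rcases Nat.eq_zero_or_pos m with h2 | h2
      · subst h2
        rw [hw0, zero_mul]
      · have hnotmem : lam Λ n ∉ Ioo (lam Λ m - εs N) (lam Λ m + εs N) := by
          rw [mem_Ioo_iff_abs]
          push_neg
          have h9 : εs N = Λ / (2 * (N:ℝ)^3) := rfl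
          rw [h9, abs_sub_comm]
          exact separation hΛ h2 hn hnN hm
        rw [indicator_of_notMem hnotmem, mul_zero]
  have hIlow : ∀ N : ℕ, 1 ≤ N →
      ENNReal.ofReal (c ^ q * (N : ℝ) ^ (1 - γ * q)) ≤ fracIntegral μ q (εs N) := by
    intro N hN
    have hNpos : (0:ℝ) < (N : ℝ) := by exact_mod_cast Nat.lt_of_lt_of_le Nat.zero_lt_one hN
    rw [hfrac _ (hεspos N hN)]
    have h1 : ∀ n ∈ Finset.Icc 1 N,
        ENNReal.ofReal (c ^ q * (N : ℝ) ^ (-(γ * q))) ≤ w n * F (εs N) (lam Λ n) ^ (q - 1) := by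
      intro n hn
      rw [Finset.mem_Icc] at hn
      have hnpos : (0:ℝ) < (n : ℝ) := by exact_mod_cast Nat.lt_of_lt_of_le Nat.zero_lt_one hn.1
      rw [hiso N hN n hn.1 hn.2]
      have hwn0 : w n ≠ 0 := (hwpos n hn.1).ne'
      have hq' : ∀ x : ℝ≥0∞, x ≠ 0 → x ≠ ⊤ → x * x ^ (q - 1) = x ^ q := by
        intro x h0 ht
        nth_rewrite 1 [← ENNReal.rpow_one x]
        rw [← ENNReal.rpow_add _ _ h0 ht]
        norm_num
      rw [hq' (w n) hwn0 (hwtop n)]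
      have h2 : ENNReal.ofReal (c * (n : ℝ) ^ (-γ)) ^ q ≤ w n ^ q :=
        ENNReal.rpow_le_rpow (hwlow n hn.1) (le_of_lt hq0)
      have h3 : ENNReal.ofReal (c * (n : ℝ) ^ (-γ)) ^ q
          = ENNReal.ofReal (c ^ q * (n : ℝ) ^ (-(γ * q))) := by
        rw [ENNReal.ofReal_rpow_of_pos (by positivity)]
        congr 1
        rw [Real.mul_rpow (le_of_lt hc) (Real.rpow_nonneg (le_of_lt hnpos) _)]
        congr 1
        rw [show -(γ * q) = (-γ) * q by ring, Real.rpow_mul (le_of_lt hnpos)]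
      have h4 : ENNReal.ofReal (c ^ q * (N : ℝ) ^ (-(γ * q)))
          ≤ ENNReal.ofReal (c ^ q * (n : ℝ) ^ (-(γ * q))) := by
        apply ENNReal.ofReal_le_ofReal
        have h5 : (N : ℝ) ^ (-(γ * q)) ≤ (n : ℝ) ^ (-(γ * q)) := by
          apply Real.rpow_le_rpow_of_nonpos hnpos
          · exact_mod_cast hn.2
          · nlinarith
        have h6 : (0:ℝ) ≤ c ^ q := by positivity
        nlinarith
      calc ENNReal.ofReal (c ^ q * (N : ℝ) ^ (-(γ * q)))
          ≤ ENNReal.ofReal (c ^ q * (n : ℝ) ^ (-(γ * q))) := h4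
      _ = ENNReal.ofReal (c * (n : ℝ) ^ (-γ)) ^ q := h3.symm
      _ ≤ w n ^ q := h2
    calc ENNReal.ofReal (c ^ q * (N : ℝ) ^ (1 - γ * q))
        = ∑ _n ∈ Finset.Icc 1 N, ENNReal.ofReal (c ^ q * (N : ℝ) ^ (-(γ * q))) := by
          rw [Finset.sum_const, Nat.card_Icc, nsmul_eq_mul]
          rw [show N + 1 - 1 = N from rfl]
          rw [← ENNReal.ofReal_natCast N, ← ENNReal.ofReal_mul (by positivity)]
          congr 1
          rw [show (1 : ℝ) - γ * q = 1 + -(γ * q) by ring,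
            Real.rpow_add hNpos, Real.rpow_one]
          ring
    _ ≤ ∑ n ∈ Finset.Icc 1 N, w n * F (εs N) (lam Λ n) ^ (q - 1) :=
          Finset.sum_le_sum h1
    _ ≤ ∑' n : ℕ, w n * F (εs N) (lam Λ n) ^ (q - 1) := ENNReal.sum_le_tsum _
  have hIlow' : ∀ N : ℕ, 1 ≤ N →
      c ^ q * (N : ℝ) ^ (1 - γ * q) ≤ (fracIntegral μ q (εs N)).toReal := by
    intro N hN
    rw [← ENNReal.ofReal_le_iff_le_toReal (hItop _ (hεspos N hN))]
    exact hIlow N hN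
  -- the quotient function
  set G : ℝ → ℝ :=
    fun ε => Real.log (fracIntegral μ q ε).toReal / ((q - 1) * Real.log ε) with hG
  have hDup : Dupper μ q = limsup G (𝓝[>] (0:ℝ)) := rfl
  -- boundedness of G near 0⁺
  set B : ℝ := Real.log (Real.sqrt Λ + 2) with hB
  have hBpos : 0 ≤ B := by
    rw [hB]
    apply Real.log_nonneg
    have := Real.sqrt_nonneg Λ
    linarith
  set C₁ : ℝ := Real.log T' + (q - 1) * Real.log c + γ * (1 - q) * B with hC₁
  set K : ℝ := |C₁| / (1 - q) + γ / 2 with hK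
  have hδ : (0:ℝ) < min (Real.exp (-1)) 1 := lt_min (Real.exp_pos _) one_pos
  have hGbound : ∀ ε ∈ Ioo (0:ℝ) (min (Real.exp (-1)) 1), G ε ≤ K := by
    intro ε hεm
    obtain ⟨hε, hεδ⟩ := hεm
    have hε1 : ε < 1 := lt_of_lt_of_le hεδ (min_le_right _ _)
    have hεe : ε < Real.exp (-1) := lt_of_lt_of_le hεδ (min_le_left _ _)
    have hlogε : Real.log ε ≤ -1 := by
      have := Real.log_lt_log hε hεe
      rw [Real.log_exp] at this
      linarith
    set L : ℝ := -Real.log ε with hL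
    have hL1 : 1 ≤ L := by rw [hL]; linarith
    have hMpos : (0:ℝ) < (Mf ε : ℝ) := by
      have := hMf1 ε
      exact_mod_cast Nat.lt_of_lt_of_le Nat.zero_lt_one this
    have hsε : 0 < Real.sqrt ε := Real.sqrt_pos.2 hε
    have hsε1 : Real.sqrt ε ≤ 1 := by
      rw [show (1:ℝ) = Real.sqrt 1 by rw [Real.sqrt_one]]
      exact Real.sqrt_le_sqrt (le_of_lt hε1)
    have hsΛ : 0 ≤ Real.sqrt Λ := Real.sqrt_nonneg Λ
    -- bound on Mf
    have hMle : (Mf ε : ℝ) ≤ (Real.sqrt Λ + 2) / Real.sqrt ε := by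
      have h1 : (Mf ε : ℝ) ≤ Real.sqrt (Λ / ε) + 2 := by
        have h2 := Nat.ceil_lt_add_one (Real.sqrt_nonneg (Λ / ε))
        have h3 : (Mf ε : ℝ) = (⌈Real.sqrt (Λ / ε)⌉₊ : ℝ) + 1 := by
          rw [hMf]; push_cast; ring
        linarith
      have h4 : Real.sqrt (Λ / ε) = Real.sqrt Λ / Real.sqrt ε :=
        Real.sqrt_div (le_of_lt hΛ) ε
      have h5 : (2:ℝ) ≤ 2 / Real.sqrt ε := by
        rw [le_div_iff₀ hsε]
        nlinarith
      have h6 : (Real.sqrt Λ + 2) / Real.sqrt ε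
          = Real.sqrt Λ / Real.sqrt ε + 2 / Real.sqrt ε := add_div _ _ _
      rw [h6]
      rw [h4] at h1
      linarith
    have hlogM : Real.log (Mf ε : ℝ) ≤ B + L / 2 := by
      have h1 : Real.log (Mf ε : ℝ) ≤ Real.log ((Real.sqrt Λ + 2) / Real.sqrt ε) :=
        Real.log_le_log hMpos hMle
      rw [Real.log_div (by linarith) hsε.ne', Real.log_sqrt (le_of_lt hε)] at h1
      rw [hB, hL]
      linarith
    -- bound on the integral, then on its logarithm
    have hUpos : (0:ℝ) < T' * (c * ((Mf ε : ℝ)) ^ (-γ)) ^ (q - 1) := by positivity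
    have hlogU : Real.log (T' * (c * ((Mf ε : ℝ)) ^ (-γ)) ^ (q - 1))
        ≤ C₁ + γ * (1 - q) * (L / 2) := by
      rw [Real.log_mul hT'pos.ne' (by positivity),
        Real.log_rpow (by positivity),
        Real.log_mul hc.ne' (by positivity),
        Real.log_rpow hMpos]
      have hγ1q : 0 ≤ γ * (1 - q) := by nlinarith
      have h7 := mul_le_mul_of_nonneg_left hlogM hγ1q
      rw [hC₁]
      nlinarith
    have hlogI : Real.log (fracIntegral μ q ε).toReal
        ≤ |C₁| + γ * (1 - q) * (L / 2) := by
      have hX : 0 ≤ γ * (1 - q) * (L / 2) := by nlinarith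
      rcases le_or_gt (fracIntegral μ q ε).toReal 1 with h | h
      · have := Real.log_nonpos ENNReal.toReal_nonneg h
        have := abs_nonneg C₁
        linarith
      · have h8 : Real.log (fracIntegral μ q ε).toReal
            ≤ Real.log (T' * (c * ((Mf ε : ℝ)) ^ (-γ)) ^ (q - 1)) :=
          Real.log_le_log (by linarith) (hIto ε hε)
        have h9 := le_abs_self C₁
        linarith
    have hP : 0 < (q - 1) * Real.log ε := by nlinarith
    have hGε : G ε = Real.log (fracIntegral μ q ε).toReal / ((q - 1) * Real.log ε) := rfl
    rw [hGε, div_le_iff₀ hP]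
    have h10 : (q - 1) * Real.log ε = (1 - q) * L := by rw [hL]; ring
    rw [h10]
    have h11 : |C₁| / (1 - q) * (1 - q) = |C₁| := div_mul_cancel₀ _ (by linarith)
    have h12 : |C₁| * 1 ≤ |C₁| * L := mul_le_mul_of_nonneg_left hL1 (abs_nonneg C₁)
    rw [hK]
    have hq1' : (1:ℝ) - q ≠ 0 := by linarith
    have h13 : (|C₁| / (1 - q) + γ / 2) * ((1 - q) * L)
        = |C₁| * L + γ * (1 - q) * (L / 2) := by
      field_simp
    rw [h13]
    have h14 : |C₁| ≤ |C₁| * L := by nlinarith [h12]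
    exact le_trans hlogI (add_le_add_left h14 _)
  have hbdd : IsBoundedUnder (· ≤ ·) (𝓝[>] (0:ℝ)) G := by
    apply isBoundedUnder_of_eventually_le (a := K)
    exact Filter.eventually_of_mem (Ioo_mem_nhdsGT_of_mem ⟨le_refl 0, hδ⟩) hGbound
  -- the sequence of scales tends to 0⁺
  have htendsεs : Tendsto εs atTop (𝓝[>] (0:ℝ)) := by
    rw [tendsto_nhdsWithin_iff]
    constructor
    · have hden : Tendsto (fun N : ℕ => 2 * (N:ℝ) ^ 3) atTop atTop := by
        apply tendsto_atTop_mono _ tendsto_natCast_atTop_atTop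
        intro N
        rcases Nat.eq_zero_or_pos N with h0 | h0
        · subst h0; norm_num
        · have h1 : (1:ℝ) ≤ (N:ℝ) := by exact_mod_cast h0
          have h2 : (1:ℝ) ≤ (N:ℝ)^2 := by nlinarith
          have h3 := mul_le_mul_of_nonneg_left h2 (by positivity : (0:ℝ) ≤ (N:ℝ))
          nlinarith
      exact Tendsto.div_atTop tendsto_const_nhds hden
    · exact Filter.eventually_atTop.2 ⟨1, fun N hN => hεspos N hN⟩
  -- asymptotics of the lower bound quotient
  set D : ℝ := Real.log 2 - Real.log Λ with hD
  have hdenN : ∀ N : ℕ, 1 ≤ N →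
      (q - 1) * Real.log (εs N) = (1 - q) * (3 * Real.log N + D) := by
    intro N hN
    have hNpos : (0:ℝ) < (N:ℝ) := by exact_mod_cast Nat.lt_of_lt_of_le Nat.zero_lt_one hN
    have h1 : εs N = Λ / (2 * (N:ℝ) ^ 3) := rfl
    rw [h1, Real.log_div hΛ.ne' (by positivity),
      Real.log_mul (by norm_num) (by positivity), Real.log_pow]
    rw [hD]
    push_cast
    ring
  set h : ℕ → ℝ :=
    fun N => (q * Real.log c + (1 - γ * q) * Real.log N)
      / ((1 - q) * (3 * Real.log N + D)) with hh
  have hGlow : ∀ N : ℕ, 1 ≤ N → 0 < 3 * Real.log N + D → h N ≤ G (εs N) := by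
    intro N hN hposN
    have hNpos : (0:ℝ) < (N:ℝ) := by exact_mod_cast Nat.lt_of_lt_of_le Nat.zero_lt_one hN
    have hnum : q * Real.log c + (1 - γ * q) * Real.log N
        ≤ Real.log (fracIntegral μ q (εs N)).toReal := by
      have h2 := hIlow' N hN
      have h3 : Real.log (c ^ q * (N:ℝ) ^ (1 - γ * q))
          = q * Real.log c + (1 - γ * q) * Real.log N := by
        rw [Real.log_mul (by positivity) (by positivity),
          Real.log_rpow hc, Real.log_rpow hNpos]
      rw [← h3]
      exact Real.log_le_log (by positivity) h2
    have hPpos : 0 < (1 - q) * (3 * Real.log N + D) := by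
      apply mul_pos (by linarith) hposN
    have hGeq : G (εs N) = Real.log (fracIntegral μ q (εs N)).toReal
        / ((q - 1) * Real.log (εs N)) := rfl
    rw [hGeq, hdenN N hN, hh]
    exact (div_le_div_iff_of_pos_right hPpos).2 hnum
  have hlogatTop : Tendsto (fun N : ℕ => Real.log N) atTop atTop :=
    Real.tendsto_log_atTop.comp tendsto_natCast_atTop_atTop
  have hinv0 : Tendsto (fun N : ℕ => (Real.log N)⁻¹) atTop (𝓝 0) :=
    hlogatTop.inv_tendsto_atTop
  have hkey : ∀ l : ℝ, l ≠ 0 →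
      (q * Real.log c + (1 - γ * q) * l) / ((1 - q) * (3 * l + D))
      = ((q * Real.log c) * l⁻¹ + (1 - γ * q)) / ((1 - q) * (3 + D * l⁻¹)) := by
    intro l hl
    rw [show (q * Real.log c) * l⁻¹ + (1 - γ * q)
        = (q * Real.log c + (1 - γ * q) * l) * l⁻¹ by field_simp,
      show (1 - q) * (3 + D * l⁻¹) = ((1 - q) * (3 * l + D)) * l⁻¹ by field_simp,
      mul_div_mul_right _ _ (inv_ne_zero hl)]
  have htendh : Tendsto h atTop (𝓝 ((1 - γ * q) / ((1 - q) * 3))) := by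
    have h1 : Tendsto (fun N : ℕ => ((q * Real.log c) * (Real.log N)⁻¹ + (1 - γ * q))
        / ((1 - q) * (3 + D * (Real.log N)⁻¹))) atTop
        (𝓝 (((q * Real.log c) * 0 + (1 - γ * q)) / ((1 - q) * (3 + D * 0)))) := by
      apply Filter.Tendsto.div
      · exact ((tendsto_const_nhds.mul hinv0)).add tendsto_const_nhds
      · exact tendsto_const_nhds.mul (tendsto_const_nhds.add
          (tendsto_const_nhds.mul hinv0))
      · norm_num
        linarith
    have h2 : ((q * Real.log c) * 0 + (1 - γ * q)) / ((1 - q) * (3 + D * 0))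
        = (1 - γ * q) / ((1 - q) * 3) := by norm_num
    rw [h2] at h1
    apply h1.congr'
    filter_upwards [hlogatTop.eventually_ge_atTop 1] with N hlN
    rw [hh]
    exact (hkey (Real.log N) (by linarith)).symm
  -- conclusion
  have hfinal : ∀ a : ℝ, a < (1 - γ * q) / (3 * (1 - q)) → a ≤ Dupper μ q := by
    intro a ha
    have ht' : a < (1 - γ * q) / ((1 - q) * 3) := by
      rw [mul_comm (1 - q) 3]
      exact ha
    have hev1 : ∀ᶠ N : ℕ in atTop, a < h N := htendh.eventually (eventually_gt_nhds ht')
    have hev2 : ∀ᶠ N : ℕ in atTop, 1 ≤ N := Filter.eventually_ge_atTop 1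
    have hev4 : ∀ᶠ N : ℕ in atTop, |D| + 1 ≤ Real.log N :=
      hlogatTop.eventually_ge_atTop _
    have hev : ∀ᶠ N : ℕ in atTop, a ≤ G (εs N) := by
      filter_upwards [hev1, hev2, hev4] with N h1 h2 h4
      have hpos : 0 < 3 * Real.log N + D := by
        have h5 := neg_abs_le D
        have h6 := abs_nonneg D
        linarith
      exact le_trans (le_of_lt h1) (hGlow N h2 hpos)
    have hfreq : ∃ᶠ ε in 𝓝[>] (0:ℝ), a ≤ G ε := htendsεs.frequently hev.frequently
    rw [hDup]
    exact le_limsup_of_frequently_le hfreq hbdd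
  by_contra hcon
  push_neg at hcon
  obtain ⟨a, ha1, ha2⟩ := exists_between hcon
  exact absurd (hfinal a ha2) (not_le.2 ha1)


end HydroAux

theorem dense_upper_dimension_lower_bound
    (Λ : ℝ) (hΛ : 0 < Λ) (q : ℝ) (hq : q ∈ Ioo (0 : ℝ) 1)
    (j : ℕ) (hj : q / (1 - q) < (j : ℝ)) :
    (∀ ψ : Hspace, ∀ σ > (0 : ℝ), ∃ φ : Hspace,
        ‖ψ - φ‖ ^ 2 < 2 * σ ^ 2 ∧
        (1 - (1 + 1 / (j : ℝ)) * q) / (3 * (1 - q)) ≤ Dupper (specMeasure Λ φ) q) ∧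
      Dense {ψ : Hspace |
        (1 - (1 + 1 / (j : ℝ)) * q) / (3 * (1 - q)) ≤ Dupper (specMeasure Λ ψ) q} := by
  obtain ⟨hq0, hq1⟩ := hq
  have hj0 : (0:ℝ) < (j:ℝ) := lt_trans (div_pos hq0 (by linarith)) hj
  have hγ1 : 1 < 1 + 1/(j:ℝ) := by
    have : 0 < 1/(j:ℝ) := by positivity
    linarith
  have hγq : (1 + 1/(j:ℝ)) * q < 1 := by
    rw [div_lt_iff₀ (by linarith : (0:ℝ) < 1 - q)] at hj
    have h4 : q/(j:ℝ) < 1 - q := (div_lt_iff₀ hj0).2 (by linarith)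
    have h5 : (1 + 1/(j:ℝ)) * q = q + q/(j:ℝ) := by ring
    rw [h5]
    linarith
  have main : ∀ ψ : Hspace, ∀ σ > (0:ℝ), ∃ φ : Hspace,
      ‖ψ - φ‖ ^ 2 < 2 * σ ^ 2 ∧
      (1 - (1 + 1 / (j : ℝ)) * q) / (3 * (1 - q)) ≤ Dupper (specMeasure Λ φ) q := by
    intro ψ σ hσ
    have hSnn : 0 ≤ ∑' n : ℕ, (n:ℝ)^(-(1 + 1/(j:ℝ))) :=
      tsum_nonneg (fun n => Real.rpow_nonneg (Nat.cast_nonneg n) _)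
    set S : ℝ := ∑' n : ℕ, (n:ℝ)^(-(1 + 1/(j:ℝ))) with hS
    have hcpos : 0 < σ^2 / (2*(S+1)) := by positivity
    obtain ⟨φ, hφ1, hφ2⟩ := HydroAux.exists_phi ψ (σ^2 / (2*(S+1))) (1 + 1/(j:ℝ)) hcpos hγ1
    refine ⟨φ, ?_, ?_⟩
    · have h6 : (0:ℝ) < S + 1 := by linarith
      have h5 : 4 * (σ^2 / (2*(S+1))) * S < 2 * σ^2 := by
        have h7 : 4 * (σ^2 / (2*(S+1))) * S = 2*σ^2 * (S/(S+1)) := by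
          field_simp
          ring
        have h8 : S/(S+1) < 1 := (div_lt_one h6).2 (by linarith)
        have h9 : (0:ℝ) < 2*σ^2 := by positivity
        rw [h7]
        nlinarith
      calc ‖ψ - φ‖ ^ 2 ≤ 4 * (σ^2 / (2*(S+1))) * S := hφ2
      _ < 2 * σ^2 := h5
    · exact HydroAux.dim_lower Λ q (1 + 1/(j:ℝ)) (σ^2 / (2*(S+1))) hΛ hq0 hq1 hγ1 hγq hcpos φ hφ1
  refine ⟨main, ?_⟩
  rw [Metric.dense_iff]
  intro ψ r hr
  obtain ⟨φ, h1, h2⟩ := main ψ (r/2) (by positivity)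
  refine ⟨φ, ?_, h2⟩
  rw [Metric.mem_ball, dist_comm, dist_eq_norm]
  nlinarith [norm_nonneg (ψ - φ), h1, hr]
end
end
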